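/- arXiv:1208.5607 — 7 statements merged into one kernel-verified Lean document; each statement's English description precedes it below -/
import Mathlib

section
/- Let x1, ..., xn be distinct elements of a field and let 0 ≤ c ≤ n. Then the Schur polynomial for the rectangular partition with c parts equal to k satisfies S_{(k^c)}(x1,...,xn) = Σ_{τ ⊆ {1,...,n}, |τ| = c} (Π_{i ∈ τ} x_i^k) · Π_{i ∈ τ, j ∉ τ} x_i/(x_i - x_j), for every k ≥ 0. -/
/-- The Schur polynomial of a partition `lam` (with at most `n` parts) in `n` variables,
defined as the ratio of alternants
`det(x_i^{lam_j + n - j}) / det(x_i^{n - j})` (indices written 0-based),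
valid when the `x_i` are distinct. -/
noncomputable def schurAlt (n : ℕ) (lam : Fin n → ℕ) {F : Type*} [Field F]
    (x : Fin n → F) : F :=
  (Matrix.of fun i j : Fin n => x i ^ (lam j + (n - 1 - (j : ℕ)))).det /
    (Matrix.of fun i j : Fin n => x i ^ (n - 1 - (j : ℕ))).det

open Finset

/-- Pigeonhole: if the columns in `T` are supported on rows in `R` with `|R| < |T|`,
the determinant vanishes. -/
lemma det_eq_zero_of_cols_supported {F : Type*} [CommRing F] {n : Type*} [DecidableEq n]
    [Fintype n] (M : Matrix n n F) (T R : Finset n) (hcard : R.card < T.card)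
    (h0 : ∀ j ∈ T, ∀ i, i ∉ R → M i j = 0) : M.det = 0 := by
  rw [Matrix.det_apply']
  refine Finset.sum_eq_zero fun σ _ => ?_
  obtain ⟨j, hjT, hj⟩ : ∃ j ∈ T, σ j ∉ R := by
    by_contra h
    push_neg at h
    have h1 : T.card = (T.image σ).card := (Finset.card_image_of_injective _ σ.injective).symm
    have h2 : (T.image σ).card ≤ R.card := by
      apply Finset.card_le_card
      intro i hi
      obtain ⟨j, hjT, rfl⟩ := Finset.mem_image.mp hi
      exact h j hjT
    omega
  have : ∏ i, M (σ i) i = 0 := Finset.prod_eq_zero (Finset.mem_univ j) (h0 j hjT (σ j) hj)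
  rw [this, mul_zero]

/-- Turn a product over `Ioi` into a product with an `if`. -/
lemma prod_pairs_eq {α M : Type*} [Fintype α] [LinearOrder α] [LocallyFiniteOrderTop α]
    [CommMonoid M] (f : α → α → M) :
    ∏ i, ∏ j ∈ Finset.Ioi i, f i j = ∏ i, ∏ j, if i < j then f i j else 1 := by
  refine Finset.prod_congr rfl fun i _ => ?_
  rw [← Finset.prod_filter]
  congr 1
  ext j
  simp

lemma detG_eq {F : Type*} [Field F] {m c : ℕ} (x : Fin (m + c) → F)
    (hx : Function.Injective x) (k : ℕ) (S : Finset (Fin (m + c))) (hS : S.card = c) :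
    (Matrix.of fun i j : Fin (m + c) =>
        if i ∈ S then (if m ≤ (j : ℕ) then x i ^ ((j : ℕ) + k) else 0)
        else (if (j : ℕ) < m then x i ^ (j : ℕ) else 0)).det
      = ((∏ i ∈ S, x i ^ k) * ∏ i ∈ S, ∏ j ∈ univ \ S, x i / (x i - x j)) *
        (Matrix.vandermonde x).det := by
  have hSc : Sᶜ.card = m := by
    rw [Finset.card_compl, hS]
    simp
  set G : Matrix (Fin (m + c)) (Fin (m + c)) F :=
    Matrix.of fun i j : Fin (m + c) =>
        if i ∈ S then (if m ≤ (j : ℕ) then x i ^ ((j : ℕ) + k) else 0)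
        else (if (j : ℕ) < m then x i ^ (j : ℕ) else 0) with hG
  set sIso := S.orderIsoOfFin hS with hsIso
  set tIso := Sᶜ.orderIsoOfFin hSc with htIso
  set s : Fin c → Fin (m + c) := fun a => (sIso a : Fin (m + c)) with hs
  set t : Fin m → Fin (m + c) := fun a => (tIso a : Fin (m + c)) with ht
  have hsS : ∀ a, s a ∈ S := fun a => (sIso a).2
  have htS : ∀ a, t a ∉ S := fun a => Finset.mem_compl.mp (tIso a).2
  set E' : Fin m ⊕ Fin c ≃ Fin (m + c) :=
    (Equiv.sumCongr tIso.toEquiv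
        (sIso.toEquiv.trans (Equiv.subtypeEquivRight (fun z => by simp)))).trans
      (Equiv.sumCompl (· ∈ Sᶜ)) with hE'
  have hE'l : ∀ a, E' (Sum.inl a) = t a := fun a => by simp [hE', ht]
  have hE'r : ∀ a, E' (Sum.inr a) = s a := fun a => by simp [hE', hs]
  set e : Fin m ⊕ Fin c ≃ Fin (m + c) := finSumFinEquiv with he
  have hel : ∀ a : Fin m, (e (Sum.inl a) : ℕ) = (a : ℕ) := fun a => by simp [he]
  have her : ∀ b : Fin c, (e (Sum.inr b) : ℕ) = m + (b : ℕ) := fun b => by simp [he]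
  set π : Equiv.Perm (Fin m ⊕ Fin c) := e.trans E'.symm with hπ
  have hsub : ∀ M : Matrix (Fin (m + c)) (Fin (m + c)) F,
      (M.submatrix E' e).det = (Equiv.Perm.sign π : ℤ) * M.det := by
    intro M
    have h1 : M.submatrix E' e = (M.submatrix E' E').submatrix id π := by
      ext i j
      simp [hπ]
    rw [h1, Matrix.det_permute', Matrix.det_submatrix_equiv_self]
  set VandT : F := ∏ a : Fin m, ∏ b ∈ Finset.Ioi a, (x (t b) - x (t a)) with hVandT
  set VandS : F := ∏ a : Fin c, ∏ b ∈ Finset.Ioi a, (x (s b) - x (s a)) with hVandS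
  set Cross : F := ∏ a : Fin m, ∏ b : Fin c, (x (s b) - x (t a)) with hCross
  have hD1 : (G.submatrix E' e).det = VandT * ((∏ a : Fin c, x (s a) ^ (m + k)) * VandS) := by
    have hblock : G.submatrix E' e =
        Matrix.fromBlocks (Matrix.vandermonde (fun a => x (t a))) 0 0
          (Matrix.of fun a b : Fin c => x (s a) ^ (m + k) * x (s a) ^ (b : ℕ)) := by
      ext i j
      rcases i with a | a <;> rcases j with b | b <;>
        simp only [Matrix.submatrix_apply, hE'l, hE'r, hG, Matrix.of_apply,
          Matrix.fromBlocks_apply₁₁, Matrix.fromBlocks_apply₁₂, Matrix.fromBlocks_apply₂₁,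
          Matrix.fromBlocks_apply₂₂, Matrix.vandermonde_apply, Matrix.zero_apply]
      · rw [if_neg (htS a), if_pos, hel]
        rw [hel]; exact b.isLt
      · rw [if_neg (htS a), if_neg]
        rw [her]; omega
      · rw [if_pos (hsS a), if_neg]
        rw [hel]; have := b.isLt; omega
      · rw [if_pos (hsS a), if_pos]
        · rw [her, ← pow_add]
          congr 1
          omega
        · rw [her]; omega
    rw [hblock, Matrix.det_fromBlocks_zero₂₁, Matrix.det_vandermonde,
      Matrix.det_mul_column (fun a => x (s a) ^ (m + k)) (fun a b : Fin c => x (s a) ^ (b : ℕ)),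
      show (Matrix.det fun a b : Fin c => x (s a) ^ (b : ℕ))
        = (Matrix.vandermonde fun a => x (s a)).det from rfl, Matrix.det_vandermonde]
  have horder1 : ∀ (a b : Fin m), e (Sum.inl a) < e (Sum.inl b) ↔ a < b := by
    intro a b
    rw [Fin.lt_def, Fin.lt_def, hel, hel]
  have horder2 : ∀ (a : Fin m) (b : Fin c), e (Sum.inl a) < e (Sum.inr b) := by
    intro a b
    rw [Fin.lt_def, hel, her]
    have := a.isLt
    omega
  have horder3 : ∀ (a : Fin c) (b : Fin m), ¬ e (Sum.inr a) < e (Sum.inl b) := by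
    intro a b
    rw [Fin.lt_def, hel, her]
    have := b.isLt
    omega
  have horder4 : ∀ (a b : Fin c), e (Sum.inr a) < e (Sum.inr b) ↔ a < b := by
    intro a b
    rw [Fin.lt_def, her, her, Fin.lt_def]
    omega
  have hD2 : ((Matrix.vandermonde x).submatrix E' e).det = VandT * Cross * VandS := by
    set y : Fin (m + c) → F := x ∘ E' ∘ e.symm with hy
    have hyl : ∀ a : Fin m, y (e (Sum.inl a)) = x (t a) := by
      intro a
      simp [hy, hE'l]
    have hyr : ∀ a : Fin c, y (e (Sum.inr a)) = x (s a) := by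
      intro a
      simp [hy, hE'r]
    have h2 : (Matrix.vandermonde x).submatrix E' e = (Matrix.vandermonde y).submatrix e e := by
      ext i j
      simp [Matrix.vandermonde_apply, hy]
    rw [h2, Matrix.det_submatrix_equiv_self, Matrix.det_vandermonde, prod_pairs_eq]
    rw [← Equiv.prod_comp e (fun i => ∏ j, if i < j then y j - y i else 1)]
    rw [Finset.prod_congr rfl fun (p : Fin m ⊕ Fin c) _ =>
      (Equiv.prod_comp e (fun q => if e p < q then y q - y (e p) else 1)).symm]
    simp only [Fintype.prod_sum_type]
    simp only [horder1, horder2, horder3, horder4, hyl, hyr, if_true, if_false,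
      Finset.prod_const_one, mul_one, one_mul]
    rw [Finset.prod_mul_distrib, hVandT, hVandS, hCross, prod_pairs_eq, prod_pairs_eq]
  have hprodS : ∀ g : Fin (m + c) → F, ∏ a : Fin c, g (s a) = ∏ i ∈ S, g i := by
    intro g
    rw [← Finset.prod_coe_sort S g]
    exact Equiv.prod_comp sIso.toEquiv (fun p => g ↑p)
  have hprodT : ∀ g : Fin (m + c) → F, ∏ a : Fin m, g (t a) = ∏ i ∈ Sᶜ, g i := by
    intro g
    rw [← Finset.prod_coe_sort Sᶜ g]
    exact Equiv.prod_comp tIso.toEquiv (fun p => g ↑p)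
  have hCross' : Cross = ∏ i ∈ S, ∏ j ∈ univ \ S, (x i - x j) := by
    rw [hCross, Finset.prod_comm, hprodS (fun i => ∏ a : Fin m, (x i - x (t a))),
      Finset.prod_congr rfl fun i _ => hprodT (fun j => x i - x j),
      Finset.compl_eq_univ_sdiff]
  have hcard : (univ \ S).card = m := by
    rw [← Finset.compl_eq_univ_sdiff, hSc]
  have hkey : ((∏ i ∈ S, x i ^ k) * ∏ i ∈ S, ∏ j ∈ univ \ S, x i / (x i - x j)) * Cross
      = ∏ a : Fin c, x (s a) ^ (m + k) := by
    rw [hCross', hprodS (fun i => x i ^ (m + k)),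
      mul_assoc, ← Finset.prod_mul_distrib, ← Finset.prod_mul_distrib]
    refine Finset.prod_congr rfl fun i hi => ?_
    rw [← Finset.prod_mul_distrib]
    have hij : ∀ j ∈ univ \ S, x i / (x i - x j) * (x i - x j) = x i := by
      intro j hj
      have hne : i ≠ j := by
        intro h
        rw [Finset.mem_sdiff] at hj
        exact hj.2 (h ▸ hi)
      exact div_mul_cancel₀ _ (sub_ne_zero_of_ne (fun h => hne (hx h)))
    rw [Finset.prod_congr rfl hij, Finset.prod_const, hcard, ← pow_add, Nat.add_comm]
  have hsπ : ((Equiv.Perm.sign π : ℤ) : F) ≠ 0 := by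
    rcases Int.units_eq_one_or (Equiv.Perm.sign π) with h | h <;> simp [h]
  apply mul_left_cancel₀ hsπ
  calc ((Equiv.Perm.sign π : ℤ) : F) * G.det = (G.submatrix E' e).det := (hsub G).symm
    _ = VandT * ((∏ a : Fin c, x (s a) ^ (m + k)) * VandS) := hD1
    _ = VandT * ((((∏ i ∈ S, x i ^ k) * ∏ i ∈ S, ∏ j ∈ univ \ S, x i / (x i - x j)) * Cross)
        * VandS) := by rw [hkey]
    _ = ((∏ i ∈ S, x i ^ k) * ∏ i ∈ S, ∏ j ∈ univ \ S, x i / (x i - x j))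
        * (VandT * Cross * VandS) := by ring
    _ = ((∏ i ∈ S, x i ^ k) * ∏ i ∈ S, ∏ j ∈ univ \ S, x i / (x i - x j))
        * ((Matrix.vandermonde x).submatrix E' e).det := by rw [hD2]
    _ = ((∏ i ∈ S, x i ^ k) * ∏ i ∈ S, ∏ j ∈ univ \ S, x i / (x i - x j))
        * (((Equiv.Perm.sign π : ℤ) : F) * (Matrix.vandermonde x).det) := by
        rw [hsub]
    _ = ((Equiv.Perm.sign π : ℤ) : F) * (((∏ i ∈ S, x i ^ k)
        * ∏ i ∈ S, ∏ j ∈ univ \ S, x i / (x i - x j)) * (Matrix.vandermonde x).det) := by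
        ring

lemma detG_zero {F : Type*} [Field F] {m c : ℕ} (x : Fin (m + c) → F) (k : ℕ)
    (S : Finset (Fin (m + c))) (hS : S.card ≠ c) :
    (Matrix.of fun i j : Fin (m + c) =>
        if i ∈ S then (if m ≤ (j : ℕ) then x i ^ ((j : ℕ) + k) else 0)
        else (if (j : ℕ) < m then x i ^ (j : ℕ) else 0)).det = 0 := by
  rcases lt_or_gt_of_ne hS with h | h
  · apply det_eq_zero_of_cols_supported _ (univ.filter fun j : Fin (m + c) => m ≤ (j : ℕ)) S
    · have h1 : c ≤ (univ.filter fun j : Fin (m + c) => m ≤ (j : ℕ)).card := by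
        have h2 : (univ : Finset (Fin c)).card
            ≤ (univ.filter fun j : Fin (m + c) => m ≤ (j : ℕ)).card :=
          Finset.card_le_card_of_injOn (fun b => finSumFinEquiv (Sum.inr b))
            (fun b _ => by simp [Finset.mem_filter])
            (fun b1 _ b2 _ hb => by simpa using finSumFinEquiv.injective hb)
        simpa using h2
      omega
    · intro j hj i hi
      rw [Finset.mem_filter] at hj
      simp only [Matrix.of_apply, if_neg hi, if_neg (show ¬(j : ℕ) < m by omega)]
  · apply det_eq_zero_of_cols_supported _ (univ.filter fun j : Fin (m + c) => (j : ℕ) < m) Sᶜ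
    · have hSc : Sᶜ.card = m + c - S.card := by
        rw [Finset.card_compl]
        simp
      have h1 : m ≤ (univ.filter fun j : Fin (m + c) => (j : ℕ) < m).card := by
        have h2 : (univ : Finset (Fin m)).card
            ≤ (univ.filter fun j : Fin (m + c) => (j : ℕ) < m).card :=
          Finset.card_le_card_of_injOn (fun b => finSumFinEquiv (Sum.inl b))
            (fun b _ => by simp [Finset.mem_filter])
            (fun b1 _ b2 _ hb => by simpa using finSumFinEquiv.injective hb)
        simpa using h2
      have hcle : S.card ≤ m + c := by
        have := Finset.card_le_card (Finset.subset_univ S)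
        simpa using this
      omega
    · intro j hj i hi
      rw [Finset.mem_filter] at hj
      rw [Finset.notMem_compl] at hi
      simp only [Matrix.of_apply, if_pos hi, if_neg (show ¬ m ≤ (j : ℕ) by omega)]

/-- Modified Widom formula: for distinct `x_1, ..., x_n` and `0 ≤ c ≤ n`, the Schur
polynomial of the rectangular partition with `c` parts equal to `k` satisfies
`S_{(k^c)}(x) = Σ_{|τ| = c} (Π_{i∈τ} x_i^k) Π_{i∈τ, j∉τ} x_i/(x_i - x_j)`. -/
theorem schur_rectangular_widom {F : Type*} [Field F] (n c : ℕ) (hc : c ≤ n)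
    (x : Fin n → F) (hx : Function.Injective x) (k : ℕ) :
    schurAlt n (fun j => if (j : ℕ) < c then k else 0) x =
      ∑ τ ∈ Finset.powersetCard c (Finset.univ : Finset (Fin n)),
        (∏ i ∈ τ, x i ^ k) * ∏ i ∈ τ, ∏ j ∈ Finset.univ \ τ, x i / (x i - x j) := by
  obtain ⟨m, rfl⟩ : ∃ m, n = m + c := ⟨n - c, by omega⟩
  unfold schurAlt
  set arow : Fin (m + c) → Fin (m + c) → F :=
    fun i j => if m ≤ (j : ℕ) then x i ^ ((j : ℕ) + k) else 0 with ha
  set brow : Fin (m + c) → Fin (m + c) → F :=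
    fun i j => if (j : ℕ) < m then x i ^ (j : ℕ) else 0 with hb
  have hrev : ∀ j : Fin (m + c), ((Fin.revPerm j : Fin (m + c)) : ℕ) = m + c - 1 - (j : ℕ) := by
    intro j
    simp only [Fin.revPerm_apply, Fin.val_rev]
    omega
  have hsplit : (Matrix.of fun i j : Fin (m + c) =>
      x i ^ ((if (j : ℕ) < c then k else 0) + (m + c - 1 - (j : ℕ)))).submatrix id Fin.revPerm
      = Matrix.of (arow + brow) := by
    ext i j
    have hj := j.isLt
    simp only [Matrix.submatrix_apply, Matrix.of_apply, id, Pi.add_apply, ha, hb, hrev]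
    rcases le_or_gt m (j : ℕ) with h | h
    · rw [if_pos (show m + c - 1 - (j : ℕ) < c by omega), if_pos h,
        if_neg (show ¬(j : ℕ) < m by omega), add_zero]
      congr 1
      omega
    · rw [if_neg (show ¬ m + c - 1 - (j : ℕ) < c by omega), if_neg (show ¬ m ≤ (j : ℕ) by omega),
        if_pos h, zero_add, zero_add]
      congr 1
      omega
  have hNum : (Matrix.of (arow + brow)).det
      = ((Equiv.Perm.sign (Fin.revPerm : Equiv.Perm (Fin (m + c))) : ℤ) : F)
        * (Matrix.of fun i j : Fin (m + c) =>
            x i ^ ((if (j : ℕ) < c then k else 0) + (m + c - 1 - (j : ℕ)))).det := by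
    rw [← hsplit, Matrix.det_permute']
  have hden : (Matrix.vandermonde x).det
      = ((Equiv.Perm.sign (Fin.revPerm : Equiv.Perm (Fin (m + c))) : ℤ) : F)
        * (Matrix.of fun i j : Fin (m + c) => x i ^ (m + c - 1 - (j : ℕ))).det := by
    have h1 : (Matrix.of fun i j : Fin (m + c) =>
        x i ^ (m + c - 1 - (j : ℕ))).submatrix id Fin.revPerm = Matrix.vandermonde x := by
      ext i j
      have hj := j.isLt
      simp only [Matrix.submatrix_apply, Matrix.of_apply, Matrix.vandermonde_apply, id, hrev]
      congr 1
      omega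
    rw [← h1, Matrix.det_permute']
  have hV : (Matrix.vandermonde x).det ≠ 0 := by
    rw [Matrix.det_vandermonde]
    refine Finset.prod_ne_zero_iff.mpr fun i _ => Finset.prod_ne_zero_iff.mpr fun j hj => ?_
    exact sub_ne_zero_of_ne (hx.ne (ne_of_gt (Finset.mem_Ioi.mp hj)))
  have hsr : ((Equiv.Perm.sign (Fin.revPerm : Equiv.Perm (Fin (m + c))) : ℤ) : F) ≠ 0 := by
    rcases Int.units_eq_one_or (Equiv.Perm.sign (Fin.revPerm : Equiv.Perm (Fin (m + c)))) with
      h | h <;> simp [h]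
  have hadd : (Matrix.of (arow + brow)).det
      = ∑ s : Finset (Fin (m + c)), (Matrix.of (s.piecewise arow brow)).det :=
    MultilinearMap.map_add_univ (Matrix.detRowAlternating).toMultilinearMap arow brow
  have hpw : ∀ s : Finset (Fin (m + c)), Matrix.of (s.piecewise arow brow)
      = Matrix.of fun i j : Fin (m + c) =>
        if i ∈ s then (if m ≤ (j : ℕ) then x i ^ ((j : ℕ) + k) else 0)
        else (if (j : ℕ) < m then x i ^ (j : ℕ) else 0) := by
    intro s
    ext i j
    by_cases h : i ∈ s <;> simp [Finset.piecewise, h, ha, hb]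
  have hpc : Finset.univ.filter (fun s : Finset (Fin (m + c)) => s.card = c)
      = Finset.powersetCard c Finset.univ := by
    ext s
    simp [Finset.mem_powersetCard]
  calc (Matrix.of fun i j : Fin (m + c) =>
          x i ^ ((if (j : ℕ) < c then k else 0) + (m + c - 1 - (j : ℕ)))).det
        / (Matrix.of fun i j : Fin (m + c) => x i ^ (m + c - 1 - (j : ℕ))).det
      = (Matrix.of (arow + brow)).det / (Matrix.vandermonde x).det := by
        rw [hNum, hden, mul_div_mul_left _ _ hsr]
    _ = (∑ s : Finset (Fin (m + c)), (Matrix.of (s.piecewise arow brow)).det)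
        / (Matrix.vandermonde x).det := by rw [hadd]
    _ = (∑ s ∈ Finset.univ.filter (fun s : Finset (Fin (m + c)) => s.card = c),
          (Matrix.of (s.piecewise arow brow)).det) / (Matrix.vandermonde x).det := by
        congr 1
        have hz : ∑ s ∈ Finset.univ.filter (fun s : Finset (Fin (m + c)) => ¬ s.card = c),
            (Matrix.of (s.piecewise arow brow)).det = 0 :=
          Finset.sum_eq_zero fun s hs => by
            rw [hpw s]
            exact detG_zero x k s (by simpa using (Finset.mem_filter.mp hs).2)
        rw [← Finset.sum_filter_add_sum_filter_not Finset.univ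
          (fun s : Finset (Fin (m + c)) => s.card = c), hz, add_zero]
    _ = ∑ τ ∈ Finset.powersetCard c (Finset.univ : Finset (Fin (m + c))),
        (∏ i ∈ τ, x i ^ k) * ∏ i ∈ τ, ∏ j ∈ Finset.univ \ τ, x i / (x i - x j) := by
        rw [hpc, Finset.sum_div]
        refine Finset.sum_congr rfl fun τ hτ => ?_
        have hτc : τ.card = c := (Finset.mem_powersetCard.mp hτ).2
        rw [hpw τ, detG_eq x hx k τ hτc, mul_div_cancel_right₀ _ hV]
end

section
/- Insertion of an increasing sequence into a semistandard Young tableau yields a semistandard Young tableau: let T be a semistandard Young tableau and t_1 < t_2 < ... < t_c a strictly increasing sequence of positive integers. Insert each t_i into row i of T at the unique position keeping that row weakly increasing (creating a new one-box row if row i does not exist). Then the resulting filling is again a semistandard Young tableau (rows weakly increasing, columns strictly increasing, shape is a Young diagram). -/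
/-- The position at which a value `v` is inserted into row `i` of the semistandard Young
tableau `T`: the number of entries of that row which are `≤ v`.  Inserting `v` at this
position is the unique way of keeping the row weakly increasing. -/
def insertPos {μ : YoungDiagram} (T : SemistandardYoungTableau μ) (i v : ℕ) : ℕ :=
  ((Finset.range (μ.rowLen i)).filter (fun j => T.entry i j ≤ v)).card

/-- The entries obtained from the tableau `T` by sequence insertion of the strictly
increasing sequence `t 0 < t 1 < ⋯ < t (c-1)`: each `t i` is inserted into row `i`
at the unique position keeping that row weakly increasing (a new one-box row is
created when row `i` is empty). -/
def insertedEntry {μ : YoungDiagram} (T : SemistandardYoungTableau μ) {c : ℕ}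
    (t : Fin c → ℕ) (i j : ℕ) : ℕ :=
  if h : i < c then
    if j < insertPos T i (t ⟨i, h⟩) then T.entry i j
    else if j = insertPos T i (t ⟨i, h⟩) then t ⟨i, h⟩
    else T.entry i (j - 1)
  else T.entry i j

section aux

variable {μ : YoungDiagram} (T : SemistandardYoungTableau μ)

lemma insertPos_le (i v : ℕ) : insertPos T i v ≤ μ.rowLen i :=
  le_trans (Finset.card_filter_le _ _) (le_of_eq (Finset.card_range _))

lemma entry_le_of_lt_insertPos {i v j : ℕ} (h : j < insertPos T i v) :
    T.entry i j ≤ v := by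
  by_contra hc
  push_neg at hc
  have hsub : (Finset.range (μ.rowLen i)).filter (fun j' => T.entry i j' ≤ v)
      ⊆ Finset.range j := by
    intro j' hj'
    simp only [Finset.mem_filter, Finset.mem_range] at hj' ⊢
    by_contra hge
    push_neg at hge
    have : T.entry i j ≤ T.entry i j' :=
      T.row_weak_of_le hge (YoungDiagram.mem_iff_lt_rowLen.mpr hj'.1)
    omega
  have := Finset.card_le_card hsub
  rw [Finset.card_range] at this
  exact absurd h (by unfold insertPos; omega)

lemma lt_entry_of_insertPos_le {i v j : ℕ} (h : insertPos T i v ≤ j)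
    (hj : j < μ.rowLen i) : v < T.entry i j := by
  by_contra hc
  push_neg at hc
  have hsub : Finset.range (j + 1) ⊆
      (Finset.range (μ.rowLen i)).filter (fun j' => T.entry i j' ≤ v) := by
    intro j' hj'
    simp only [Finset.mem_range] at hj'
    simp only [Finset.mem_filter, Finset.mem_range]
    have hj'' : j' < μ.rowLen i := by omega
    refine ⟨hj'', le_trans ?_ hc⟩
    exact T.row_weak_of_le (by omega) (YoungDiagram.mem_iff_lt_rowLen.mpr hj)
  have := Finset.card_le_card hsub
  rw [Finset.card_range] at this
  have : j + 1 ≤ insertPos T i v := this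
  omega

variable {c : ℕ} (t : Fin c → ℕ)

lemma ie_lt {i j : ℕ} (h : i < c) (hj : j < insertPos T i (t ⟨i, h⟩)) :
    insertedEntry T t i j = T.entry i j := by
  simp [insertedEntry, h, hj]

lemma ie_eq {i j : ℕ} (h : i < c) (hj : j = insertPos T i (t ⟨i, h⟩)) :
    insertedEntry T t i j = t ⟨i, h⟩ := by
  simp [insertedEntry, h, hj]

lemma ie_gt {i j : ℕ} (h : i < c) (hj : insertPos T i (t ⟨i, h⟩) < j) :
    insertedEntry T t i j = T.entry i (j - 1) := by
  have h1 : ¬ j < insertPos T i (t ⟨i, h⟩) := by omega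
  have h2 : ¬ j = insertPos T i (t ⟨i, h⟩) := by omega
  simp [insertedEntry, h, h1, h2]

lemma ie_ge {i j : ℕ} (h : ¬ i < c) : insertedEntry T t i j = T.entry i j := by
  simp [insertedEntry, h]

end aux

/-- Sequence insertion of a strictly increasing sequence of positive integers into a
semistandard Young tableau yields a semistandard Young tableau: there is a Young diagram
`μ'` (the shape `μ` with one box added at the end of each of the first `c` rows) and a
semistandard Young tableau `T'` of shape `μ'` whose entries are exactly the result of the
insertion. -/
theorem sequence_insertion_is_ssyt {μ : YoungDiagram} (T : SemistandardYoungTableau μ)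
    {c : ℕ} (t : Fin c → ℕ) (ht : StrictMono t) (hpos : ∀ i, 0 < t i) :
    ∃ (μ' : YoungDiagram) (T' : SemistandardYoungTableau μ'),
      (∀ i, μ'.rowLen i = μ.rowLen i + if i < c then 1 else 0) ∧
      (∀ i j, T'.entry i j = insertedEntry T t i j) := by
  set f : ℕ → ℕ := fun i => μ.rowLen i + if i < c then 1 else 0 with hf
  have hfanti : ∀ i1 i2, i1 ≤ i2 → f i2 ≤ f i1 := by
    intro i1 i2 h
    have := μ.rowLen_anti i1 i2 h
    simp only [hf]
    split_ifs <;> omega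
  -- the new diagram
  set cells' : Finset (ℕ × ℕ) :=
    μ.cells ∪ (Finset.range c).image (fun i => (i, μ.rowLen i)) with hcells
  have hmem : ∀ i j, (i, j) ∈ cells' ↔ j < f i := by
    intro i j
    simp only [hcells, Finset.mem_union, Finset.mem_image, Finset.mem_range,
      YoungDiagram.mem_cells, YoungDiagram.mem_iff_lt_rowLen, Prod.mk.injEq, hf]
    constructor
    · rintro (h | ⟨a, ha, rfl, rfl⟩)
      · split_ifs <;> omega
      · simp [ha]
    · intro h
      by_cases hic : i < c
      · simp only [hic, if_pos] at h
        rcases Nat.lt_or_ge j (μ.rowLen i) with h' | h'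
        · exact Or.inl h'
        · exact Or.inr ⟨i, hic, rfl, by omega⟩
      · simp only [hic, if_neg, not_false_iff] at h
        exact Or.inl (by omega)
  set μ' : YoungDiagram :=
    { cells := cells'
      isLowerSet := by
        rintro ⟨i2, j2⟩ ⟨i1, j1⟩ ⟨(hi : i1 ≤ i2), (hj : j1 ≤ j2)⟩ h
        rw [Finset.mem_coe, hmem] at h ⊢
        exact lt_of_le_of_lt hj (lt_of_lt_of_le h (hfanti i1 i2 hi)) } with hμ'
  have hmem' : ∀ i j, (i, j) ∈ μ' ↔ j < f i := hmem
  have hrowLen : ∀ i, μ'.rowLen i = f i := by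
    intro i
    rcases lt_trichotomy (μ'.rowLen i) (f i) with h | h | h
    · exfalso
      rcases Nat.eq_zero_or_pos (f i) with h0 | h0
      · omega
      · have : (i, f i - 1) ∈ μ' := (hmem' i _).mpr (by omega)
        rw [YoungDiagram.mem_iff_lt_rowLen] at this
        omega
    · exact h
    · exfalso
      have : (i, f i) ∈ μ' := YoungDiagram.mem_iff_lt_rowLen.mpr h
      rw [hmem' i _] at this
      omega
  -- key facts
  have hmemμ : ∀ i j, (i, j) ∈ μ ↔ j < μ.rowLen i := fun i j => YoungDiagram.mem_iff_lt_rowLen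
  have hle : ∀ (i : ℕ) (h : i < c), insertPos T i (t ⟨i, h⟩) ≤ μ.rowLen i :=
    fun i h => insertPos_le T i _
  -- column strictness for adjacent rows
  have hadj : ∀ i j, j < f (i + 1) →
      insertedEntry T t i j < insertedEntry T t (i + 1) j := by
    intro i j hj
    have hr : μ.rowLen (i + 1) ≤ μ.rowLen i := μ.rowLen_anti i (i + 1) (by omega)
    by_cases hic : i + 1 < c
    · -- both rows get an insertion
      have hi : i < c := by omega
      set p := insertPos T i (t ⟨i, hi⟩) with hp
      have hple : p ≤ μ.rowLen i := hle i hi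
      set q := insertPos T (i + 1) (t ⟨i + 1, hic⟩) with hq
      have hqle : q ≤ μ.rowLen (i + 1) := hle _ hic
      have htlt : t ⟨i, hi⟩ < t ⟨i + 1, hic⟩ := ht (by simp [Fin.lt_def])
      have hjf : j < μ.rowLen (i + 1) + 1 := by simpa [hf, hic] using hj
      rcases lt_trichotomy j p with h1 | h1 | h1 <;>
        rcases lt_trichotomy j q with h2 | h2 | h2
      · rw [ie_lt T t hi h1, ie_lt T t hic h2]
        exact T.col_strict (by omega) (by rw [hmemμ]; omega)
      · rw [ie_lt T t hi h1, ie_eq T t hic h2]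
        exact lt_of_le_of_lt (entry_le_of_lt_insertPos T h1) htlt
      · rw [ie_lt T t hi h1, ie_gt T t hic h2]
        have : t ⟨i + 1, hic⟩ < T.entry (i + 1) (j - 1) :=
          lt_entry_of_insertPos_le T (by omega) (by omega)
        have h3 : T.entry i j ≤ t ⟨i, hi⟩ := entry_le_of_lt_insertPos T h1
        omega
      · -- j = p, j < q
        rw [ie_eq T t hi h1, ie_lt T t hic h2]
        have hjr : j < μ.rowLen i := by omega
        have h3 : t ⟨i, hi⟩ < T.entry i j :=
          lt_entry_of_insertPos_le T (by omega) hjr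
        have h4 : T.entry i j < T.entry (i + 1) j :=
          T.col_strict (by omega) (by rw [hmemμ]; omega)
        omega
      · rw [ie_eq T t hi h1, ie_eq T t hic h2]; exact htlt
      · rw [ie_eq T t hi h1, ie_gt T t hic h2]
        have : t ⟨i + 1, hic⟩ < T.entry (i + 1) (j - 1) :=
          lt_entry_of_insertPos_le T (by omega) (by omega)
        omega
      · -- j > p, j < q
        rw [ie_gt T t hi h1, ie_lt T t hic h2]
        have h3 : T.entry i (j - 1) ≤ T.entry i j :=
          T.row_weak_of_le (by omega) (by rw [hmemμ]; omega)
        have h4 : T.entry i j < T.entry (i + 1) j :=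
          T.col_strict (by omega) (by rw [hmemμ]; omega)
        omega
      · -- j > p, j = q
        rw [ie_gt T t hi h1, ie_eq T t hic h2]
        have hj1 : j - 1 < μ.rowLen (i + 1) := by omega
        have h3 : T.entry i (j - 1) < T.entry (i + 1) (j - 1) :=
          T.col_strict (by omega) (by rw [hmemμ]; omega)
        have h4 : T.entry (i + 1) (j - 1) ≤ t ⟨i + 1, hic⟩ :=
          entry_le_of_lt_insertPos T (by omega)
        omega
      · rw [ie_gt T t hi h1, ie_gt T t hic h2]
        exact T.col_strict (by omega) (by rw [hmemμ]; omega)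
    · -- row i+1 is not inserted into
      rw [ie_ge T t hic]
      have hjr : j < μ.rowLen (i + 1) := by
        have : f (i + 1) = μ.rowLen (i + 1) := by simp [hf, hic]
        omega
      by_cases hi : i < c
      · set p := insertPos T i (t ⟨i, hi⟩) with hp
        have hple : p ≤ μ.rowLen i := hle i hi
        rcases lt_trichotomy j p with h1 | h1 | h1
        · rw [ie_lt T t hi h1]
          exact T.col_strict (by omega) (by rw [hmemμ]; omega)
        · rw [ie_eq T t hi h1]
          have h3 : t ⟨i, hi⟩ < T.entry i j :=
            lt_entry_of_insertPos_le T (by omega) (by omega)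
          have h4 : T.entry i j < T.entry (i + 1) j :=
            T.col_strict (by omega) (by rw [hmemμ]; omega)
          omega
        · rw [ie_gt T t hi h1]
          have h3 : T.entry i (j - 1) ≤ T.entry i j :=
            T.row_weak_of_le (by omega) (by rw [hmemμ]; omega)
          have h4 : T.entry i j < T.entry (i + 1) j :=
            T.col_strict (by omega) (by rw [hmemμ]; omega)
          omega
      · rw [ie_ge T t hi]
        exact T.col_strict (by omega) (by rw [hmemμ]; omega)
  have hcol : ∀ i1 i2 j, i1 < i2 → j < f i2 →
      insertedEntry T t i1 j < insertedEntry T t i2 j := by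
    intro i1 i2 j h hj
    induction i2 with
    | zero => omega
    | succ n ih =>
      rcases Nat.lt_or_ge i1 n with h' | h'
      · have hjn : j < f n := lt_of_lt_of_le hj (hfanti n (n + 1) (by omega))
        exact lt_trans (ih h' hjn) (hadj n j hj)
      · have : i1 = n := by omega
        subst this
        exact hadj i1 j hj
  refine ⟨μ', ⟨insertedEntry T t, ?_, ?_, ?_⟩, hrowLen, fun i j => rfl⟩
  · -- row weak
    intro i j1 j2 hj hcell
    rw [hmem' i j2] at hcell
    by_cases hi : i < c
    · set p := insertPos T i (t ⟨i, hi⟩) with hp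
      have hple : p ≤ μ.rowLen i := hle i hi
      have hj2 : j2 < μ.rowLen i + 1 := by simpa [hf, hi] using hcell
      rcases lt_trichotomy j1 p with h1 | h1 | h1 <;>
        rcases lt_trichotomy j2 p with h2 | h2 | h2
      · rw [ie_lt T t hi h1, ie_lt T t hi h2]
        exact T.row_weak hj (by rw [hmemμ]; omega)
      · rw [ie_lt T t hi h1, ie_eq T t hi h2]
        exact entry_le_of_lt_insertPos T h1
      · rw [ie_lt T t hi h1, ie_gt T t hi h2]
        exact T.row_weak_of_le (by omega) (by rw [hmemμ]; omega)
      · omega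
      · omega
      · rw [ie_eq T t hi h1, ie_gt T t hi h2]
        exact le_of_lt (lt_entry_of_insertPos_le T (by omega) (by omega))
      · omega
      · omega
      · rw [ie_gt T t hi h1, ie_gt T t hi h2]
        exact T.row_weak_of_le (by omega) (by rw [hmemμ]; omega)
    · rw [ie_ge T t hi, ie_ge T t hi]
      have : f i = μ.rowLen i := by simp [hf, hi]
      exact T.row_weak hj (by rw [hmemμ]; omega)
  · -- column strict
    intro i1 i2 j h hcell
    rw [hmem' i2 j] at hcell
    exact hcol i1 i2 j h hcell
  · -- zeros
    intro i j hcell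
    rw [hmem' i j] at hcell
    push_neg at hcell
    by_cases hi : i < c
    · have hj : μ.rowLen i + 1 ≤ j := by simpa [hf, hi] using hcell
      rw [ie_gt T t hi (by have := hle i hi; omega)]
      exact T.zeros (by rw [hmemμ]; omega)
    · rw [ie_ge T t hi]
      have : f i = μ.rowLen i := by simp [hf, hi]
      exact T.zeros (by rw [hmemμ]; omega)
end

section
/- Sequence insertions commute: for a semistandard Young tableau T and two strictly increasing sequences s and t of the same admissible form, inserting s into T and then t gives the same tableau as inserting t and then s. -/
/-- Insert value `v` at position `n` into the row `r`. -/
def insRow (r : ℕ → ℕ) (v n j : ℕ) : ℕ :=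
  if j < n then r j else if j = n then v else r (j - 1)

lemma downward_closed_eq_range (S : Finset ℕ) (h : ∀ j ∈ S, ∀ k, k < j → k ∈ S) :
    S = Finset.range S.card := by
  ext n
  simp only [Finset.mem_range]
  constructor
  · intro hn
    have hsub : Finset.range (n + 1) ⊆ S := by
      intro k hk
      simp only [Finset.mem_range] at hk
      rcases Nat.lt_succ_iff_lt_or_eq.mp hk with hk | hk
      · exact h n hn k hk
      · exact hk ▸ hn
    have := Finset.card_le_card hsub
    simpa using this
  · intro hn
    by_contra hns
    have hsub : S ⊆ Finset.range n := by
      intro m hm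
      simp only [Finset.mem_range]
      by_contra hmn
      push_neg at hmn
      rcases Nat.lt_or_ge n m with hlt | hge
      · exact hns (h m hm n hlt)
      · exact hns ((Nat.le_antisymm hge hmn) ▸ hm)
    have := Finset.card_le_card hsub
    simp at this
    omega

lemma insertPos_spec {μ : YoungDiagram} (T : SemistandardYoungTableau μ) (i v : ℕ) :
    ∀ j, j < insertPos T i v ↔ (j < μ.rowLen i ∧ T.entry i j ≤ v) := by
  intro j
  have hdc : ∀ a ∈ (Finset.range (μ.rowLen i)).filter (fun j => T.entry i j ≤ v),
      ∀ k, k < a → k ∈ (Finset.range (μ.rowLen i)).filter (fun j => T.entry i j ≤ v) := by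
    intro a ha k hk
    simp only [Finset.mem_filter, Finset.mem_range] at ha ⊢
    refine ⟨hk.trans ha.1, le_trans ?_ ha.2⟩
    exact T.row_weak hk (YoungDiagram.mem_iff_lt_rowLen.mpr ha.1)
  have := downward_closed_eq_range _ hdc
  rw [insertPos, ← Finset.mem_range, ← this, Finset.mem_filter, Finset.mem_range]

lemma pos_le {L a p : ℕ} {r : ℕ → ℕ} (hp : ∀ j, j < p ↔ (j < L ∧ r j ≤ a)) : p ≤ L := by
  have := hp L; omega

lemma pos_aux (r : ℕ → ℕ) (L a b p q : ℕ)
    (hp : ∀ j, j < p ↔ (j < L ∧ r j ≤ a)) (hq : ∀ j, j < q ↔ (j < L ∧ r j ≤ b)) :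
    ∀ k, (k < L + 1 ∧ insRow r a p k ≤ b) ↔ k < (if a ≤ b then q + 1 else q) := by
  intro k
  have hpL : p ≤ L := pos_le hp
  have hqL : q ≤ L := pos_le hq
  have h1 := hp k
  have h2 := hq k
  have h3 := hp (k - 1)
  have h4 := hq (k - 1)
  simp only [insRow]
  split_ifs with hab h5 h6 <;> omega

lemma ins_comm (r : ℕ → ℕ) (L a b p q : ℕ)
    (hp : ∀ j, j < p ↔ (j < L ∧ r j ≤ a)) (hq : ∀ j, j < q ↔ (j < L ∧ r j ≤ b)) (j : ℕ) :
    insRow (insRow r a p) b (if a ≤ b then q + 1 else q) j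
      = insRow (insRow r b q) a (if b ≤ a then p + 1 else p) j := by
  have hpL : p ≤ L := pos_le hp
  have hqL : q ≤ L := pos_le hq
  have hab : a ≤ b → p ≤ q := by
    intro h
    by_contra h'
    have := hp q; have := hq q; omega
  have hba : b ≤ a → q ≤ p := by
    intro h
    by_contra h'
    have := hp p; have := hq p; omega
  rcases lt_trichotomy a b with h | h | h
  · rw [if_pos h.le, if_neg (by omega)]
    have hpq : p ≤ q := hab h.le
    simp only [insRow]
    split_ifs <;> (try rfl) <;> omega
  · subst h
    have hpq : p = q := le_antisymm (hab le_rfl) (hba le_rfl)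
    subst hpq
    simp only [if_pos le_rfl]
  · rw [if_neg (by omega), if_pos h.le]
    have hqp : q ≤ p := hba h.le
    simp only [insRow]
    split_ifs <;> (try rfl) <;> omega

/-- Sequence insertions commute: inserting the strictly increasing sequence `s` into a
semistandard Young tableau `T` and then inserting `t` into the result gives the same
tableau (same shape and same entries) as inserting `t` first and then `s`. -/
theorem sequence_insertions_commute {μ : YoungDiagram} (T : SemistandardYoungTableau μ)
    {c : ℕ} (s t : Fin c → ℕ) (hs : StrictMono s) (ht : StrictMono t)
    (hspos : ∀ i, 0 < s i) (htpos : ∀ i, 0 < t i)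
    (μ₁ : YoungDiagram) (T₁ : SemistandardYoungTableau μ₁)
    (h₁len : ∀ i, μ₁.rowLen i = μ.rowLen i + if i < c then 1 else 0)
    (h₁ : ∀ i j, T₁.entry i j = insertedEntry T s i j)
    (μ₂ : YoungDiagram) (T₂ : SemistandardYoungTableau μ₂)
    (h₂len : ∀ i, μ₂.rowLen i = μ.rowLen i + if i < c then 1 else 0)
    (h₂ : ∀ i j, T₂.entry i j = insertedEntry T t i j) :
    ∀ i j, insertedEntry T₁ t i j = insertedEntry T₂ s i j := by
  intro i j
  by_cases h : i < c
  · -- abbreviations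
    have hp := insertPos_spec T i (s ⟨i, h⟩)
    have hq := insertPos_spec T i (t ⟨i, h⟩)
    have hrow₁ : T₁.entry i = insRow (T.entry i) (s ⟨i, h⟩) (insertPos T i (s ⟨i, h⟩)) :=
      funext fun k => by rw [h₁]; simp only [insertedEntry, dif_pos h, insRow]
    have hrow₂ : T₂.entry i = insRow (T.entry i) (t ⟨i, h⟩) (insertPos T i (t ⟨i, h⟩)) :=
      funext fun k => by rw [h₂]; simp only [insertedEntry, dif_pos h, insRow]
    have hlen₁ : μ₁.rowLen i = μ.rowLen i + 1 := by rw [h₁len]; simp [h]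
    have hlen₂ : μ₂.rowLen i = μ.rowLen i + 1 := by rw [h₂len]; simp [h]
    have key₁ : insertPos T₁ i (t ⟨i, h⟩) =
        if s ⟨i, h⟩ ≤ t ⟨i, h⟩ then insertPos T i (t ⟨i, h⟩) + 1
        else insertPos T i (t ⟨i, h⟩) := by
      have claim := pos_aux (T.entry i) (μ.rowLen i) (s ⟨i, h⟩) (t ⟨i, h⟩) _ _ hp hq
      have hall : ∀ k, k < insertPos T₁ i (t ⟨i, h⟩) ↔
          k < (if s ⟨i, h⟩ ≤ t ⟨i, h⟩ then insertPos T i (t ⟨i, h⟩) + 1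
            else insertPos T i (t ⟨i, h⟩)) := fun k => by
        rw [insertPos_spec T₁ i (t ⟨i, h⟩) k, hlen₁, hrow₁]; exact claim k
      have h1 := hall (insertPos T₁ i (t ⟨i, h⟩))
      have h2 := hall (if s ⟨i, h⟩ ≤ t ⟨i, h⟩ then insertPos T i (t ⟨i, h⟩) + 1
        else insertPos T i (t ⟨i, h⟩))
      omega
    have key₂ : insertPos T₂ i (s ⟨i, h⟩) =
        if t ⟨i, h⟩ ≤ s ⟨i, h⟩ then insertPos T i (s ⟨i, h⟩) + 1
        else insertPos T i (s ⟨i, h⟩) := by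
      have claim := pos_aux (T.entry i) (μ.rowLen i) (t ⟨i, h⟩) (s ⟨i, h⟩) _ _ hq hp
      have hall : ∀ k, k < insertPos T₂ i (s ⟨i, h⟩) ↔
          k < (if t ⟨i, h⟩ ≤ s ⟨i, h⟩ then insertPos T i (s ⟨i, h⟩) + 1
            else insertPos T i (s ⟨i, h⟩)) := fun k => by
        rw [insertPos_spec T₂ i (s ⟨i, h⟩) k, hlen₂, hrow₂]; exact claim k
      have h1 := hall (insertPos T₂ i (s ⟨i, h⟩))
      have h2 := hall (if t ⟨i, h⟩ ≤ s ⟨i, h⟩ then insertPos T i (s ⟨i, h⟩) + 1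
        else insertPos T i (s ⟨i, h⟩))
      omega
    simp only [insertedEntry, dif_pos h]
    show insRow (T₁.entry i) (t ⟨i, h⟩) (insertPos T₁ i (t ⟨i, h⟩)) j
      = insRow (T₂.entry i) (s ⟨i, h⟩) (insertPos T₂ i (s ⟨i, h⟩)) j
    rw [hrow₁, hrow₂, key₁, key₂]
    exact ins_comm (T.entry i) (μ.rowLen i) (s ⟨i, h⟩) (t ⟨i, h⟩) _ _ hp hq j
  · simp only [insertedEntry, dif_neg h, h₁, h₂]
end

section
/- Let λ ⊇ μ be partitions with at most n parts and let λ', μ' denote their conjugates, with λ' having at most k parts. Then the skew Schur polynomial satisfies the dual Jacobi–Trudi identity S_{λ/μ}(x1,...,xn) = det( e_{λ'_i - μ'_j - i + j}(x1,...,xn) )_{1 ≤ i,j ≤ k}, where e_m is the m-th elementary symmetric polynomial (e_m = 0 for m < 0). -/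
/-- The set of cells of the skew Young diagram `lam/mu`, where `lam mu : ℕ → ℕ` give the
row lengths of the outer and inner shapes and only the first `n` rows may be nonempty. -/
def skewCells (n : ℕ) (lam mu : ℕ → ℕ) : Finset (ℕ × ℕ) :=
  (Finset.range n ×ˢ Finset.range ((Finset.range n).sup lam)).filter
    (fun p => mu p.1 ≤ p.2 ∧ p.2 < lam p.1)

/-- A filling of the skew shape `lam/mu` with entries in `{0, ..., n-1}` is a semistandard
Young tableau if its rows are weakly increasing and its columns are strictly increasing. -/
def IsSSYTFilling (n : ℕ) (lam mu : ℕ → ℕ)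
    (T : {p // p ∈ skewCells n lam mu} → Fin n) : Prop :=
  (∀ a b : {p // p ∈ skewCells n lam mu},
      a.1.1 = b.1.1 → a.1.2 + 1 = b.1.2 → T a ≤ T b) ∧
  (∀ a b : {p // p ∈ skewCells n lam mu},
      a.1.1 + 1 = b.1.1 → a.1.2 = b.1.2 → T a < T b)

instance (n : ℕ) (lam mu : ℕ → ℕ) : DecidablePred (IsSSYTFilling n lam mu) := fun _ => by
  unfold IsSSYTFilling; infer_instance

/-- The skew Schur polynomial `S_{lam/mu}(x 0, ..., x (n-1))`: the sum over all
semistandard skew Young tableaux of shape `lam/mu` with entries in `{1, ..., n}` of the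
corresponding monomial. -/
def skewSchur (n : ℕ) (lam mu : ℕ → ℕ) {R : Type*} [CommSemiring R] (x : Fin n → R) : R :=
  ∑ T ∈ (Finset.univ : Finset ({p // p ∈ skewCells n lam mu} → Fin n)).filter
      (IsSSYTFilling n lam mu),
    ∏ c, x (T c)

/-- The `k`-th elementary symmetric polynomial in `x 0, ..., x (n-1)`. -/
def esymVal (n k : ℕ) {R : Type*} [CommSemiring R] (x : Fin n → R) : R :=
  ∑ σ ∈ Finset.powersetCard k (Finset.univ : Finset (Fin n)), ∏ i ∈ σ, x i

/-- Elementary symmetric polynomials with integer index: `e m = 0` for `m < 0`. -/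
def esymValZ (n : ℕ) (m : ℤ) {R : Type*} [CommSemiring R] (x : Fin n → R) : R :=
  if 0 ≤ m then esymVal n m.toNat x else 0

/-- The `i`-th part (`1`-indexed as `i+1`) of the conjugate of the partition `lam`:
`lam'_{i+1} = #{j : lam j ≥ i + 1}`. -/
def conjPart (n : ℕ) (lam : ℕ → ℕ) (i : ℕ) : ℕ :=
  ((Finset.range n).filter (fun j => i + 1 ≤ lam j)).card

section JT

open Finset

/-! ### Generalized filling predicate and skew Schur sum, with number of rows `r`
decoupled from the number of variables `n`. -/

/-- Generalized SSYT predicate: rows `< r`, entries in `Fin n`. -/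
def IsFill (n r : ℕ) (lam mu : ℕ → ℕ)
    (T : {p // p ∈ skewCells r lam mu} → Fin n) : Prop :=
  (∀ a b : {p // p ∈ skewCells r lam mu},
      a.1.1 = b.1.1 → a.1.2 + 1 = b.1.2 → T a ≤ T b) ∧
  (∀ a b : {p // p ∈ skewCells r lam mu},
      a.1.1 + 1 = b.1.1 → a.1.2 = b.1.2 → T a < T b)

instance (n r : ℕ) (lam mu : ℕ → ℕ) : DecidablePred (IsFill n r lam mu) := fun _ => by
  unfold IsFill; infer_instance

/-- Generalized skew Schur sum. -/
def SS (n r : ℕ) (lam mu : ℕ → ℕ) {R : Type*} [CommSemiring R] (x : Fin n → R) : R :=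
  ∑ T ∈ (Finset.univ : Finset ({p // p ∈ skewCells r lam mu} → Fin n)).filter
      (IsFill n r lam mu),
    ∏ c, x (T c)

lemma mem_cells {r : ℕ} {lam mu : ℕ → ℕ} {p : ℕ × ℕ} :
    p ∈ skewCells r lam mu ↔ p.1 < r ∧ mu p.1 ≤ p.2 ∧ p.2 < lam p.1 := by
  unfold skewCells
  simp only [Finset.mem_filter, Finset.mem_product, Finset.mem_range]
  constructor
  · rintro ⟨⟨h1, _⟩, h3, h4⟩; exact ⟨h1, h3, h4⟩
  · rintro ⟨h1, h2, h3⟩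
    exact ⟨⟨h1, lt_of_lt_of_le h3 (Finset.le_sup (Finset.mem_range.2 h1))⟩, h2, h3⟩

lemma mem_cells' {r : ℕ} {lam mu : ℕ → ℕ} {i c : ℕ} :
    (i, c) ∈ skewCells r lam mu ↔ i < r ∧ mu i ≤ c ∧ c < lam i := mem_cells

/-! ### Downward closed finsets of naturals -/

lemma lower_mem (B : Finset ℕ) (h : ∀ c, c + 1 ∈ B → c ∈ B) :
    ∀ m c, c ∈ B → c - m ∈ B := by
  intro m
  induction m with
  | zero => simpa using fun c hc => hc
  | succ m ih =>
    intro c hc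
    rcases Nat.eq_zero_or_pos (c - m) with h0 | hpos
    · have he : c - (m + 1) = c - m := by omega
      rw [he]; exact ih c hc
    · have h2 : (c - (m + 1)) + 1 = c - m := by omega
      exact h _ (by rw [h2]; exact ih c hc)

lemma lowerset_eq_range (B : Finset ℕ) (h : ∀ c, c + 1 ∈ B → c ∈ B) :
    B = Finset.range B.card := by
  have key : ∀ c ∈ B, Finset.range (c + 1) ⊆ B := by
    intro c hc d hd
    rw [Finset.mem_range] at hd
    have h1 := lower_mem B h (c - d) c hc
    have h2 : c - (c - d) = d := by omega
    rwa [h2] at h1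
  have h1 : B ⊆ Finset.range B.card := by
    intro c hc
    rw [Finset.mem_range]
    by_contra hcon
    push_neg at hcon
    have h2 := Finset.card_le_card (key c hc)
    rw [Finset.card_range] at h2
    omega
  exact Finset.eq_of_subset_of_card_le h1 (by rw [Finset.card_range])

/-! ### Conjugate partition lemmas -/

lemma conjPart_filter (r : ℕ) (f : ℕ → ℕ) (hf : Antitone f) (i : ℕ) :
    (Finset.range r).filter (fun j => i + 1 ≤ f j) = Finset.range (conjPart r f i) := by
  apply lowerset_eq_range
  intro c hc
  simp only [Finset.mem_filter, Finset.mem_range] at *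
  exact ⟨by omega, le_trans hc.2 (hf (by omega))⟩

lemma lt_conjPart_iff {r : ℕ} {f : ℕ → ℕ} (hf : Antitone f) {i j : ℕ} :
    j < conjPart r f i ↔ j < r ∧ i + 1 ≤ f j := by
  rw [← Finset.mem_range, ← conjPart_filter r f hf i]
  simp

lemma conjPart_anti {r : ℕ} {f : ℕ → ℕ} : Antitone (conjPart r f) := by
  intro i i' h
  apply Finset.card_le_card
  intro j hj
  simp only [Finset.mem_filter] at *
  exact ⟨hj.1, by omega⟩

lemma conjPart_le (r : ℕ) (f : ℕ → ℕ) (i : ℕ) : conjPart r f i ≤ r := by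
  calc ((Finset.range r).filter _).card ≤ (Finset.range r).card :=
        Finset.card_le_card (Finset.filter_subset _ _)
    _ = r := Finset.card_range r

lemma conjPart_mono_f {r : ℕ} {f g : ℕ → ℕ} (h : ∀ j, f j ≤ g j) (i : ℕ) :
    conjPart r f i ≤ conjPart r g i := by
  apply Finset.card_le_card
  intro j hj
  simp only [Finset.mem_filter] at *
  exact ⟨hj.1, le_trans hj.2 (h j)⟩

lemma conjPart_eq_zero {r : ℕ} {f : ℕ → ℕ} (hf : Antitone f) {i : ℕ} (h : f 0 ≤ i) :
    conjPart r f i = 0 := by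
  rw [conjPart, Finset.card_eq_zero, Finset.filter_eq_empty_iff]
  intro j _
  have := hf (Nat.zero_le j)
  omega

lemma conjPart_conjPart {M r : ℕ} {f : ℕ → ℕ} (hf : Antitone f) {j : ℕ} (hj : j < r)
    (hfj : f j ≤ M) : conjPart M (conjPart r f) j = f j := by
  rw [conjPart]
  have h1 : (Finset.range M).filter (fun i => j + 1 ≤ conjPart r f i)
      = Finset.range (f j) := by
    ext i
    simp only [Finset.mem_filter, Finset.mem_range]
    constructor
    · rintro ⟨hiM, hi⟩
      have := (lt_conjPart_iff hf).1 hi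
      omega
    · intro hi
      refine ⟨by omega, (lt_conjPart_iff hf).2 ⟨hj, by omega⟩⟩
  rw [h1, Finset.card_range]

/-! ### Elementary symmetric function lemmas -/

variable {R : Type*}

lemma esymVal_zero [CommSemiring R] (n : ℕ) (x : Fin n → R) : esymVal n 0 x = 1 := by
  unfold esymVal
  rw [Finset.powersetCard_zero]
  simp

lemma esymValZ_of_neg [CommSemiring R] {n : ℕ} {m : ℤ} (h : m < 0) (x : Fin n → R) :
    esymValZ n m x = 0 := by
  unfold esymValZ
  rw [if_neg (by omega)]

lemma esymValZ_ofNat [CommSemiring R] (n m : ℕ) (x : Fin n → R) :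
    esymValZ n (m : ℤ) x = esymVal n m x := by
  unfold esymValZ
  rw [if_pos (by positivity)]
  simp

lemma esymVal_zero_vars [CommSemiring R] {m : ℕ} (hm : m ≠ 0) (x : Fin 0 → R) :
    esymVal 0 m x = 0 := by
  unfold esymVal
  have : Finset.powersetCard m (Finset.univ : Finset (Fin 0)) = ∅ := by
    rw [Finset.eq_empty_iff_forall_notMem]
    intro σ hσ
    rw [Finset.mem_powersetCard] at hσ
    have h1 : σ = ∅ := Finset.eq_empty_of_isEmpty σ
    rw [h1] at hσ
    simp at hσ
    omega
  rw [this, Finset.sum_empty]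

lemma univ_fin_succ_eq (n : ℕ) :
    (Finset.univ : Finset (Fin (n + 1)))
      = insert (Fin.last n) (Finset.univ.map Fin.castSuccEmb) := by
  ext i
  simp only [Finset.mem_univ, true_iff, Finset.mem_insert, Finset.mem_map, Finset.mem_univ,
    true_and]
  rcases eq_or_ne i (Fin.last n) with h | h
  · exact Or.inl h
  · exact Or.inr ⟨i.castPred h, Fin.castSucc_castPred i h⟩

lemma esymVal_succ [CommSemiring R] (n k : ℕ) (x : Fin (n + 1) → R) :
    esymVal (n + 1) (k + 1) x
      = esymVal n (k + 1) (x ∘ Fin.castSucc)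
        + x (Fin.last n) * esymVal n k (x ∘ Fin.castSucc) := by
  classical
  have hlast : Fin.last n ∉ (Finset.univ : Finset (Fin n)).map Fin.castSuccEmb := by
    simp only [Finset.mem_map, Finset.mem_univ, true_and, not_exists]
    intro j
    exact (Fin.castSucc_lt_last j).ne
  unfold esymVal
  rw [univ_fin_succ_eq, Finset.powersetCard_succ_insert hlast]
  have hdisj : Disjoint
      (Finset.powersetCard (k + 1) (Finset.univ.map Fin.castSuccEmb))
      ((Finset.powersetCard k (Finset.univ.map Fin.castSuccEmb)).image
        (insert (Fin.last n))) := by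
    rw [Finset.disjoint_left]
    intro σ h1 h2
    rw [Finset.mem_powersetCard] at h1
    rw [Finset.mem_image] at h2
    obtain ⟨τ, _, rfl⟩ := h2
    exact hlast (h1.1 (Finset.mem_insert_self _ _))
  rw [Finset.sum_union hdisj]
  congr 1
  · rw [Finset.powersetCard_map, Finset.sum_map]
    apply Finset.sum_congr rfl
    intro σ _
    have he : (Finset.mapEmbedding Fin.castSuccEmb).toEmbedding σ
        = σ.map Fin.castSuccEmb := rfl
    rw [he, Finset.prod_map]
    rfl
  · rw [Finset.sum_image ?hinj]
    case hinj =>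
      intro σ1 h1 σ2 h2 heq
      rw [Finset.mem_coe, Finset.mem_powersetCard] at h1 h2
      have e1 : Fin.last n ∉ σ1 := fun hx => hlast (h1.1 hx)
      have e2 : Fin.last n ∉ σ2 := fun hx => hlast (h2.1 hx)
      have := congrArg (Finset.erase · (Fin.last n)) heq
      simpa [Finset.erase_insert e1, Finset.erase_insert e2] using this
    rw [Finset.powersetCard_map, Finset.sum_map, Finset.mul_sum]
    apply Finset.sum_congr rfl
    intro σ _
    have he : (Finset.mapEmbedding Fin.castSuccEmb).toEmbedding σ
        = σ.map Fin.castSuccEmb := rfl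
    rw [he]
    have hlast2 : Fin.last n ∉ σ.map Fin.castSuccEmb := by
      simp only [Finset.mem_map, not_exists]
      intro j hj
      exact (Fin.castSucc_lt_last j).ne hj.2
    rw [Finset.prod_insert hlast2, Finset.prod_map]
    rfl

lemma esymValZ_succ [CommSemiring R] (n : ℕ) (m : ℤ) (x : Fin (n + 1) → R) :
    esymValZ (n + 1) m x
      = esymValZ n m (x ∘ Fin.castSucc)
        + x (Fin.last n) * esymValZ n (m - 1) (x ∘ Fin.castSucc) := by
  rcases lt_trichotomy m 0 with h | h | h
  · rw [esymValZ_of_neg h, esymValZ_of_neg h, esymValZ_of_neg (by omega), mul_zero, add_zero]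
  · subst h
    rw [esymValZ_of_neg (show (0:ℤ) - 1 < 0 by omega), mul_zero, add_zero]
    show esymValZ (n+1) ((0:ℕ) : ℤ) x = esymValZ n ((0:ℕ) : ℤ) _
    rw [esymValZ_ofNat, esymValZ_ofNat, esymVal_zero, esymVal_zero]
  · obtain ⟨a, rfl⟩ : ∃ a : ℕ, m = ((a + 1 : ℕ) : ℤ) := by
      refine ⟨(m - 1).toNat, by omega⟩
    have h1 : ((a + 1 : ℕ) : ℤ) - 1 = ((a : ℕ) : ℤ) := by push_cast; ring
    rw [h1, esymValZ_ofNat, esymValZ_ofNat, esymValZ_ofNat]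
    exact esymVal_succ n a x

/-! ### Determinant helper lemmas -/

lemma det_eq_zero_of_block [CommRing R] {k : ℕ} (M : Matrix (Fin k) (Fin k) R) (t : Fin k)
    (h : ∀ i j : Fin k, t ≤ i → j ≤ t → M i j = 0) : M.det = 0 := by
  rw [Matrix.det_apply]
  apply Finset.sum_eq_zero
  intro σ _
  have hex : ∃ j : Fin k, j ≤ t ∧ t ≤ σ j := by
    by_contra hcon
    push_neg at hcon
    have hmaps : ∀ j ∈ Finset.Iic t, σ j ∈ Finset.Iio t := by
      intro j hj
      rw [Finset.mem_Iio]
      exact hcon j (Finset.mem_Iic.1 hj)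
    have hinj : Set.InjOn σ (Finset.Iic t) := fun a _ b _ hab => σ.injective hab
    have hcard := Finset.card_le_card_of_injOn σ hmaps hinj
    rw [Fin.card_Iic, Fin.card_Iio] at hcard
    omega
  obtain ⟨j, hj1, hj2⟩ := hex
  have hz : (∏ i : Fin k, M (σ i) i) = 0 :=
    Finset.prod_eq_zero (Finset.mem_univ j) (h _ _ hj2 hj1)
  rw [hz, smul_zero]
/-! ### Counting cells columnwise -/

lemma card_cells (r N : ℕ) (f g : ℕ → ℕ) (hg : ∀ j, g j ≤ f j) (hN : ∀ j, j < r → f j ≤ N) :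
    (skewCells r f g).card = ∑ c ∈ Finset.range N, (conjPart r f c - conjPart r g c) := by
  classical
  rw [Finset.card_eq_sum_card_fiberwise
    (f := fun p => p.2) (t := Finset.range N)
    (fun p hp => Finset.mem_range.2
      (lt_of_lt_of_le (mem_cells.1 hp).2.2 (hN _ (mem_cells.1 hp).1)))]
  apply Finset.sum_congr rfl
  intro c _
  have hset : (skewCells r f g).filter (fun p => p.2 = c)
      = ((Finset.range r).filter (fun j => c + 1 ≤ f j)
          \ (Finset.range r).filter (fun j => c + 1 ≤ g j)).image (fun j => (j, c)) := by
    ext ⟨a, b⟩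
    simp only [Finset.mem_filter, Finset.mem_image, Finset.mem_sdiff, Finset.mem_range,
      mem_cells, Prod.mk.injEq]
    constructor
    · rintro ⟨⟨h1, h2, h3⟩, rfl⟩
      exact ⟨a, ⟨⟨h1, by omega⟩, by push_neg; intro _; omega⟩, rfl, rfl⟩
    · rintro ⟨j, ⟨⟨hj1, hj2⟩, hj3⟩, rfl, rfl⟩
      push_neg at hj3
      exact ⟨⟨hj1, by omega, by omega⟩, rfl⟩
  rw [hset, Finset.card_image_of_injective _ (fun a b hab => by
    simpa using congrArg Prod.fst hab)]
  rw [Finset.card_sdiff_of_subset]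
  · rfl
  · intro j hj
    simp only [Finset.mem_filter, Finset.mem_range] at *
    exact ⟨hj.1, le_trans hj.2 (hg j)⟩

/-! ### Determinant is 1 for equal conjugates -/

lemma det_eq_one_of_conj_eq {R : Type*} [CommRing R] (n r k : ℕ) (x : Fin n → R)
    (lam mu : ℕ → ℕ) (hlam : Antitone lam)
    (heq : ∀ i, conjPart r lam i = conjPart r mu i) :
    (Matrix.of fun i j : Fin k =>
      esymValZ n ((conjPart r lam i : ℤ) - conjPart r mu j - i + j) x).det = 1 := by
  have htri : (Matrix.of fun i j : Fin k =>
      esymValZ n ((conjPart r lam i : ℤ) - conjPart r mu j - i + j) x).BlockTriangular id := by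
    intro i j hij
    simp only [Matrix.of_apply]
    have h1 : conjPart r lam i ≤ conjPart r lam j := conjPart_anti (le_of_lt hij)
    rw [← heq j]
    apply esymValZ_of_neg
    have : (j : ℕ) < (i : ℕ) := hij
    omega
  rw [Matrix.det_of_upperTriangular htri]
  apply Finset.prod_eq_one
  intro i _
  simp only [Matrix.of_apply]
  rw [heq i]
  have h1 : ((conjPart r mu i : ℤ) - conjPart r mu i - i + i) = ((0 : ℕ) : ℤ) := by ring
  rw [h1, esymValZ_ofNat, esymVal_zero]

/-! ### Base case: no variables -/

lemma base_case {R : Type*} [CommRing R] (r k : ℕ) (x : Fin 0 → R)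
    (lam mu : ℕ → ℕ) (hlam : Antitone lam) (hmu : Antitone mu) (hle : mu ≤ lam)
    (hk : lam 0 ≤ k) :
    SS 0 r lam mu x =
      (Matrix.of fun i j : Fin k =>
        esymValZ 0 ((conjPart r lam i : ℤ) - conjPart r mu j - i + j) x).det := by
  classical
  rcases eq_or_ne (skewCells r lam mu) ∅ with hemp | hne
  · -- empty skew shape: both sides are 1
    have hcells : ∀ j, j < r → lam j = mu j := by
      intro j hj
      by_contra hne2
      have hlt : mu j < lam j := lt_of_le_of_ne (hle j) (Ne.symm hne2)
      have : (j, mu j) ∈ skewCells r lam mu := mem_cells.2 ⟨hj, le_refl _, hlt⟩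
      rw [hemp] at this
      exact absurd this (Finset.notMem_empty _)
    have hconj : ∀ i, conjPart r lam i = conjPart r mu i := by
      intro i
      unfold conjPart
      congr 1
      apply Finset.filter_congr
      intro j hj
      rw [hcells j (Finset.mem_range.1 hj)]
    rw [det_eq_one_of_conj_eq 0 r k x lam mu hlam hconj]
    -- LHS = 1
    have hempty : IsEmpty {p // p ∈ skewCells r lam mu} := by
      rw [hemp]; exact ⟨fun p => Finset.notMem_empty _ p.2⟩
    have hfill2 : ∀ T : {p // p ∈ skewCells r lam mu} → Fin 0, IsFill 0 r lam mu T := by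
      intro T
      constructor
      · intro a; exact hempty.elim a
      · intro a; exact hempty.elim a
    unfold SS
    rw [Finset.filter_true_of_mem (fun T _ => hfill2 T)]
    have : ∀ T : {p // p ∈ skewCells r lam mu} → Fin 0, (∏ c, x (T c)) = 1 := by
      intro T
      apply Finset.prod_of_isEmpty
    rw [Finset.sum_congr rfl (fun T _ => this T)]
    rw [Finset.sum_const, Finset.card_univ]
    have hcard : Fintype.card ({p // p ∈ skewCells r lam mu} → Fin 0) = 1 := by
      rw [Fintype.card_eq_one_iff]
      refine ⟨fun p => hempty.elim p, ?_⟩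
      intro T
      funext p
      exact hempty.elim p
    rw [hcard, one_smul]
  · -- nonempty skew shape: both sides are 0
    obtain ⟨p₀, hp₀⟩ := Finset.nonempty_iff_ne_empty.2 hne
    have hp := mem_cells.1 hp₀
    -- LHS = 0 : no fillings since Fin 0 is empty
    have hLHS : SS 0 r lam mu x = 0 := by
      unfold SS
      have : IsEmpty ({p // p ∈ skewCells r lam mu} → Fin 0) := by
        have hne2 : Nonempty {p // p ∈ skewCells r lam mu} := ⟨⟨p₀, hp₀⟩⟩
        exact ⟨fun T => (T hne2.some).elim0⟩
      rw [Finset.univ_eq_empty, Finset.filter_empty, Finset.sum_empty]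
    rw [hLHS]
    -- RHS = 0
    set i₀ : ℕ := mu p₀.1 with hi₀
    have hik : i₀ < k := by
      have h1 : mu p₀.1 < lam p₀.1 := by omega
      have h2 : lam p₀.1 ≤ lam 0 := hlam (Nat.zero_le _)
      omega
    have hstrict : conjPart r mu i₀ < conjPart r lam i₀ := by
      apply Finset.card_lt_card
      rw [Finset.ssubset_iff_of_subset]
      · refine ⟨p₀.1, ?_, ?_⟩
        · simp only [Finset.mem_filter, Finset.mem_range]
          exact ⟨hp.1, by omega⟩
        · simp only [Finset.mem_filter, Finset.mem_range]
          push_neg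
          intro _
          omega
      · intro j hj
        simp only [Finset.mem_filter, Finset.mem_range] at *
        exact ⟨hj.1, le_trans hj.2 (hle j)⟩
    set t : Fin k := ⟨i₀, hik⟩ with ht
    rw [← Matrix.det_transpose]
    symm
    apply det_eq_zero_of_block _ t
    intro i j hti hjt
    simp only [Matrix.transpose_apply, Matrix.of_apply]
    -- entry M j i with j ≤ t ≤ i (original orientation)
    have h1 : conjPart r lam i₀ ≤ conjPart r lam (j : ℕ) := by
      apply conjPart_anti
      exact_mod_cast hjt
    have h2 : conjPart r mu (i : ℕ) ≤ conjPart r mu i₀ := by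
      apply conjPart_anti
      exact_mod_cast hti
    have hpos : (0 : ℤ) < (conjPart r lam (j:ℕ) : ℤ) - conjPart r mu (i:ℕ) - j + i := by
      have hji : (j : ℕ) ≤ (i : ℕ) := le_trans hjt hti
      push_cast
      omega
    unfold esymValZ
    rw [if_pos (by omega)]
    apply esymVal_zero_vars
    omega
/-! ### Subset data and associated shapes -/

def sfun (k : ℕ) (S : Finset (Fin k)) : ℕ → ℕ :=
  fun i => if h : i < k then (if (⟨i, h⟩ : Fin k) ∈ S then 1 else 0) else 0

def mS (r k : ℕ) (lam : ℕ → ℕ) (S : Finset (Fin k)) : ℕ → ℕ :=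
  fun i => conjPart r lam i - sfun k S i

def Good (r k : ℕ) (lam mu : ℕ → ℕ) (S : Finset (Fin k)) : Prop :=
  Antitone (mS r k lam S) ∧ (∀ i, sfun k S i ≤ conjPart r lam i) ∧
    (∀ i, conjPart r mu i ≤ mS r k lam S i)

def nuS (r k : ℕ) (lam mu : ℕ → ℕ) (S : Finset (Fin k)) : ℕ → ℕ :=
  fun j => if j < r then conjPart k (mS r k lam S) j else mu j

lemma sfun_le_one (k : ℕ) (S : Finset (Fin k)) (i : ℕ) : sfun k S i ≤ 1 := by
  unfold sfun
  split <;> [skip; omega]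
  split <;> omega

lemma sfun_val (k : ℕ) (S : Finset (Fin k)) (i : Fin k) :
    sfun k S (i : ℕ) = if i ∈ S then 1 else 0 := by
  unfold sfun
  rw [dif_pos i.isLt]

lemma sfun_card (k : ℕ) (S : Finset (Fin k)) :
    ∑ i ∈ Finset.range k, sfun k S i = S.card := by
  rw [← Fin.sum_univ_eq_sum_range]
  rw [Finset.sum_congr rfl (fun i _ => sfun_val k S i)]
  rw [Finset.sum_ite_mem, Finset.univ_inter, Finset.sum_const, smul_eq_mul, mul_one]

section Step

variable {r k : ℕ} {lam mu : ℕ → ℕ}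

lemma conj_lam_zero (hlam : Antitone lam) (hk : lam 0 ≤ k) {i : ℕ} (hik : k ≤ i) :
    conjPart r lam i = 0 :=
  conjPart_eq_zero hlam (le_trans hk hik)

section GoodS

variable {S : Finset (Fin k)} (hlam : Antitone lam) (hmu : Antitone mu)
  (hle : mu ≤ lam) (hk : lam 0 ≤ k) (hgood : Good r k lam mu S)

include hlam hmu hle hk hgood in
lemma conj_nuS : ∀ i, conjPart r (nuS r k lam mu S) i = mS r k lam S i := by
  intro i
  rcases lt_or_ge i k with hik | hik
  · have h1 : conjPart r (nuS r k lam mu S) i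
        = conjPart r (conjPart k (mS r k lam S)) i := by
      unfold conjPart
      congr 1
      apply Finset.filter_congr
      intro j hj
      rw [Finset.mem_range] at hj
      unfold nuS
      rw [if_pos hj]
      exact Iff.rfl
    rw [h1]
    exact conjPart_conjPart hgood.1 hik
      (le_trans (Nat.sub_le _ _) (conjPart_le r lam i))
  · have h2 : mS r k lam S i = 0 := by
      unfold mS
      rw [conj_lam_zero hlam hk hik]
      omega
    rw [h2, conjPart, Finset.card_eq_zero, Finset.filter_eq_empty_iff]
    intro j hj
    rw [Finset.mem_range] at hj
    unfold nuS
    split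
    · have := conjPart_le k (mS r k lam S) j
      omega
    · have h3 : mu j ≤ mu 0 := hmu (Nat.zero_le _)
      have h4 := hle 0
      omega

include hlam hle hk in
lemma nuS_le_lam : ∀ j, nuS r k lam mu S j ≤ lam j := by
  intro j
  unfold nuS
  split
  · rename_i hj
    calc conjPart k (mS r k lam S) j ≤ conjPart k (conjPart r lam) j :=
          conjPart_mono_f (fun i => Nat.sub_le _ _) j
      _ = lam j := conjPart_conjPart hlam hj (le_trans (hlam (Nat.zero_le j)) hk)
  · exact hle j

include hmu hle hk hgood in
lemma mu_le_nuS : ∀ j, mu j ≤ nuS r k lam mu S j := by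
  intro j
  unfold nuS
  split
  · rename_i hj
    calc mu j = conjPart k (conjPart r mu) j :=
          (conjPart_conjPart hmu hj (le_trans (hmu (Nat.zero_le j)) (le_trans (hle 0) hk))).symm
      _ ≤ conjPart k (mS r k lam S) j := conjPart_mono_f hgood.2.2 j
  · exact le_refl _

include hlam hk in
lemma nuS_strip : ∀ j, j + 1 < r → lam (j + 1) ≤ nuS r k lam mu S j := by
  intro j hj
  unfold nuS
  rw [if_pos (by omega)]
  calc lam (j + 1) = conjPart k (conjPart r lam) (j + 1) :=
        (conjPart_conjPart hlam hj (le_trans (hlam (Nat.zero_le _)) hk)).symm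
    _ ≤ conjPart k (mS r k lam S) j := by
        apply Finset.card_le_card
        intro i hi
        simp only [Finset.mem_filter, Finset.mem_range] at *
        have := sfun_le_one k S i
        unfold mS
        omega

include hlam hmu hle hk hgood in
lemma nuS_antitone : Antitone (nuS r k lam mu S) := by
  apply antitone_nat_of_succ_le
  intro j
  rcases lt_or_ge (j + 1) r with hj | hj
  · unfold nuS
    rw [if_pos hj, if_pos (by omega)]
    exact conjPart_anti (by omega)
  · rcases lt_or_ge j r with hj2 | hj2
    · have h1 : nuS r k lam mu S (j + 1) = mu (j + 1) := by
        unfold nuS; rw [if_neg (by omega)]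
      rw [h1]
      exact le_trans (hmu (by omega)) (mu_le_nuS hmu hle hk hgood j)
    · have h1 : nuS r k lam mu S (j + 1) = mu (j + 1) := by
        unfold nuS; rw [if_neg (by omega)]
      have h2 : nuS r k lam mu S j = mu j := by
        unfold nuS; rw [if_neg (by omega)]
      rw [h1, h2]
      exact hmu (by omega)

end GoodS

/-! ### The shape cut out by a filling -/

variable {n : ℕ}

def isLastCell (n r : ℕ) (lam mu : ℕ → ℕ)
    (T : {p // p ∈ skewCells r lam mu} → Fin (n + 1)) (p : ℕ × ℕ) : Prop :=
  ∃ h : p ∈ skewCells r lam mu, T ⟨p, h⟩ = Fin.last n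

instance (n r : ℕ) (lam mu : ℕ → ℕ) (T : {p // p ∈ skewCells r lam mu} → Fin (n + 1))
    (p : ℕ × ℕ) : Decidable (isLastCell n r lam mu T p) := by
  unfold isLastCell
  exact exists_prop_decidable _

def nuT (n r : ℕ) (lam mu : ℕ → ℕ)
    (T : {p // p ∈ skewCells r lam mu} → Fin (n + 1)) : ℕ → ℕ :=
  fun i => if i < r then
    ((Finset.range (lam i)).filter (fun c => ¬ isLastCell n r lam mu T (i, c))).card
  else mu i

def gmap (n r k : ℕ) (lam mu : ℕ → ℕ)
    (T : {p // p ∈ skewCells r lam mu} → Fin (n + 1)) : Finset (Fin k) :=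
  Finset.univ.filter (fun i : Fin k =>
    conjPart r (nuT n r lam mu T) i < conjPart r lam i)

section FillT

variable {T : {p // p ∈ skewCells r lam mu} → Fin (n + 1)}
  (hlam : Antitone lam) (hmu : Antitone mu) (hle : mu ≤ lam) (hk : lam 0 ≤ k)
  (hT : IsFill (n + 1) r lam mu T)

include hT in
lemma nuT_row {i : ℕ} (hi : i < r) :
    (Finset.range (lam i)).filter (fun c => ¬ isLastCell n r lam mu T (i, c))
      = Finset.range (nuT n r lam mu T i) := by
  have h0 : nuT n r lam mu T i
      = ((Finset.range (lam i)).filter (fun c => ¬ isLastCell n r lam mu T (i, c))).card := by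
    unfold nuT; rw [if_pos hi]
  rw [h0]
  apply lowerset_eq_range
  intro c hc
  simp only [Finset.mem_filter, Finset.mem_range] at *
  refine ⟨by omega, ?_⟩
  intro hisl
  obtain ⟨hcell, hlast⟩ := hisl
  have hcm := mem_cells'.1 hcell
  have hcell1 : (i, c + 1) ∈ skewCells r lam mu :=
    mem_cells'.2 ⟨hi, by omega, by omega⟩
  have hrow := hT.1 ⟨(i, c), hcell⟩ ⟨(i, c + 1), hcell1⟩ rfl rfl
  rw [hlast] at hrow
  have : T ⟨(i, c + 1), hcell1⟩ = Fin.last n := Fin.last_le_iff.mp hrow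
  exact hc.2 ⟨hcell1, this⟩

include hT in
lemma last_iff {i c : ℕ} (hc : (i, c) ∈ skewCells r lam mu) :
    T ⟨(i, c), hc⟩ = Fin.last n ↔ nuT n r lam mu T i ≤ c := by
  have hm := mem_cells'.1 hc
  have h1 : c ∈ (Finset.range (lam i)).filter
      (fun c => ¬ isLastCell n r lam mu T (i, c)) ↔ c < nuT n r lam mu T i := by
    rw [nuT_row hT hm.1, Finset.mem_range]
  constructor
  · intro hlast
    by_contra hcon
    push_neg at hcon
    have hmem : c ∈ Finset.range (nuT n r lam mu T i) := Finset.mem_range.2 hcon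
    rw [← nuT_row hT hm.1] at hmem
    exact (Finset.mem_filter.1 hmem).2 ⟨hc, hlast⟩
  · intro hge
    by_contra hne
    have hmem : c ∈ (Finset.range (lam i)).filter
        (fun c => ¬ isLastCell n r lam mu T (i, c)) :=
      Finset.mem_filter.2 ⟨Finset.mem_range.2 hm.2.2, fun hisl => hne hisl.2⟩
    rw [nuT_row hT hm.1, Finset.mem_range] at hmem
    omega

include hle in
lemma mu_le_nuT : ∀ i, mu i ≤ nuT n r lam mu T i := by
  intro i
  unfold nuT
  split
  · rename_i hi
    have hsub : Finset.range (mu i) ⊆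
        (Finset.range (lam i)).filter (fun c => ¬ isLastCell n r lam mu T (i, c)) := by
      intro c hc
      rw [Finset.mem_range] at hc
      rw [Finset.mem_filter, Finset.mem_range]
      have h5 : mu i ≤ lam i := hle i
      refine ⟨by omega, ?_⟩
      intro hisl
      have := mem_cells'.1 hisl.1
      omega
    have := Finset.card_le_card hsub
    rwa [Finset.card_range] at this
  · exact le_refl _

include hle in
lemma nuT_le_lam : ∀ i, nuT n r lam mu T i ≤ lam i := by
  intro i
  unfold nuT
  split
  · calc _ ≤ (Finset.range (lam i)).card := Finset.card_le_card (Finset.filter_subset _ _)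
      _ = lam i := Finset.card_range _
  · exact hle i

include hlam hmu hle hT in
lemma nuT_strip : ∀ i, i + 1 < r → lam (i + 1) ≤ nuT n r lam mu T i := by
  intro i hi
  by_contra hcon
  push_neg at hcon
  set c := nuT n r lam mu T i with hc
  have hca : (i, c) ∈ skewCells r lam mu := by
    apply mem_cells'.2
    refine ⟨by omega, mu_le_nuT hle i, ?_⟩
    have := hlam (show i ≤ i + 1 by omega)
    omega
  have hcb : (i + 1, c) ∈ skewCells r lam mu := by
    apply mem_cells'.2
    refine ⟨hi, ?_, hcon⟩
    exact le_trans (hmu (show i ≤ i + 1 by omega)) (mu_le_nuT hle i)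
  have hlast : T ⟨(i, c), hca⟩ = Fin.last n := (last_iff hT hca).2 (le_refl _)
  have hcol := hT.2 ⟨(i, c), hca⟩ ⟨(i + 1, c), hcb⟩ rfl rfl
  rw [hlast] at hcol
  exact absurd hcol (not_lt.2 (Fin.le_last _))

include hlam hmu hle hT in
lemma nuT_antitone : Antitone (nuT n r lam mu T) := by
  apply antitone_nat_of_succ_le
  intro i
  rcases lt_or_ge (i + 1) r with hi | hi
  · exact le_trans (nuT_le_lam hle (i + 1)) (nuT_strip hlam hmu hle hT i hi)
  · have h1 : nuT n r lam mu T (i + 1) = mu (i + 1) := by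
      unfold nuT; rw [if_neg (by omega)]
    rw [h1]
    exact le_trans (hmu (by omega)) (mu_le_nuT hle i)

include hlam hmu hle hT in
lemma conj_lam_le_conj_nuT : ∀ i,
    conjPart r lam i ≤ conjPart r (nuT n r lam mu T) i + 1 := by
  intro i
  have hsub : (Finset.range r).filter (fun j => i + 1 ≤ nuT n r lam mu T j)
      ⊆ (Finset.range r).filter (fun j => i + 1 ≤ lam j) := by
    intro j hj
    rw [Finset.mem_filter] at *
    exact ⟨hj.1, le_trans hj.2 (nuT_le_lam hle j)⟩
  have hcard := Finset.card_sdiff_add_card_eq_card hsub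
  have hone : ((Finset.range r).filter (fun j => i + 1 ≤ lam j)
      \ (Finset.range r).filter (fun j => i + 1 ≤ nuT n r lam mu T j)).card ≤ 1 := by
    rw [Finset.card_le_one]
    intro a ha b hb
    simp only [Finset.mem_sdiff, Finset.mem_filter, Finset.mem_range, not_and, not_le] at ha hb
    by_contra hab
    rcases Nat.lt_or_ge a b with h | h
    · have h1 : lam b ≤ lam (a + 1) := hlam (by omega)
      have h2 : lam (a + 1) ≤ nuT n r lam mu T a := nuT_strip hlam hmu hle hT a (by omega)
      have h3 := ha.2 ha.1.1
      omega
    · have hba : b < a := by omega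
      have h1 : lam a ≤ lam (b + 1) := hlam (by omega)
      have h2 : lam (b + 1) ≤ nuT n r lam mu T b := nuT_strip hlam hmu hle hT b (by omega)
      have h3 := hb.2 hb.1.1
      omega
  unfold conjPart
  omega

include hlam hmu hle hk hT in
lemma conj_nuT_eq_mS_gmap : ∀ i,
    conjPart r (nuT n r lam mu T) i = mS r k lam (gmap n r k lam mu T) i := by
  intro i
  have hmono : conjPart r (nuT n r lam mu T) i ≤ conjPart r lam i :=
    conjPart_mono_f (nuT_le_lam hle) i
  rcases lt_or_ge i k with hik | hik
  · have hs : sfun k (gmap n r k lam mu T) i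
        = if conjPart r (nuT n r lam mu T) i < conjPart r lam i then 1 else 0 := by
      unfold sfun
      rw [dif_pos hik]
      unfold gmap
      simp only [Finset.mem_filter, Finset.mem_univ, true_and]
    unfold mS
    rw [hs]
    split
    · rename_i hlt
      have := conj_lam_le_conj_nuT hlam hmu hle hT i
      omega
    · rename_i hnlt
      omega
  · have h0 : conjPart r lam i = 0 := conj_lam_zero hlam hk hik
    have hs : sfun k (gmap n r k lam mu T) i = 0 := by
      unfold sfun
      rw [dif_neg (by omega)]
    unfold mS
    rw [hs, h0]
    omega

include hlam hmu hle hk hT in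
lemma good_gmap : Good r k lam mu (gmap n r k lam mu T) := by
  refine ⟨?_, ?_, ?_⟩
  · intro a b hab
    rw [← conj_nuT_eq_mS_gmap hlam hmu hle hk hT a,
      ← conj_nuT_eq_mS_gmap hlam hmu hle hk hT b]
    exact conjPart_anti hab
  · intro i
    rcases lt_or_ge i k with hik | hik
    · have hs : sfun k (gmap n r k lam mu T) i
          = if conjPart r (nuT n r lam mu T) i < conjPart r lam i then 1 else 0 := by
        unfold sfun
        rw [dif_pos hik]
        unfold gmap
        simp only [Finset.mem_filter, Finset.mem_univ, true_and]
      rw [hs]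
      split
      · rename_i hlt; omega
      · omega
    · unfold sfun
      rw [dif_neg (by omega)]
      omega
  · intro i
    rw [← conj_nuT_eq_mS_gmap hlam hmu hle hk hT i]
    exact conjPart_mono_f (mu_le_nuT hle) i

include hlam hmu hle hk hT in
lemma nuT_eq_nuS_of_gmap {S : Finset (Fin k)} (hS : gmap n r k lam mu T = S) :
    ∀ j, j < r → nuT n r lam mu T j = nuS r k lam mu S j := by
  intro j hj
  have h1 : nuT n r lam mu T j = conjPart k (conjPart r (nuT n r lam mu T)) j := by
    refine (conjPart_conjPart (nuT_antitone hlam hmu hle hT) hj ?_).symm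
    exact le_trans (nuT_le_lam hle j) (le_trans (hlam (Nat.zero_le j)) hk)
  rw [h1]
  have hfun : conjPart r (nuT n r lam mu T) = mS r k lam S := by
    funext i
    rw [conj_nuT_eq_mS_gmap hlam hmu hle hk hT i, hS]
  rw [hfun]
  unfold nuS
  rw [if_pos hj]

end FillT

lemma conjPart_congr {r' : ℕ} {f g : ℕ → ℕ} (h : ∀ j, j < r' → f j = g j) (i : ℕ) :
    conjPart r' f i = conjPart r' g i := by
  unfold conjPart
  congr 1
  apply Finset.filter_congr
  intro j hj
  rw [Finset.mem_range] at hj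
  rw [h j hj]

lemma prod_subtype_eq {R : Type*} [CommSemiring R] (C : Finset (ℕ × ℕ))
    (F : {p // p ∈ C} → R) (G : ℕ × ℕ → R)
    (hFG : ∀ p (h : p ∈ C), F ⟨p, h⟩ = G p) : (∏ c, F c) = ∏ p ∈ C, G p := by
  rw [Finset.univ_eq_attach, ← Finset.prod_attach C G]
  exact Finset.prod_congr rfl (fun q _ => hFG q.1 q.2)

section Fiber

variable {S : Finset (Fin k)} (hlam : Antitone lam) (hmu : Antitone mu)
  (hle : mu ≤ lam) (hk : lam 0 ≤ k) (hgood : Good r k lam mu S)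

include hgood in
lemma mS_lt_iff (i : Fin k) :
    mS r k lam S (i : ℕ) < conjPart r lam (i : ℕ) ↔ i ∈ S := by
  have h1 := hgood.2.1 (i : ℕ)
  have h2 := sfun_val k S i
  unfold mS
  by_cases hS : i ∈ S
  · rw [if_pos hS] at h2
    simp only [hS, iff_true]
    omega
  · rw [if_neg hS] at h2
    simp only [hS, iff_false]
    omega

include hlam hmu hle hk in
lemma T_eq_last_iff {n : ℕ} {T : {p // p ∈ skewCells r lam mu} → Fin (n + 1)}
    (hT : IsFill (n + 1) r lam mu T) (hgm : gmap n r k lam mu T = S)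
    {p : ℕ × ℕ} (hp : p ∈ skewCells r lam mu) :
    T ⟨p, hp⟩ = Fin.last n ↔ p ∉ skewCells r (nuS r k lam mu S) mu := by
  obtain ⟨i, c⟩ := p
  have hm := mem_cells'.1 hp
  have he := nuT_eq_nuS_of_gmap hlam hmu hle hk hT hgm i hm.1
  rw [last_iff hT hp, he]
  constructor
  · intro hge hpν
    have := (mem_cells'.1 hpν).2.2
    omega
  · intro hnp
    by_contra hcon
    push_neg at hcon
    exact hnp (mem_cells'.2 ⟨hm.1, hm.2.1, by omega⟩)

include hlam hmu hle hk in
lemma val_lt {n : ℕ} {T : {p // p ∈ skewCells r lam mu} → Fin (n + 1)}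
    (hT : IsFill (n + 1) r lam mu T) (hgm : gmap n r k lam mu T = S)
    {q : ℕ × ℕ} (hq : q ∈ skewCells r (nuS r k lam mu S) mu)
    (hp : q ∈ skewCells r lam mu) : ((T ⟨q, hp⟩ : Fin (n + 1)) : ℕ) < n := by
  apply Fin.val_lt_last
  intro hlast
  exact ((T_eq_last_iff hlam hmu hle hk hT hgm hp).1 hlast) hq

include hlam hmu hle hk hgood in
lemma cells_card_split :
    (skewCells r lam mu).card = (skewCells r (nuS r k lam mu S) mu).card + S.card := by
  rw [card_cells r k lam mu (fun j => hle j) (fun j _ => le_trans (hlam (Nat.zero_le j)) hk),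
    card_cells r k (nuS r k lam mu S) mu (mu_le_nuS hmu hle hk hgood)
      (fun j _ => le_trans (nuS_le_lam hlam hle hk j)
        (le_trans (hlam (Nat.zero_le j)) hk))]
  rw [← sfun_card k S, ← Finset.sum_add_distrib]
  apply Finset.sum_congr rfl
  intro c _
  rw [conj_nuS hlam hmu hle hk hgood c]
  have h1 := hgood.2.2 c
  have h2 := hgood.2.1 c
  unfold mS at *
  omega

include hlam hmu hle hk hgood in
lemma fiber_sum {R : Type*} [CommRing R] (n : ℕ) (x : Fin (n + 1) → R) :
    ∑ T ∈ ((Finset.univ : Finset ({p // p ∈ skewCells r lam mu} → Fin (n + 1))).filter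
        (IsFill (n + 1) r lam mu)).filter (fun T => gmap n r k lam mu T = S),
      ∏ c, x (T c)
    = x (Fin.last n) ^ S.card *
        ∑ T' ∈ (Finset.univ : Finset
            ({p // p ∈ skewCells r (nuS r k lam mu S) mu} → Fin n)).filter
          (IsFill n r (nuS r k lam mu S) mu),
        ∏ c, (x ∘ Fin.castSucc) (T' c) := by
  classical
  rw [Finset.mul_sum]
  have hνlam : ∀ j, nuS r k lam mu S j ≤ lam j := nuS_le_lam hlam hle hk
  have hμν : ∀ j, mu j ≤ nuS r k lam mu S j := mu_le_nuS hmu hle hk hgood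
  have hνanti : Antitone (nuS r k lam mu S) := nuS_antitone hlam hmu hle hk hgood
  have hνstrip : ∀ j, j + 1 < r → lam (j + 1) ≤ nuS r k lam mu S j := nuS_strip hlam hk
  have hsub : skewCells r (nuS r k lam mu S) mu ⊆ skewCells r lam mu := by
    intro p hp
    rw [mem_cells] at *
    exact ⟨hp.1, hp.2.1, lt_of_lt_of_le hp.2.2 (hνlam p.1)⟩
  refine Finset.sum_bij'
    (i := fun T hT => fun q => Fin.castLT (T ⟨q.1, hsub q.2⟩)
      (val_lt hlam hmu hle hk
        (Finset.mem_filter.1 (Finset.mem_filter.1 hT).1).2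
        (Finset.mem_filter.1 hT).2 q.2 (hsub q.2)))
    (j := fun T' _ => fun p =>
      if h : p.1 ∈ skewCells r (nuS r k lam mu S) mu then
        Fin.castSucc (T' ⟨p.1, h⟩) else Fin.last n)
    ?_ ?_ ?_ ?_ ?_
  · -- hi : forward map is a filling of nu/mu
    intro T hT
    have hfill : IsFill (n + 1) r lam mu T :=
      (Finset.mem_filter.1 (Finset.mem_filter.1 hT).1).2
    rw [Finset.mem_filter]
    refine ⟨Finset.mem_univ _, ?_, ?_⟩
    · intro a b h1 h2
      have hab := hfill.1 ⟨a.1, hsub a.2⟩ ⟨b.1, hsub b.2⟩ h1 h2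
      rw [Fin.le_def] at hab ⊢
      exact hab
    · intro a b h1 h2
      have hab := hfill.2 ⟨a.1, hsub a.2⟩ ⟨b.1, hsub b.2⟩ h1 h2
      rw [Fin.lt_def] at hab ⊢
      exact hab
  · -- hj : backward map is in the fiber
    intro T' hT'
    have hfill' : IsFill n r (nuS r k lam mu S) mu T' := (Finset.mem_filter.1 hT').2
    have hTT : IsFill (n + 1) r lam mu (fun p =>
        if h : p.1 ∈ skewCells r (nuS r k lam mu S) mu then
          Fin.castSucc (T' ⟨p.1, h⟩) else Fin.last n) := by
      constructor
      · intro a b h1 h2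
        by_cases hb : b.1 ∈ skewCells r (nuS r k lam mu S) mu
        · have hma := mem_cells.1 a.2
          have hmb := mem_cells.1 hb
          have hee : nuS r k lam mu S a.1.1 = nuS r k lam mu S b.1.1 := by rw [h1]
          have ha : a.1 ∈ skewCells r (nuS r k lam mu S) mu :=
            mem_cells.2 ⟨hma.1, hma.2.1, by omega⟩
          simp only [dif_pos ha, dif_pos hb]
          exact Fin.castSucc_le_castSucc_iff.2 (hfill'.1 ⟨a.1, ha⟩ ⟨b.1, hb⟩ h1 h2)
        · simp only [dif_neg hb]
          by_cases ha : a.1 ∈ skewCells r (nuS r k lam mu S) mu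
          · simp only [dif_pos ha]
            exact Fin.le_last _
          · simp only [dif_neg ha]
            exact le_refl _
      · intro a b h1 h2
        by_cases hb : b.1 ∈ skewCells r (nuS r k lam mu S) mu
        · have hma := mem_cells.1 a.2
          have hmb := mem_cells.1 hb
          have hee : nuS r k lam mu S b.1.1 ≤ nuS r k lam mu S a.1.1 :=
            hνanti (by omega)
          have ha : a.1 ∈ skewCells r (nuS r k lam mu S) mu :=
            mem_cells.2 ⟨hma.1, hma.2.1, by omega⟩
          simp only [dif_pos ha, dif_pos hb]
          exact Fin.castSucc_lt_castSucc_iff.2 (hfill'.2 ⟨a.1, ha⟩ ⟨b.1, hb⟩ h1 h2)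
        · simp only [dif_neg hb]
          by_cases ha : a.1 ∈ skewCells r (nuS r k lam mu S) mu
          · simp only [dif_pos ha]
            exact Fin.castSucc_lt_last _
          · exfalso
            have hma := mem_cells.1 a.2
            have hmb := mem_cells.1 b.2
            have h3 : nuS r k lam mu S a.1.1 ≤ a.1.2 := by
              by_contra hcon
              push_neg at hcon
              exact ha (mem_cells.2 ⟨hma.1, hma.2.1, hcon⟩)
            have h4 : lam (a.1.1 + 1) ≤ nuS r k lam mu S a.1.1 :=
              hνstrip a.1.1 (by omega)
            have h5 : b.1.2 < lam (a.1.1 + 1) := by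
              have := hmb.2.2
              rw [← h1] at this
              exact this
            omega
    have hnuTT : ∀ jj, jj < r → nuT n r lam mu (fun p =>
        if h : p.1 ∈ skewCells r (nuS r k lam mu S) mu then
          Fin.castSucc (T' ⟨p.1, h⟩) else Fin.last n) jj = nuS r k lam mu S jj := by
      intro jj hjj
      unfold nuT
      rw [if_pos hjj]
      have hset : (Finset.range (lam jj)).filter (fun c => ¬ isLastCell n r lam mu (fun p =>
          if h : p.1 ∈ skewCells r (nuS r k lam mu S) mu then
            Fin.castSucc (T' ⟨p.1, h⟩) else Fin.last n) (jj, c))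
          = Finset.range (nuS r k lam mu S jj) := by
        ext c
        simp only [Finset.mem_filter, Finset.mem_range]
        constructor
        · rintro ⟨hcl, hnl⟩
          by_contra hcon
          push_neg at hcon
          have hcell : (jj, c) ∈ skewCells r lam mu :=
            mem_cells'.2 ⟨hjj, le_trans (hμν jj) hcon, hcl⟩
          have hnot : (jj, c) ∉ skewCells r (nuS r k lam mu S) mu := by
            intro hx
            have := (mem_cells'.1 hx).2.2
            omega
          exact hnl ⟨hcell, dif_neg hnot⟩
        · intro hc
          refine ⟨by have := hνlam jj; omega, ?_⟩
          rintro ⟨hcell, hlast⟩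
          have hmem : (jj, c) ∈ skewCells r (nuS r k lam mu S) mu :=
            mem_cells'.2 ⟨hjj, (mem_cells'.1 hcell).2.1, hc⟩
          simp only [dif_pos hmem] at hlast
          exact (Fin.castSucc_lt_last _).ne hlast
      rw [hset, Finset.card_range]
    have hgmap : gmap n r k lam mu (fun p =>
        if h : p.1 ∈ skewCells r (nuS r k lam mu S) mu then
          Fin.castSucc (T' ⟨p.1, h⟩) else Fin.last n) = S := by
      apply Finset.ext
      intro i
      unfold gmap
      simp only [Finset.mem_filter, Finset.mem_univ, true_and]
      rw [conjPart_congr hnuTT (i : ℕ), conj_nuS hlam hmu hle hk hgood (i : ℕ)]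
      exact mS_lt_iff hgood i
    rw [Finset.mem_filter, Finset.mem_filter]
    exact ⟨⟨Finset.mem_univ _, hTT⟩, hgmap⟩
  · -- left inverse
    intro T hT
    have hfill : IsFill (n + 1) r lam mu T :=
      (Finset.mem_filter.1 (Finset.mem_filter.1 hT).1).2
    have hgm : gmap n r k lam mu T = S := (Finset.mem_filter.1 hT).2
    funext p
    by_cases h : p.1 ∈ skewCells r (nuS r k lam mu S) mu
    · simp only [dif_pos h]
      exact Fin.castSucc_castLT _ _
    · simp only [dif_neg h]
      exact ((T_eq_last_iff hlam hmu hle hk hfill hgm p.2).2 h).symm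
  · -- right inverse
    intro T' hT'
    funext q
    apply Fin.ext
    show (dite (q.1 ∈ skewCells r (nuS r k lam mu S) mu)
        (fun h => Fin.castSucc (T' ⟨q.1, h⟩)) (fun _ => Fin.last n) : Fin (n + 1)).val
      = ((T' q : Fin n) : ℕ)
    rw [dif_pos q.2]
    rfl
  · -- weights
    intro T hT
    have hfill : IsFill (n + 1) r lam mu T :=
      (Finset.mem_filter.1 (Finset.mem_filter.1 hT).1).2
    have hgm : gmap n r k lam mu T = S := (Finset.mem_filter.1 hT).2
    have key := prod_subtype_eq (skewCells r lam mu) (fun c => x (T c))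
      (fun p => if h : p ∈ skewCells r lam mu then x (T ⟨p, h⟩) else 1)
      (fun p h => by simp only [dif_pos h])
    rw [key, ← Finset.prod_sdiff hsub]
    have hA : ∀ p ∈ skewCells r lam mu \ skewCells r (nuS r k lam mu S) mu,
        (if h : p ∈ skewCells r lam mu then x (T ⟨p, h⟩) else 1) = x (Fin.last n) := by
      intro p hp
      rw [Finset.mem_sdiff] at hp
      simp only [dif_pos hp.1]
      rw [(T_eq_last_iff hlam hmu hle hk hfill hgm hp.1).2 hp.2]
    rw [Finset.prod_congr rfl hA, Finset.prod_const]
    have hcard : (skewCells r lam mu \ skewCells r (nuS r k lam mu S) mu).card = S.card := by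
      rw [Finset.card_sdiff_of_subset hsub]
      have := cells_card_split hlam hmu hle hk hgood
      omega
    rw [hcard]
    congr 1
    refine (prod_subtype_eq (skewCells r (nuS r k lam mu S) mu)
      (fun q => (x ∘ Fin.castSucc) (Fin.castLT (T ⟨q.1, hsub q.2⟩)
        (val_lt hlam hmu hle hk hfill hgm q.2 (hsub q.2))))
      (fun p => if h : p ∈ skewCells r lam mu then x (T ⟨p, h⟩) else 1)
      ?_).symm
    intro p h
    simp only [dif_pos (hsub h)]
    show x (Fin.castSucc (Fin.castLT (T ⟨p, hsub h⟩) _)) = x (T ⟨p, hsub h⟩)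
    rw [Fin.castSucc_castLT]

end Fiber

/-! ### The integer row data of a subset, and determinant vanishing for bad subsets -/

def czfun (r k : ℕ) (lam : ℕ → ℕ) (S : Finset (Fin k)) : ℕ → ℤ :=
  fun i => if i < k then (conjPart r lam i : ℤ) - sfun k S i else 0

section Det

variable {S : Finset (Fin k)}

lemma czfun_of_lt {i : ℕ} (hik : i < k) :
    czfun r k lam S i = (conjPart r lam i : ℤ) - sfun k S i := if_pos hik

lemma czfun_of_ge {i : ℕ} (hik : k ≤ i) : czfun r k lam S i = 0 := if_neg (by omega)

lemma czfun_of_mem (i : Fin k) (hi : i ∈ S) :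
    czfun r k lam S (i : ℕ) = (conjPart r lam (i : ℕ) : ℤ) - 1 := by
  rw [czfun_of_lt i.isLt, sfun_val k S i, if_pos hi]
  push_cast
  ring

lemma czfun_of_not_mem (i : Fin k) (hi : i ∉ S) :
    czfun r k lam S (i : ℕ) = (conjPart r lam (i : ℕ) : ℤ) := by
  rw [czfun_of_lt i.isLt, sfun_val k S i, if_neg hi]
  omega

lemma czfun_eq_conj_nuS (hlam : Antitone lam) (hmu : Antitone mu) (hle : mu ≤ lam)
    (hk : lam 0 ≤ k) (hgood : Good r k lam mu S) (i : Fin k) :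
    czfun r k lam S (i : ℕ) = (conjPart r (nuS r k lam mu S) (i : ℕ) : ℤ) := by
  rw [conj_nuS hlam hmu hle hk hgood]
  rw [czfun_of_lt i.isLt]
  have h1 := hgood.2.1 (i : ℕ)
  unfold mS
  push_cast [h1]
  omega

lemma det_czfun_bad {R : Type*} [CommRing R] (hlam : Antitone lam) (hmu : Antitone mu)
    (hle : mu ≤ lam) (hk : lam 0 ≤ k) (hbad : ¬ Good r k lam mu S)
    (n : ℕ) (y : Fin n → R) :
    (Matrix.det (fun i j : Fin k =>
      esymValZ n (czfun r k lam S (i : ℕ) - conjPart r mu (j : ℕ) - i + j) y)) = 0 := by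
  by_cases hanti : Antitone (czfun r k lam S)
  · -- antitone: goodness can only fail through non-containment
    have hP2 : ∀ i, sfun k S i ≤ conjPart r lam i := by
      intro i
      rcases lt_or_ge i k with hik | hik
      · have h0 := hanti (le_of_lt hik)
        rw [czfun_of_ge (le_refl k), czfun_of_lt hik] at h0
        omega
      · unfold sfun
        rw [dif_neg (by omega)]
        omega
    have hP1 : Antitone (mS r k lam S) := by
      intro a b hab
      unfold mS
      rcases lt_or_ge b k with hbk | hbk
      · have hak : a < k := by omega
        have h0 := hanti hab
        rw [czfun_of_lt hbk, czfun_of_lt hak] at h0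
        have := hP2 a
        have := hP2 b
        omega
      · have h0 : conjPart r lam b = 0 := conj_lam_zero hlam hk hbk
        omega
    have hP3 : ∃ i, mS r k lam S i < conjPart r mu i := by
      by_contra hcon
      push_neg at hcon
      exact hbad ⟨hP1, hP2, fun i => hcon i⟩
    obtain ⟨i₀, hi₀⟩ := hP3
    have hi₀k : i₀ < k := by
      by_contra hcon
      push_neg at hcon
      have h0 : conjPart r mu i₀ = 0 :=
        conjPart_eq_zero hmu (le_trans (hle 0) (le_trans hk hcon))
      omega
    apply det_eq_zero_of_block _ ⟨i₀, hi₀k⟩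
    intro i j hti hjt
    apply esymValZ_of_neg
    have h1 : czfun r k lam S (i : ℕ) ≤ czfun r k lam S i₀ := hanti hti
    have h2 : conjPart r mu i₀ ≤ conjPart r mu (j : ℕ) := conjPart_anti hjt
    have h3 : czfun r k lam S i₀ < (conjPart r mu i₀ : ℤ) := by
      rw [czfun_of_lt hi₀k]
      have h4 := hP2 i₀
      unfold mS at hi₀
      omega
    have h5 : (j : ℕ) ≤ (i : ℕ) := le_trans hjt hti
    omega
  · -- not antitone: find an adjacent violation
    have hex : ∃ i, czfun r k lam S i < czfun r k lam S (i + 1) := by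
      by_contra hcon
      push_neg at hcon
      exact hanti (antitone_nat_of_succ_le hcon)
    obtain ⟨i, hi⟩ := hex
    have hik1 : i + 1 ≤ k := by
      by_contra hcon
      push_neg at hcon
      rw [czfun_of_ge (by omega), czfun_of_ge (by omega)] at hi
      omega
    rcases lt_or_eq_of_le hik1 with h | h
    · -- two equal rows
      have hikk : i < k := by omega
      rw [czfun_of_lt hikk, czfun_of_lt h] at hi
      have ha1 := sfun_le_one k S i
      have ha2 := sfun_le_one k S (i + 1)
      have ha3 : conjPart r lam (i + 1) ≤ conjPart r lam i := conjPart_anti (by omega)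
      have hs1 : sfun k S i = 1 := by omega
      have hs0 : sfun k S (i + 1) = 0 := by omega
      have hceq : conjPart r lam (i + 1) = conjPart r lam i := by omega
      apply Matrix.det_zero_of_row_eq (i := (⟨i, hikk⟩ : Fin k)) (j := ⟨i + 1, h⟩)
        (Fin.ne_of_val_ne (show i ≠ i + 1 by omega))
      funext j
      show esymValZ n _ y = esymValZ n _ y
      congr 1
      simp only [show ((⟨i, hikk⟩ : Fin k) : ℕ) = i from rfl,
        show ((⟨i + 1, h⟩ : Fin k) : ℕ) = i + 1 from rfl]
      rw [czfun_of_lt hikk, czfun_of_lt h, hs1, hs0, hceq]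
      push_cast
      ring
    · -- a zero row
      have hikk : i < k := by omega
      rw [czfun_of_lt hikk, czfun_of_ge (by omega)] at hi
      have ha1 := sfun_le_one k S i
      apply Matrix.det_eq_zero_of_row_eq_zero (⟨i, hikk⟩ : Fin k)
      intro j
      apply esymValZ_of_neg
      simp only [show ((⟨i, hikk⟩ : Fin k) : ℕ) = i from rfl]
      rw [czfun_of_lt hikk]
      have hjk : (j : ℕ) < k := j.isLt
      have : (j : ℕ) ≤ i := by omega
      omega

end Det

end Step

/-! ### The generalized dual Jacobi–Trudi identity -/

theorem general_JT {R : Type*} [CommRing R] :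
    ∀ (n r k : ℕ) (x : Fin n → R) (lam mu : ℕ → ℕ),
      Antitone lam → Antitone mu → mu ≤ lam → lam 0 ≤ k →
      SS n r lam mu x = (Matrix.of fun i j : Fin k =>
        esymValZ n ((conjPart r lam i : ℤ) - conjPart r mu j - i + j) x).det := by
  intro n
  induction n with
  | zero => exact fun r k x lam mu hlam hmu hle hk => base_case r k x lam mu hlam hmu hle hk
  | succ n IH =>
    intro r k x lam mu hlam hmu hle hk
    classical
    have hLHS : SS (n + 1) r lam mu x
        = ∑ S ∈ (Finset.univ : Finset (Finset (Fin k))),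
            ∑ T ∈ ((Finset.univ : Finset ({p // p ∈ skewCells r lam mu} → Fin (n + 1))).filter
                (IsFill (n + 1) r lam mu)).filter (fun T => gmap n r k lam mu T = S),
              ∏ c, x (T c) := by
      unfold SS
      exact (Finset.sum_fiberwise_of_maps_to (fun T _ => Finset.mem_univ _) _).symm
    have hterm : ∀ S : Finset (Fin k),
        (∑ T ∈ ((Finset.univ : Finset ({p // p ∈ skewCells r lam mu} → Fin (n + 1))).filter
            (IsFill (n + 1) r lam mu)).filter (fun T => gmap n r k lam mu T = S),
          ∏ c, x (T c))
        = x (Fin.last n) ^ S.card * Matrix.det (fun i j : Fin k =>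
            esymValZ n (czfun r k lam S (i : ℕ) - conjPart r mu (j : ℕ) - i + j)
              (x ∘ Fin.castSucc)) := by
      intro S
      by_cases hgood : Good r k lam mu S
      · rw [fiber_sum hlam hmu hle hk hgood n x]
        congr 1
        have hIH := IH r k (x ∘ Fin.castSucc) (nuS r k lam mu S) mu
          (nuS_antitone hlam hmu hle hk hgood) hmu
          (show mu ≤ nuS r k lam mu S from mu_le_nuS hmu hle hk hgood)
          (le_trans (nuS_le_lam hlam hle hk 0) hk)
        unfold SS at hIH
        rw [hIH]
        congr 1
        funext i j
        show esymValZ n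
            ((conjPart r (nuS r k lam mu S) (i : ℕ) : ℤ) - conjPart r mu (j : ℕ) - i + j)
            (x ∘ Fin.castSucc)
          = esymValZ n (czfun r k lam S (i : ℕ) - conjPart r mu (j : ℕ) - i + j)
            (x ∘ Fin.castSucc)
        rw [czfun_eq_conj_nuS hlam hmu hle hk hgood i]
      · have hempty : ((Finset.univ : Finset ({p // p ∈ skewCells r lam mu} → Fin (n + 1))).filter
            (IsFill (n + 1) r lam mu)).filter (fun T => gmap n r k lam mu T = S) = ∅ := by
          rw [Finset.filter_eq_empty_iff]
          intro T hT hgm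
          exact hgood (hgm ▸ good_gmap hlam hmu hle hk (Finset.mem_filter.1 hT).2)
        rw [hempty, Finset.sum_empty,
          det_czfun_bad hlam hmu hle hk hgood n (x ∘ Fin.castSucc), mul_zero]
    rw [hLHS, Finset.sum_congr rfl (fun S _ => hterm S)]
    -- now the determinant side
    set y : Fin n → R := x ∘ Fin.castSucc with hy
    set xl : R := x (Fin.last n) with hxl
    set A : Fin k → Fin k → R := fun i j =>
      esymValZ n ((conjPart r lam i : ℤ) - conjPart r mu j - i + j) y with hA
    set B : Fin k → Fin k → R := fun i j =>
      esymValZ n ((conjPart r lam i : ℤ) - conjPart r mu j - i + j - 1) y with hB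
    have hdec : (Matrix.of fun i j : Fin k =>
        esymValZ (n + 1) ((conjPart r lam i : ℤ) - conjPart r mu j - i + j) x)
        = (fun i : Fin k => xl • B i) + A := by
      funext i j
      show esymValZ (n + 1) ((conjPart r lam i : ℤ) - conjPart r mu j - i + j) x
        = xl * B i j + A i j
      rw [esymValZ_succ, hA, hB]
      ring
    have hdetf : ∀ M : Matrix (Fin k) (Fin k) R,
        M.det = (Matrix.detRowAlternating :
          (Fin k → R) [⋀^Fin k]→ₗ[R] R).toMultilinearMap M := fun _ => rfl
    rw [hdetf, hdec, MultilinearMap.map_add_univ]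
    apply Finset.sum_congr rfl
    intro s _
    have hpw : s.piecewise (fun i : Fin k => xl • B i) A
        = s.piecewise (fun i => (fun _ : Fin k => xl) i • (s.piecewise B A) i)
            (s.piecewise B A) := by
      funext i
      by_cases hi : i ∈ s
      · rw [Finset.piecewise_eq_of_mem _ _ _ hi, Finset.piecewise_eq_of_mem _ _ _ hi,
          Finset.piecewise_eq_of_mem _ _ _ hi]
      · rw [Finset.piecewise_eq_of_notMem _ _ _ hi, Finset.piecewise_eq_of_notMem _ _ _ hi,
          Finset.piecewise_eq_of_notMem _ _ _ hi]
    rw [hpw, MultilinearMap.map_piecewise_smul]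
    have hBA : s.piecewise B A = fun i j : Fin k =>
        esymValZ n (czfun r k lam s (i : ℕ) - conjPart r mu (j : ℕ) - i + j) y := by
      funext i j
      by_cases hi : i ∈ s
      · rw [Finset.piecewise_eq_of_mem _ _ _ hi, hB]
        show esymValZ n _ y = esymValZ n _ y
        congr 1
        rw [czfun_of_mem i hi]
        ring
      · rw [Finset.piecewise_eq_of_notMem _ _ _ hi, hA]
        show esymValZ n _ y = esymValZ n _ y
        congr 1
        rw [czfun_of_not_mem i hi]
    rw [Finset.prod_const, hBA, smul_eq_mul]
    exact congrArg _ (hdetf _)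

end JT

/-- Dual Jacobi–Trudi identity. -/
theorem skewSchur_eq_det_esym {R : Type*} [CommRing R] (n : ℕ) (x : Fin n → R)
    (lam mu : ℕ → ℕ) (hlam : Antitone lam) (hmu : Antitone mu) (hle : mu ≤ lam)
    (hn : ∀ i, n ≤ i → lam i = 0) (k : ℕ) (hk : lam 0 ≤ k) :
    skewSchur n lam mu x =
      (Matrix.of fun i j : Fin k =>
        esymValZ n ((conjPart n lam i : ℤ) - conjPart n mu j - i + j) x).det := by
  have h := general_JT n n k x lam mu hlam hmu hle hk
  have hbridge : skewSchur n lam mu x = SS n n lam mu x := by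
    unfold skewSchur SS
    congr 1
  rw [hbridge, h]
end

section
/- For n = 2 variables, the skew Schur polynomials f(k) = S_{(k,k)/(k)}(x1,x2) (shape two rows of length k, skewed by one row of length k, i.e. a single row of k boxes shifted) satisfy f(k) = h_k-type recurrence: f(k+2) = (x1+x2) f(k+1) - x1 x2 f(k) for k ≥ 1, but this recurrence fails at k = 0; concretely, with P_k = det of the k×k Toeplitz matrix obtained from the 2-banded Toeplitz matrix (s_{j-i}) by deleting column 2, one has x1x2·P_0 - (x1+x2)P_1 + P_2 ≠ 0 while x1x2·P_1 - (x1+x2)P_2 + P_3 = 0 (as polynomials in x1, x2). -/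
/-- The elementary symmetric polynomials in two variables as the symbol of a 2-banded
Toeplitz matrix: `s 0 = 1`, `s 1 = x1 + x2`, `s 2 = x1 x2`, else `0`. -/
noncomputable def symb2 : ℤ → MvPolynomial (Fin 2) ℤ :=
  fun i => if i = 0 then 1 else if i = 1 then MvPolynomial.X 0 + MvPolynomial.X 1
    else if i = 2 then MvPolynomial.X 0 * MvPolynomial.X 1 else 0

/-- `P k`: the determinant of the leading `k × k` submatrix of the infinite Toeplitz
matrix `(s_{j-i})` after deleting its second column (kept columns `1, 3, 4, 5, ...`,
written `0`-indexed as `0, 2, 3, 4, ...`). -/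
noncomputable def delCol2Det (k : ℕ) : MvPolynomial (Fin 2) ℤ :=
  (Matrix.of fun i j : Fin k =>
    symb2 ((if (j : ℕ) = 0 then 0 else (j : ℤ) + 1) - (i : ℤ))).det

abbrev lamF (m : ℕ) : ℕ → ℕ := fun i => if i < 2 then m else 0
abbrev muF (m : ℕ) : ℕ → ℕ := fun i => if i < 1 then m else 0

lemma mem_cells_s11 {m : ℕ} {p : ℕ × ℕ} :
    p ∈ skewCells 2 ((lamF m)) ((muF m)) ↔ p.1 = 1 ∧ p.2 < m := by
  have hsup : (Finset.range 2).sup (fun i => if i < 2 then m else 0) = m := by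
    rw [show Finset.range 2 = {0, 1} from rfl]; simp
  simp only [skewCells, lamF, muF, Finset.mem_filter, Finset.mem_product, Finset.mem_range, hsup]
  constructor
  · rintro ⟨⟨h1, h2⟩, h3, h4⟩
    split_ifs at h3 h4 with hh hh2 <;> omega
  · rintro ⟨h1, h2⟩
    refine ⟨⟨by omega, h2⟩, ?_, ?_⟩ <;> simp [h1] <;> omega

def cellOf (m j : ℕ) (h : j < m) : {p // p ∈ skewCells 2 ((lamF m)) ((muF m))} :=
  ⟨(1, j), mem_cells_s11.2 ⟨rfl, h⟩⟩

lemma cell_eq {m : ℕ} (c : {p // p ∈ skewCells 2 ((lamF m)) ((muF m))}) :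
    c = cellOf m c.1.2 (mem_cells_s11.1 c.2).2 := by
  apply Subtype.ext
  have h1 := (mem_cells_s11.1 c.2).1
  exact Prod.ext h1 rfl

lemma fin2_cases (x : Fin 2) : x = 0 ∨ x = 1 := by omega

lemma T_mono {m : ℕ} {T : {p // p ∈ skewCells 2 ((lamF m)) ((muF m))} → Fin 2}
    (hT : IsSSYTFilling 2 ((lamF m)) ((muF m)) T) {j j' : ℕ} (hj : j ≤ j') (hj' : j' < m) :
    T (cellOf m j (lt_of_le_of_lt hj hj')) ≤ T (cellOf m j' hj') := by
  induction j', hj using Nat.le_induction with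
  | base => exact le_refl _
  | succ n hn ih =>
    have hnm : n < m := by omega
    exact le_trans (ih hnm) (hT.1 (cellOf m n hnm) (cellOf m (n+1) hj') rfl rfl)

lemma downclosed_eq (S : Finset ℕ) (h : ∀ x ∈ S, ∀ y, y ≤ x → y ∈ S) (j : ℕ) :
    j ∈ S ↔ j < S.card := by
  constructor
  · intro hj
    have hsub : Finset.range (j+1) ⊆ S := fun y hy =>
      h j hj y (by simpa using Nat.lt_succ_iff.1 (Finset.mem_range.1 hy))
    have := Finset.card_le_card hsub
    simpa using this
  · intro hj
    by_contra hns
    have hsub : S ⊆ Finset.range j := fun x hx =>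
      Finset.mem_range.2 (lt_of_not_ge fun hle => hns (h x hx j hle))
    have := Finset.card_le_card hsub
    simp at this; omega

def fillT (m a : ℕ) : {p // p ∈ skewCells 2 ((lamF m)) ((muF m))} → Fin 2 :=
  fun c => if c.1.2 < a then 0 else 1

lemma fillT_isSSYT (m a : ℕ) : IsSSYTFilling 2 ((lamF m)) ((muF m)) (fillT m a) := by
  constructor
  · intro b c hrow hcol
    unfold fillT
    split_ifs with h1 h2 h2 <;> omega
  · intro b c hrow _
    have h1 := (mem_cells_s11.1 b.2).1
    have h2 := (mem_cells_s11.1 c.2).1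
    omega

-- zero count
noncomputable def zCount {m : ℕ} (T : {p // p ∈ skewCells 2 ((lamF m)) ((muF m))} → Fin 2) : ℕ :=
  (Finset.univ.filter (fun c => T c = 0)).card

lemma col_injOn {m : ℕ} (s : Finset {p // p ∈ skewCells 2 ((lamF m)) ((muF m))}) :
    Set.InjOn (fun c : {p // p ∈ skewCells 2 ((lamF m)) ((muF m))} => c.1.2) s := by
  intro a _ b _ hab
  rw [cell_eq a, cell_eq b]
  simp only at hab
  congr 1

lemma zCount_fillT {m a : ℕ} (ha : a ≤ m) : zCount (fillT m a) = a := by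
  unfold zCount
  have hset : (Finset.univ.filter (fun c => fillT m a c = 0)) =
      (Finset.univ.filter (fun c : {p // p ∈ skewCells 2 ((lamF m)) ((muF m))} => c.1.2 < a)) := by
    ext c
    simp only [Finset.mem_filter, Finset.mem_univ, true_and, fillT]
    by_cases h : c.1.2 < a <;> simp [h]
  rw [hset]
  have hbij : (Finset.univ.filter
      (fun c : {p // p ∈ skewCells 2 ((lamF m)) ((muF m))} => c.1.2 < a)).card
      = (Finset.range a).card := by
    apply Finset.card_bij (fun c _ => c.1.2)
    · intro c hc
      simp only [Finset.mem_filter] at hc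
      exact Finset.mem_range.2 hc.2
    · intro c hc c' hc' h
      exact col_injOn _ hc hc' h
    · intro j hj
      have hjm : j < m := lt_of_lt_of_le (Finset.mem_range.1 hj) ha
      refine ⟨cellOf m j hjm, ?_, rfl⟩
      simp only [Finset.mem_filter, Finset.mem_univ, true_and]
      exact Finset.mem_range.1 hj
  rw [hbij, Finset.card_range]

lemma zCount_le {m : ℕ} (T : {p // p ∈ skewCells 2 ((lamF m)) ((muF m))} → Fin 2) :
    zCount T ≤ m := by
  unfold zCount
  have h := Finset.card_le_card_of_injOn
    (fun c : {p // p ∈ skewCells 2 ((lamF m)) ((muF m))} => c.1.2)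
    (fun c _ => Finset.mem_range.2 (mem_cells_s11.1 c.2).2)
    (col_injOn _) (s := Finset.univ.filter (fun c => T c = 0)) (t := Finset.range m)
  simpa using h

lemma fillT_zCount {m : ℕ} {T : {p // p ∈ skewCells 2 ((lamF m)) ((muF m))} → Fin 2}
    (hT : IsSSYTFilling 2 ((lamF m)) ((muF m)) T) : fillT m (zCount T) = T := by
  classical
  set Z := (Finset.univ.filter (fun c => T c = 0)) with hZ
  set S : Finset ℕ := Z.image (fun c => c.1.2) with hS
  have hcard : S.card = Z.card := Finset.card_image_of_injOn (col_injOn _)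
  have hdc : ∀ x ∈ S, ∀ y, y ≤ x → y ∈ S := by
    intro x hx y hy
    simp only [hS, Finset.mem_image] at hx ⊢
    obtain ⟨c, hc, hcx⟩ := hx
    simp only [hZ, Finset.mem_filter] at hc
    have hxm : x < m := by
      rw [← hcx]; exact (mem_cells_s11.1 c.2).2
    have hym : y < m := lt_of_le_of_lt hy hxm
    refine ⟨cellOf m y hym, ?_, rfl⟩
    simp only [hZ, Finset.mem_filter, Finset.mem_univ, true_and]
    have hle : T (cellOf m y (lt_of_le_of_lt (hcx ▸ hy) hxm)) ≤ T (cellOf m x hxm) :=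
      T_mono hT (hcx ▸ hy) hxm
    have hcc : c = cellOf m x hxm := by
      rw [cell_eq c]; congr 1
    rw [hcc] at hc
    have : T (cellOf m y hym) ≤ 0 := by
      calc T (cellOf m y hym) = T (cellOf m y (lt_of_le_of_lt (hcx ▸ hy) hxm)) := rfl
      _ ≤ T (cellOf m x hxm) := hle
      _ = 0 := hc.2
    exact Fin.le_zero_iff.1 this
  have hmem : ∀ j, j ∈ S ↔ j < zCount T := by
    intro j
    rw [downclosed_eq S hdc j, hcard]
    rfl
  funext c
  unfold fillT
  have hc2 : c.1.2 ∈ S ↔ T c = 0 := by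
    constructor
    · intro h
      simp only [hS, Finset.mem_image] at h
      obtain ⟨c', hc', hcc'⟩ := h
      simp only [hZ, Finset.mem_filter] at hc'
      have : c' = c := by
        rw [cell_eq c', cell_eq c]
        simp only [hcc']
      rw [← this]; exact hc'.2
    · intro h
      simp only [hS, Finset.mem_image]
      exact ⟨c, by simp [hZ, Finset.mem_filter, h], rfl⟩
  split_ifs with h
  · exact ((hc2.1 ((hmem c.1.2).2 h))).symm
  · rcases fin2_cases (T c) with h0 | h1
    · exact absurd ((hmem c.1.2).1 (hc2.2 h0)) h
    · exact h1.symm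

lemma cells_eq_image (m : ℕ) :
    skewCells 2 ((lamF m)) ((muF m)) = (Finset.range m).image (fun j => ((1 : ℕ), j)) := by
  ext p
  rw [mem_cells_s11]
  simp only [Finset.mem_image, Finset.mem_range]
  constructor
  · rintro ⟨h1, h2⟩
    exact ⟨p.2, h2, by rw [← h1]⟩
  · rintro ⟨j, hj, rfl⟩
    exact ⟨rfl, hj⟩

lemma prod_fillT (m a : ℕ) (ha : a ≤ m) :
    (∏ c : {p // p ∈ skewCells 2 ((lamF m)) ((muF m))},
      (MvPolynomial.X (fillT m a c) : MvPolynomial (Fin 2) ℤ)) =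
    MvPolynomial.X 0 ^ a * MvPolynomial.X 1 ^ (m - a) := by
  have h0 : ∀ c : {p // p ∈ skewCells 2 ((lamF m)) ((muF m))},
      (MvPolynomial.X (fillT m a c) : MvPolynomial (Fin 2) ℤ) =
      (if c.1.2 < a then MvPolynomial.X 0 else MvPolynomial.X (1 : Fin 2)) := by
    intro c; unfold fillT; split_ifs <;> rfl
  have h1 : (∏ c : {p // p ∈ skewCells 2 ((lamF m)) ((muF m))},
      (MvPolynomial.X (fillT m a c) : MvPolynomial (Fin 2) ℤ)) =
      ∏ p ∈ skewCells 2 ((lamF m)) ((muF m)),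
        (if p.2 < a then MvPolynomial.X 0 else MvPolynomial.X (1 : Fin 2)) :=
    (Finset.prod_congr rfl (fun c _ => h0 c)).trans
      (Finset.prod_coe_sort _ (fun p : ℕ × ℕ => if p.2 < a then MvPolynomial.X 0
        else MvPolynomial.X (1 : Fin 2)))
  rw [h1, cells_eq_image m, Finset.prod_image (by intro x _ y _ h; simpa using h)]
  simp only
  rw [Finset.range_eq_Ico, ← Finset.prod_Ico_consecutive _ (Nat.zero_le a) ha]
  rw [Finset.prod_congr rfl (fun j hj => if_pos (Finset.mem_Ico.1 hj).2),
      Finset.prod_congr (rfl : Finset.Ico a m = _) (fun j hj => if_neg (by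
        have := (Finset.mem_Ico.1 hj).1; omega))]
  simp [Finset.prod_const, Nat.card_Ico]

lemma schur_eq (m : ℕ) :
    skewSchur 2 ((lamF m)) ((muF m)) (MvPolynomial.X : Fin 2 → MvPolynomial (Fin 2) ℤ) =
      ∑ j ∈ Finset.range (m+1), MvPolynomial.X 0 ^ j * MvPolynomial.X 1 ^ (m - j) := by
  unfold skewSchur
  symm
  apply Finset.sum_nbij' (fun a => fillT m a) (fun T => zCount T)
  · intro a ha
    simp only [Finset.mem_filter, Finset.mem_univ, true_and]
    exact fillT_isSSYT m a
  · intro T hT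
    simp only [Finset.mem_range]
    exact Nat.lt_succ_of_le (zCount_le T)
  · intro a ha
    exact zCount_fillT (Nat.lt_succ_iff.1 (Finset.mem_range.1 ha))
  · intro T hT
    simp only [Finset.mem_filter, Finset.mem_univ, true_and] at hT
    exact fillT_zCount hT
  · intro a ha
    exact (prod_fillT m a (Nat.lt_succ_iff.1 (Finset.mem_range.1 ha))).symm


lemma schur_eq' (m : ℕ) :
    skewSchur 2 (fun i => if i < 2 then m else 0) (fun i => if i < 1 then m else 0)
      (MvPolynomial.X : Fin 2 → MvPolynomial (Fin 2) ℤ) =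
      ∑ j ∈ Finset.range (m+1),
        MvPolynomial.X 0 ^ j * MvPolynomial.X 1 ^ (m - j) := schur_eq m

noncomputable def hPoly (m : ℕ) : MvPolynomial (Fin 2) ℤ :=
  ∑ j ∈ Finset.range (m+1), MvPolynomial.X 0 ^ j * MvPolynomial.X 1 ^ (m - j)

lemma hPoly_succ (m : ℕ) :
    hPoly (m+1) = MvPolynomial.X 0 * hPoly m + MvPolynomial.X 1 ^ (m+1) := by
  unfold hPoly
  rw [Finset.sum_range_succ']
  have : ∀ j ∈ Finset.range (m+1),
      (MvPolynomial.X 0 : MvPolynomial (Fin 2) ℤ) ^ (j+1) * MvPolynomial.X 1 ^ (m+1-(j+1)) =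
      MvPolynomial.X 0 * (MvPolynomial.X 0 ^ j * MvPolynomial.X 1 ^ (m-j)) := by
    intro j _
    rw [Nat.succ_sub_succ, pow_succ]
    ring
  rw [Finset.sum_congr rfl this, ← Finset.mul_sum]
  simp [add_comm]


/-- The skew Schur polynomials `f(k) = S_{(k,k)/(k)}(x1,x2)` satisfy the three-term
recurrence `f(k+2) = (x1+x2) f(k+1) - x1 x2 f(k)` for `k ≥ 1`; the corresponding
recurrence for the Toeplitz minors `P_k` (delete column 2) fails at the initial index:
`x1x2·P_0 - (x1+x2) P_1 + P_2 ≠ 0`, while `x1x2·P_1 - (x1+x2) P_2 + P_3 = 0`,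
as polynomials in `x1, x2`. -/
theorem recurrence_threshold_necessary :
    (∀ k : ℕ, 1 ≤ k →
      skewSchur 2 (fun i => if i < 2 then k + 2 else 0)
          (fun i => if i < 1 then k + 2 else 0) (MvPolynomial.X : Fin 2 → MvPolynomial (Fin 2) ℤ) =
        (MvPolynomial.X 0 + MvPolynomial.X 1) *
            skewSchur 2 (fun i => if i < 2 then k + 1 else 0)
              (fun i => if i < 1 then k + 1 else 0) (MvPolynomial.X : Fin 2 → MvPolynomial (Fin 2) ℤ) -
          MvPolynomial.X 0 * MvPolynomial.X 1 *
            skewSchur 2 (fun i => if i < 2 then k else 0)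
              (fun i => if i < 1 then k else 0) (MvPolynomial.X : Fin 2 → MvPolynomial (Fin 2) ℤ)) ∧
    MvPolynomial.X 0 * MvPolynomial.X 1 * delCol2Det 0 -
        (MvPolynomial.X 0 + MvPolynomial.X 1) * delCol2Det 1 + delCol2Det 2 ≠ 0 ∧
    MvPolynomial.X 0 * MvPolynomial.X 1 * delCol2Det 1 -
        (MvPolynomial.X 0 + MvPolynomial.X 1) * delCol2Det 2 + delCol2Det 3 = 0 := by
  refine ⟨?_, ?_, ?_⟩
  · intro k _
    rw [schur_eq' (k+2), schur_eq' (k+1), schur_eq' k]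
    rw [show (∑ j ∈ Finset.range (k+2+1),
        (MvPolynomial.X 0 : MvPolynomial (Fin 2) ℤ) ^ j * MvPolynomial.X 1 ^ (k+2-j)) =
        hPoly (k+2) from rfl,
      show (∑ j ∈ Finset.range (k+1+1),
        (MvPolynomial.X 0 : MvPolynomial (Fin 2) ℤ) ^ j * MvPolynomial.X 1 ^ (k+1-j)) =
        hPoly (k+1) from rfl,
      show (∑ j ∈ Finset.range (k+1),
        (MvPolynomial.X 0 : MvPolynomial (Fin 2) ℤ) ^ j * MvPolynomial.X 1 ^ (k-j)) =
        hPoly k from rfl]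
    have h1 := hPoly_succ k
    have h2 := hPoly_succ (k+1)
    linear_combination h2 - MvPolynomial.X 1 * h1
  · have e0 : delCol2Det 0 = 1 := by simp [delCol2Det, Matrix.det_fin_zero]
    have e1 : delCol2Det 1 = 1 := by simp [delCol2Det, Matrix.det_fin_one, symb2]
    have e2 : delCol2Det 2 = MvPolynomial.X 0 + MvPolynomial.X 1 := by
      simp [delCol2Det, Matrix.det_fin_two, symb2]
    rw [e0, e1, e2]
    have : MvPolynomial.X 0 * MvPolynomial.X 1 * 1 -
        (MvPolynomial.X 0 + MvPolynomial.X 1) * 1 +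
        ((MvPolynomial.X 0 : MvPolynomial (Fin 2) ℤ) + MvPolynomial.X 1) =
        MvPolynomial.X 0 * MvPolynomial.X 1 := by ring
    rw [this]
    exact mul_ne_zero (MvPolynomial.X_ne_zero 0) (MvPolynomial.X_ne_zero 1)
  · have e1 : delCol2Det 1 = 1 := by simp [delCol2Det, Matrix.det_fin_one, symb2]
    have e2 : delCol2Det 2 = MvPolynomial.X 0 + MvPolynomial.X 1 := by
      simp [delCol2Det, Matrix.det_fin_two, symb2]
    have e3 : delCol2Det 3 = (MvPolynomial.X 0 + MvPolynomial.X 1) *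
        (MvPolynomial.X 0 + MvPolynomial.X 1) - MvPolynomial.X 0 * MvPolynomial.X 1 := by
      simp [delCol2Det, Matrix.det_fin_three, symb2]
    rw [e1, e2, e3]
    ring
end

section
/- For the partition λ = (k, k) in n = 3 variables, the Schur polynomials f(k) = S_{(k,k)}(x1,x2,x3) satisfy the length-3 recurrence f(k+3) = (x1x2 + x1x3 + x2x3) f(k+2) - (x1x2·x1x3 + x1x2·x2x3 + x1x3·x2x3) f(k+1) + (x1x2x3)² f(k) for all k ≥ 0. -/
lemma mem_cells_s17 (m : ℕ) (p : ℕ × ℕ) :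
    p ∈ skewCells 3 (fun i => if i < 2 then m else 0) (fun _ => 0) ↔ p.1 < 2 ∧ p.2 < m := by
  have hsup : (Finset.range 3).sup (fun i => if i < 2 then m else 0) = m := by
    have : Finset.range 3 = {0, 1, 2} := by decide
    rw [this]; simp
  unfold skewCells
  rw [Finset.mem_filter, Finset.mem_product, hsup]
  by_cases h : p.1 < 2 <;> simp [h] <;> omega

abbrev Cell (m : ℕ) := {p // p ∈ skewCells 3 (fun i => if i < 2 then m else 0) (fun _ => 0)}

def Tval (m : ℕ) (T : Cell m → Fin 3) (i j : ℕ) : Fin 3 :=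
  if h : (i, j) ∈ skewCells 3 (fun i => if i < 2 then m else 0) (fun _ => 0)
  then T ⟨(i, j), h⟩ else 0

lemma Tval_eq (m : ℕ) (T : Cell m → Fin 3) (c : Cell m) : Tval m T c.1.1 c.1.2 = T c := by
  obtain ⟨⟨i, j⟩, hc⟩ := c
  unfold Tval; rw [dif_pos hc]

lemma row_mono (m : ℕ) (T : Cell m → Fin 3)
    (hT : IsSSYTFilling 3 (fun i => if i < 2 then m else 0) (fun _ => 0) T)
    (i : ℕ) (hi : i < 2) :
    ∀ j j', j ≤ j' → j' < m → Tval m T i j ≤ Tval m T i j' := by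
  intro j j' hjj
  induction j', hjj using Nat.le_induction with
  | base => intro _; exact le_refl _
  | succ j' hjj ih =>
    intro hj'
    have h1 : j' < m := by omega
    refine le_trans (ih h1) ?_
    have hm1 : (i, j') ∈ skewCells 3 (fun i => if i < 2 then m else 0) (fun _ => 0) :=
      (mem_cells_s17 m _).mpr ⟨hi, h1⟩
    have hm2 : (i, j' + 1) ∈ skewCells 3 (fun i => if i < 2 then m else 0) (fun _ => 0) :=
      (mem_cells_s17 m _).mpr ⟨hi, hj'⟩
    have := hT.1 ⟨(i, j'), hm1⟩ ⟨(i, j' + 1), hm2⟩ rfl rfl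
    unfold Tval; rw [dif_pos hm1, dif_pos hm2]; exact this

lemma col_strict (m : ℕ) (T : Cell m → Fin 3)
    (hT : IsSSYTFilling 3 (fun i => if i < 2 then m else 0) (fun _ => 0) T)
    (j : ℕ) (hj : j < m) : Tval m T 0 j < Tval m T 1 j := by
  have hm1 : (0, j) ∈ skewCells 3 (fun i => if i < 2 then m else 0) (fun _ => 0) :=
    (mem_cells_s17 m _).mpr ⟨by omega, hj⟩
  have hm2 : (1, j) ∈ skewCells 3 (fun i => if i < 2 then m else 0) (fun _ => 0) :=
    (mem_cells_s17 m _).mpr ⟨by omega, hj⟩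
  have := hT.2 ⟨(0, j), hm1⟩ ⟨(1, j), hm2⟩ rfl rfl
  unfold Tval; rw [dif_pos hm1, dif_pos hm2]; exact this

def aOf (m : ℕ) (T : Cell m → Fin 3) : ℕ :=
  ((Finset.range m).filter (fun j => Tval m T 0 j = 0)).card

def bOf (m : ℕ) (T : Cell m → Fin 3) : ℕ :=
  ((Finset.range m).filter (fun j => Tval m T 1 j = 1)).card

lemma dcl_eq_range (s : Finset ℕ) (h : ∀ x ∈ s, ∀ y, y ≤ x → y ∈ s) :
    s = Finset.range s.card := by
  ext x
  simp only [Finset.mem_range]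
  constructor
  · intro hx
    have hsub : Finset.range (x + 1) ⊆ s := by
      intro y hy
      exact h x hx y (by simpa [Nat.lt_succ_iff] using Finset.mem_range.mp hy)
    have := Finset.card_le_card hsub
    simp [Finset.card_range] at this
    omega
  · intro hx
    by_contra hxs
    have hsub : s ⊆ Finset.range x := by
      intro y hy
      rw [Finset.mem_range]
      by_contra hyx
      exact hxs (h y hy x (le_of_not_gt hyx))
    have := Finset.card_le_card hsub
    simp [Finset.card_range] at this
    omega


section Char
variable (m : ℕ) (T : Cell m → Fin 3)
  (hT : IsSSYTFilling 3 (fun i => if i < 2 then m else 0) (fun _ => 0) T)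

include hT

omit hT in
lemma fin3_facts : (∀ t : Fin 3, t ≤ 0 → t = 0) ∧ (∀ s t : Fin 3, s < t → t ≠ 0)
    ∧ (∀ t : Fin 3, t ≤ 1 → t ≠ 0 → t = 1) ∧ (∀ s t : Fin 3, s < t → s ≠ 2)
    ∧ (∀ t : Fin 3, t ≠ 0 → t ≠ 2 → t = 1) ∧ (∀ t : Fin 3, t ≠ 1 → t ≠ 0 → t = 2) := by
  decide

lemma zeros_char : aOf m T ≤ m ∧ ∀ j < m, (Tval m T 0 j = 0 ↔ j < aOf m T) := by
  set s := (Finset.range m).filter (fun j => Tval m T 0 j = 0) with hs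
  have hdc : ∀ x ∈ s, ∀ y, y ≤ x → y ∈ s := by
    intro x hx y hyx
    rw [hs, Finset.mem_filter, Finset.mem_range] at hx ⊢
    refine ⟨by omega, ?_⟩
    have h1 : Tval m T 0 y ≤ Tval m T 0 x := row_mono m T hT 0 (by omega) y x hyx hx.1
    rw [hx.2] at h1
    exact (fin3_facts).1 _ h1
  have hr : s = Finset.range (aOf m T) := dcl_eq_range s hdc
  constructor
  · exact Finset.range_subset_range.mp (show Finset.range (aOf m T) ⊆ Finset.range m by rw [← hr]; exact Finset.filter_subset _ _)
  · intro j hj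
    have : j ∈ s ↔ j < aOf m T := by rw [hr, Finset.mem_range]
    rw [hs, Finset.mem_filter, Finset.mem_range] at this
    tauto

lemma ones_char : bOf m T ≤ m ∧ ∀ j < m, (Tval m T 1 j = 1 ↔ j < bOf m T) := by
  have hge : ∀ j < m, Tval m T 1 j ≠ 0 := by
    intro j hj
    exact (fin3_facts).2.1 _ _ (col_strict m T hT j hj)
  set s := (Finset.range m).filter (fun j => Tval m T 1 j = 1) with hs
  have hdc : ∀ x ∈ s, ∀ y, y ≤ x → y ∈ s := by
    intro x hx y hyx
    rw [hs, Finset.mem_filter, Finset.mem_range] at hx ⊢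
    refine ⟨by omega, ?_⟩
    have h1 : Tval m T 1 y ≤ Tval m T 1 x := row_mono m T hT 1 (by omega) y x hyx hx.1
    have h2 := hge y (by omega)
    rw [hx.2] at h1
    exact (fin3_facts).2.2.1 _ h1 h2
  have hr : s = Finset.range (bOf m T) := dcl_eq_range s hdc
  constructor
  · exact Finset.range_subset_range.mp (show Finset.range (bOf m T) ⊆ Finset.range m by rw [← hr]; exact Finset.filter_subset _ _)
  · intro j hj
    have : j ∈ s ↔ j < bOf m T := by rw [hr, Finset.mem_range]
    rw [hs, Finset.mem_filter, Finset.mem_range] at this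
    tauto

lemma row0_one : ∀ j < m, aOf m T ≤ j → Tval m T 0 j = 1 := by
  intro j hj hja
  have h0 : Tval m T 0 j ≠ 0 := by
    intro h
    exact absurd ((zeros_char m T hT).2 j hj |>.mp h) (by omega)
  have h2 : Tval m T 0 j ≠ 2 := (fin3_facts).2.2.2.1 _ _ (col_strict m T hT j hj)
  exact (fin3_facts).2.2.2.2.1 _ h0 h2

lemma row1_two : ∀ j < m, bOf m T ≤ j → Tval m T 1 j = 2 := by
  intro j hj hjb
  have h1 : Tval m T 1 j ≠ 1 := by
    intro h
    exact absurd ((ones_char m T hT).2 j hj |>.mp h) (by omega)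
  have h0 : Tval m T 1 j ≠ 0 := (fin3_facts).2.1 _ _ (col_strict m T hT j hj)
  exact (fin3_facts).2.2.2.2.2 _ h1 h0

lemma b_le_a : bOf m T ≤ aOf m T := by
  by_contra hab
  have ha : aOf m T < m := by
    have := (ones_char m T hT).1; omega
  have h1 : Tval m T 1 (aOf m T) = 1 := ((ones_char m T hT).2 _ ha).mpr (by omega)
  have h0 : Tval m T 0 (aOf m T) = 1 := row0_one m T hT _ ha (le_refl _)
  have := col_strict m T hT _ ha
  rw [h0, h1] at this
  exact absurd this (by decide)

end Char

def toT (m a b : ℕ) : Cell m → Fin 3 :=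
  fun c => if c.1.1 = 0 then (if c.1.2 < a then 0 else 1) else (if c.1.2 < b then 1 else 2)

lemma Tval_toT (m a b i j : ℕ) (hi : i < 2) (hj : j < m) :
    Tval m (toT m a b) i j
      = if i = 0 then (if j < a then 0 else 1) else (if j < b then 1 else 2) := by
  have h : (i, j) ∈ skewCells 3 (fun i => if i < 2 then m else 0) (fun _ => 0) :=
    (mem_cells_s17 m _).mpr ⟨hi, hj⟩
  unfold Tval; rw [dif_pos h]; rfl

lemma toT_isSSYT (m a b : ℕ) (hb : b ≤ a) :
    IsSSYTFilling 3 (fun i => if i < 2 then m else 0) (fun _ => 0) (toT m a b) := by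
  constructor
  · rintro ⟨⟨i, j⟩, hc⟩ ⟨⟨i', j'⟩, hd⟩ h1 h2
    simp only at h1 h2
    subst h1; subst h2
    simp only [toT]
    split_ifs <;> first | decide | tauto | (exfalso; omega)
  · rintro ⟨⟨i, j⟩, hc⟩ ⟨⟨i', j'⟩, hd⟩ h1 h2
    simp only at h1 h2
    have hd2 := (mem_cells_s17 m _).mp hd
    have hi0 : i = 0 := by omega
    have hi1 : i' = 1 := by omega
    subst hi0; subst h2
    simp only [toT, hi1]
    split_ifs <;> first | decide | tauto | (exfalso; omega)

lemma cells_prod (m : ℕ) :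
    skewCells 3 (fun i => if i < 2 then m else 0) (fun _ => 0)
      = Finset.range 2 ×ˢ Finset.range m := by
  ext p
  rw [mem_cells_s17, Finset.mem_product, Finset.mem_range, Finset.mem_range]

section Weights
variable {R : Type*} [CommRing R] (x1 x2 x3 : R)

lemma prod_ite_pow (y z : R) {a m : ℕ} (ha : a ≤ m) :
    ∏ j ∈ Finset.range m, (if j < a then y else z) = y ^ a * z ^ (m - a) := by
  rw [Finset.range_eq_Ico, ← Finset.prod_Ico_consecutive _ (Nat.zero_le a) ha]
  have h1 : ∏ j ∈ Finset.Ico 0 a, (if j < a then y else z) = y ^ a := by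
    rw [Finset.prod_congr rfl (fun j hj => if_pos (Finset.mem_Ico.mp hj).2)]
    simp
  have h2 : ∏ j ∈ Finset.Ico a m, (if j < a then y else z) = z ^ (m - a) := by
    rw [Finset.prod_congr rfl (fun j hj => if_neg (not_lt.mpr (Finset.mem_Ico.mp hj).1))]
    simp
  rw [h1, h2]

lemma weight_toT (m a b : ℕ) (ha : a ≤ m) (hb : b ≤ a) :
    ∏ c : Cell m, ![x1, x2, x3] (toT m a b c)
      = (x1 * x2) ^ b * (x1 * x3) ^ (a - b) * (x2 * x3) ^ (m - a) := by
  have step1 : ∏ c : Cell m, ![x1, x2, x3] (toT m a b c)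
      = ∏ p ∈ skewCells 3 (fun i => if i < 2 then m else 0) (fun _ => 0),
          ![x1, x2, x3]
            (if p.1 = 0 then (if p.2 < a then 0 else 1) else (if p.2 < b then 1 else 2)) := by
    rw [Finset.univ_eq_attach]
    exact Finset.prod_attach _ (fun p : ℕ × ℕ => ![x1, x2, x3]
      (if p.1 = 0 then (if p.2 < a then 0 else 1) else (if p.2 < b then 1 else 2)))
  rw [step1, cells_prod, Finset.prod_product, Finset.prod_range_succ, Finset.prod_range_one]
  have hrow0 : ∏ j ∈ Finset.range m,
      ![x1, x2, x3] (if (0 : ℕ) = 0 then (if j < a then 0 else 1) else (if j < b then 1 else 2))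
      = x1 ^ a * x2 ^ (m - a) := by
    have h : ∀ j ∈ Finset.range m,
        ![x1, x2, x3] (if (0 : ℕ) = 0 then (if j < a then 0 else 1) else (if j < b then 1 else 2))
          = (if j < a then x1 else x2) := by
      intro j _
      simp only [if_pos rfl, apply_ite ![x1, x2, x3]]
      norm_num
    rw [Finset.prod_congr rfl h]
    exact prod_ite_pow x1 x2 ha
  have hrow1 : ∏ j ∈ Finset.range m,
      ![x1, x2, x3] (if (1 : ℕ) = 0 then (if j < a then 0 else 1) else (if j < b then 1 else 2))
      = x2 ^ b * x3 ^ (m - b) := by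
    have h : ∀ j ∈ Finset.range m,
        ![x1, x2, x3] (if (1 : ℕ) = 0 then (if j < a then 0 else 1) else (if j < b then 1 else 2))
          = (if j < b then x2 else x3) := by
      intro j _
      simp only [if_neg (one_ne_zero), apply_ite ![x1, x2, x3]]
      norm_num
      rfl
    rw [Finset.prod_congr rfl h]
    exact prod_ite_pow x2 x3 (le_trans hb ha)
  rw [hrow0, hrow1]
  obtain ⟨c, rfl⟩ : ∃ c, a = b + c := ⟨a - b, by omega⟩
  obtain ⟨d, rfl⟩ : ∃ d, m = b + c + d := ⟨m - (b + c), by omega⟩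
  rw [show b + c - b = c by omega, show b + c + d - (b + c) = d by omega,
    show b + c + d - b = c + d by omega]
  ring

end Weights

lemma aOf_toT (m a b : ℕ) (ha : a ≤ m) (hb : b ≤ a) : aOf m (toT m a b) = a := by
  unfold aOf
  have h1 : (Finset.range m).filter (fun j => Tval m (toT m a b) 0 j = 0)
      = (Finset.range m).filter (fun j => j < a) := by
    apply Finset.filter_congr
    intro j hj
    rw [Tval_toT m a b 0 j (by omega) (Finset.mem_range.mp hj)]
    simp only [if_pos rfl]
    split_ifs with h <;> simp [h] <;> first | omega | tauto
  have h2 : (Finset.range m).filter (fun j => j < a) = Finset.range a := by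
    ext j
    simp only [Finset.mem_filter, Finset.mem_range]
    omega
  rw [h1, h2, Finset.card_range]

lemma bOf_toT (m a b : ℕ) (ha : a ≤ m) (hb : b ≤ a) : bOf m (toT m a b) = b := by
  unfold bOf
  have h1 : (Finset.range m).filter (fun j => Tval m (toT m a b) 1 j = 1)
      = (Finset.range m).filter (fun j => j < b) := by
    apply Finset.filter_congr
    intro j hj
    rw [Tval_toT m a b 1 j (by omega) (Finset.mem_range.mp hj)]
    simp only [if_neg one_ne_zero]
    split_ifs with h <;> simp [h] <;> first | omega | tauto
  have h2 : (Finset.range m).filter (fun j => j < b) = Finset.range b := by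
    ext j
    simp only [Finset.mem_filter, Finset.mem_range]
    omega
  rw [h1, h2, Finset.card_range]


lemma toT_aOf_bOf (m : ℕ) (T : Cell m → Fin 3)
    (hT' : IsSSYTFilling 3 (fun i => if i < 2 then m else 0) (fun _ => 0) T) :
    toT m (aOf m T) (bOf m T) = T := by
  funext c
  obtain ⟨⟨i, j⟩, hc⟩ := c
  obtain ⟨hi2, hj2⟩ := (mem_cells_s17 m _).mp hc
  have key : Tval m (toT m (aOf m T) (bOf m T)) i j = Tval m T i j := by
    rw [Tval_toT m _ _ i j hi2 hj2]
    interval_cases i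
    · rw [if_pos rfl]
      by_cases hja : j < aOf m T
      · rw [if_pos hja, ((zeros_char m T hT').2 j hj2).mpr hja]
      · rw [if_neg hja, row0_one m T hT' j hj2 (by omega)]
    · rw [if_neg one_ne_zero]
      by_cases hjb : j < bOf m T
      · rw [if_pos hjb, ((ones_char m T hT').2 j hj2).mpr hjb]
      · rw [if_neg hjb, row1_two m T hT' j hj2 (by omega)]
  calc (toT m (aOf m T) (bOf m T)) ⟨(i, j), hc⟩
      = Tval m (toT m (aOf m T) (bOf m T)) i j :=
        (Tval_eq m (toT m (aOf m T) (bOf m T)) ⟨(i, j), hc⟩).symm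
    _ = Tval m T i j := key
    _ = T ⟨(i, j), hc⟩ := Tval_eq m T ⟨(i, j), hc⟩

section Bij
variable {R : Type*} [CommRing R] (x1 x2 x3 : R)

lemma schur_eq'_s17 (m : ℕ) :
    ∑ T ∈ (Finset.univ : Finset (Cell m → Fin 3)).filter
        (IsSSYTFilling 3 (fun i => if i < 2 then m else 0) (fun _ => 0)),
      ∏ c, ![x1, x2, x3] (T c)
      = ∑ a ∈ Finset.range (m + 1), ∑ b ∈ Finset.range (a + 1),
          (x1 * x2) ^ b * (x1 * x3) ^ (a - b) * (x2 * x3) ^ (m - a) := by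
  rw [Finset.sum_sigma']
  refine Finset.sum_nbij' (i := fun T => ⟨aOf m T, bOf m T⟩)
    (j := fun p => toT m p.1 p.2) ?_ ?_ ?_ ?_ ?_
  · intro T hT
    have hT' := (Finset.mem_filter.mp hT).2
    have h1 := (zeros_char m T hT').1
    have h2 := b_le_a m T hT'
    exact Finset.mem_sigma.mpr
      ⟨Finset.mem_range.mpr (Nat.lt_succ_of_le h1), Finset.mem_range.mpr (Nat.lt_succ_of_le h2)⟩
  · intro p hp
    rw [Finset.mem_sigma, Finset.mem_range, Finset.mem_range] at hp
    exact Finset.mem_filter.mpr ⟨Finset.mem_univ _, toT_isSSYT m p.1 p.2 (by omega)⟩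
  · intro T hT
    exact toT_aOf_bOf m T (Finset.mem_filter.mp hT).2
  · intro p hp
    rw [Finset.mem_sigma, Finset.mem_range, Finset.mem_range] at hp
    have ha : p.1 ≤ m := by omega
    have hb : p.2 ≤ p.1 := by omega
    obtain ⟨pa, pb⟩ := p
    dsimp only at ha hb ⊢
    rw [aOf_toT m pa pb ha hb, bOf_toT m pa pb ha hb]
  · intro T hT
    have hT' := (Finset.mem_filter.mp hT).2
    have ha := (zeros_char m T hT').1
    have hb := b_le_a m T hT'
    calc ∏ c, ![x1, x2, x3] (T c)
        = ∏ c, ![x1, x2, x3] (toT m (aOf m T) (bOf m T) c) := by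
          rw [toT_aOf_bOf m T hT']
      _ = (x1 * x2) ^ (bOf m T) * (x1 * x3) ^ (aOf m T - bOf m T)
            * (x2 * x3) ^ (m - aOf m T) :=
          weight_toT x1 x2 x3 m (aOf m T) (bOf m T) ha hb

end Bij

section Rec
variable {R : Type*} [CommRing R]

def GG (u v : R) (a : ℕ) : R := ∑ b ∈ Finset.range (a + 1), u ^ b * v ^ (a - b)

def HH (u v w : R) (m : ℕ) : R := ∑ a ∈ Finset.range (m + 1), GG u v a * w ^ (m - a)

lemma GG_succ (u v : R) (a : ℕ) : GG u v (a + 1) = v * GG u v a + u ^ (a + 1) := by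
  unfold GG
  rw [Finset.sum_range_succ, Nat.sub_self, pow_zero, mul_one, Finset.mul_sum]
  congr 1
  refine Finset.sum_congr rfl fun b hb => ?_
  have hb' : b ≤ a := by
    have := Finset.mem_range.mp hb; omega
  have h : a + 1 - b = (a - b) + 1 := by omega
  rw [h, pow_succ]
  ring

lemma HH_succ (u v w : R) (m : ℕ) : HH u v w (m + 1) = w * HH u v w m + GG u v (m + 1) := by
  unfold HH
  rw [Finset.sum_range_succ, Nat.sub_self, pow_zero, mul_one, Finset.mul_sum]
  congr 1
  refine Finset.sum_congr rfl fun a ha => ?_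
  have ha' : a ≤ m := by
    have := Finset.mem_range.mp ha; omega
  have h : m + 1 - a = (m - a) + 1 := by omega
  rw [h, pow_succ]
  ring

lemma HH_rec (u v w : R) (m : ℕ) :
    HH u v w (m + 3) = (u + v + w) * HH u v w (m + 2)
      - (u * v + u * w + v * w) * HH u v w (m + 1) + u * v * w * HH u v w m := by
  linear_combination (HH_succ u v w (m + 2)) + (GG_succ u v (m + 2))
    - (u + v) * (HH_succ u v w (m + 1)) - u * (GG_succ u v (m + 1))
    + u * v * (HH_succ u v w m)

lemma double_eq_HH (x1 x2 x3 : R) (m : ℕ) :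
    (∑ a ∈ Finset.range (m + 1), ∑ b ∈ Finset.range (a + 1),
        (x1 * x2) ^ b * (x1 * x3) ^ (a - b) * (x2 * x3) ^ (m - a))
      = HH (x1 * x2) (x1 * x3) (x2 * x3) m := by
  unfold HH GG
  refine Finset.sum_congr rfl fun a _ => ?_
  rw [Finset.sum_mul]

end Rec


/-- For `λ = (k, k)` in `n = 3` variables, the Schur polynomials
`f(k) = S_{(k,k)}(x1,x2,x3)` satisfy the length-3 linear recurrence with characteristic
polynomial `Π_{1≤i<j≤3} (t - x_i x_j)`:
`f(k+3) = e₁' f(k+2) - e₂' f(k+1) + (x1x2x3)² f(k)` where `e₁', e₂'` are the elementary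
symmetric polynomials in the three pairwise products `x_i x_j`. -/
theorem two_row_schur_recurrence_three_vars {R : Type*} [CommRing R]
    (x1 x2 x3 : R) (k : ℕ) :
    skewSchur 3 (fun i => if i < 2 then k + 3 else 0) (fun _ => 0) ![x1, x2, x3] =
      (x1 * x2 + x1 * x3 + x2 * x3) *
          skewSchur 3 (fun i => if i < 2 then k + 2 else 0) (fun _ => 0) ![x1, x2, x3] -
        (x1 * x2 * (x1 * x3) + x1 * x2 * (x2 * x3) + x1 * x3 * (x2 * x3)) *
          skewSchur 3 (fun i => if i < 2 then k + 1 else 0) (fun _ => 0) ![x1, x2, x3] +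
        (x1 * x2 * x3) ^ 2 *
          skewSchur 3 (fun i => if i < 2 then k else 0) (fun _ => 0) ![x1, x2, x3] := by
  have key : ∀ m : ℕ,
      skewSchur 3 (fun i => if i < 2 then m else 0) (fun _ => 0) ![x1, x2, x3]
        = HH (x1 * x2) (x1 * x3) (x2 * x3) m := by
    intro m
    unfold skewSchur
    rw [schur_eq'_s17 x1 x2 x3 m, double_eq_HH]
  rw [key (k + 3), key (k + 2), key (k + 1), key k]
  linear_combination HH_rec (x1 * x2) (x1 * x3) (x2 * x3) k
end

section
/- Widom's determinant formula: let s_0 = 1, s_1, ..., s_n be complex numbers with s_n ≠ 0, ψ(t) = Σ_{i=0}^n s_i t^i with distinct roots t_1,...,t_n, and let D_c^k be the leading k×k submatrix of the Toeplitz matrix (s_{j-i}) after deleting the first c columns (0 ≤ c ≤ n). Then for all k ≥ 1, det D_c^k = Σ_{σ ⊆ [n], |σ|=n-c} C_σ w_σ^k, where w_σ = (-1)^{n-c} s_n Π_{i∈σ} t_i and C_σ = Π_{i∈σ} t_i^c · Π_{j∈σ, i∉σ} (t_j - t_i)^{-1}. -/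
set_option maxHeartbeats 1000000

open Matrix Finset Equiv BigOperators

namespace WidomAux

variable {R : Type*} [CommRing R] {p m : ℕ}

section Laplace

variable (σ : Finset (Fin (p + m))) (h2 : σ.card = m) (hc : σᶜ.card = p)

noncomputable def shuffle : Equiv.Perm (Fin (p + m)) :=
  Equiv.ofBijective
    (fun x => Sum.elim (fun i => (σᶜ.orderEmbOfFin hc i)) (fun j => (σ.orderEmbOfFin h2 j))
      (finSumFinEquiv.symm x))
    (by
      have hinj : Function.Injective
          (Sum.elim (fun i => (σᶜ.orderEmbOfFin hc i : Fin (p + m)))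
            (fun j => (σ.orderEmbOfFin h2 j : Fin (p + m)))) := by
        rintro (i | j) (i' | j') hxy <;> simp only [Sum.elim_inl, Sum.elim_inr] at hxy
        · rw [(σᶜ.orderEmbOfFin hc).injective hxy]
        · exfalso
          have ha := Finset.orderEmbOfFin_mem σᶜ hc i
          have hb := Finset.orderEmbOfFin_mem σ h2 j'
          rw [hxy] at ha; exact (Finset.mem_compl.mp ha) hb
        · exfalso
          have ha := Finset.orderEmbOfFin_mem σᶜ hc i'
          have hb := Finset.orderEmbOfFin_mem σ h2 j
          rw [← hxy] at ha; exact (Finset.mem_compl.mp ha) hb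
        · rw [(σ.orderEmbOfFin h2).injective hxy]
      rw [← Finite.injective_iff_bijective]
      exact hinj.comp finSumFinEquiv.symm.injective)

@[simp] lemma shuffle_castAdd (i : Fin p) :
    shuffle σ h2 hc (Fin.castAdd m i) = σᶜ.orderEmbOfFin hc i := by
  simp [shuffle]

@[simp] lemma shuffle_natAdd (j : Fin m) :
    shuffle σ h2 hc (Fin.natAdd p j) = σ.orderEmbOfFin h2 j := by
  simp [shuffle]

noncomputable def recompose (pr : Perm (Fin p) × Perm (Fin m)) : Perm (Fin (p + m)) :=
  shuffle σ h2 hc * Equiv.permCongr finSumFinEquiv (Equiv.sumCongr pr.1 pr.2)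

@[simp] lemma recompose_castAdd (pr) (i : Fin p) :
    recompose σ h2 hc pr (Fin.castAdd m i) = σᶜ.orderEmbOfFin hc (pr.1 i) := by
  simp [recompose, Equiv.permCongr_apply, Perm.mul_apply]

@[simp] lemma recompose_natAdd (pr) (j : Fin m) :
    recompose σ h2 hc pr (Fin.natAdd p j) = σ.orderEmbOfFin h2 (pr.2 j) := by
  simp [recompose, Equiv.permCongr_apply, Perm.mul_apply]

lemma sign_recompose (pr) :
    Perm.sign (recompose σ h2 hc pr) =
      Perm.sign (shuffle σ h2 hc) * Perm.sign pr.1 * Perm.sign pr.2 := by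
  simp [recompose, Perm.sign_permCongr, Perm.sign_sumCongr, mul_assoc]


lemma mem_fiber_iff (π : Equiv.Perm (Fin (p + m))) 
    (hπ : (univ.image fun j => π (Fin.natAdd p j)) = σ) :
    (∀ j : Fin m, π (Fin.natAdd p j) ∈ σ) ∧ (∀ i : Fin p, π (Fin.castAdd m i) ∈ σᶜ) := by
  constructor
  · intro j
    rw [← hπ]
    exact Finset.mem_image_of_mem _ (Finset.mem_univ j)
  · intro i
    rw [Finset.mem_compl]
    intro hmem
    rw [← hπ] at hmem
    obtain ⟨j, -, hj⟩ := Finset.mem_image.mp hmem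
    have := π.injective hj
    have h1 : (Fin.natAdd p j : ℕ) = (Fin.castAdd m i : ℕ) := by rw [this]
    simp only [Fin.coe_natAdd, Fin.coe_castAdd] at h1
    omega

noncomputable def decomp1 (π : Equiv.Perm (Fin (p + m)))
    (hmem : ∀ i : Fin p, π (Fin.castAdd m i) ∈ σᶜ) : Equiv.Perm (Fin p) :=
  Equiv.ofBijective (fun i => (σᶜ.orderIsoOfFin hc).symm ⟨π (Fin.castAdd m i), hmem i⟩)
    (by
      rw [← Finite.injective_iff_bijective]
      intro a b hab
      have := (σᶜ.orderIsoOfFin hc).symm.injective hab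
      have h2 := π.injective (congrArg Subtype.val this)
      exact Fin.castAdd_injective _ _ h2)

@[simp] lemma decomp1_spec (π : Equiv.Perm (Fin (p + m)))
    (hmem : ∀ i : Fin p, π (Fin.castAdd m i) ∈ σᶜ) (i : Fin p) :
    (σᶜ.orderEmbOfFin hc) (decomp1 σ hc π hmem i) = π (Fin.castAdd m i) := by
  rw [← Finset.coe_orderIsoOfFin_apply]
  simp [decomp1]

noncomputable def decomp2 (π : Equiv.Perm (Fin (p + m)))
    (hmem : ∀ j : Fin m, π (Fin.natAdd p j) ∈ σ) : Equiv.Perm (Fin m) :=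
  Equiv.ofBijective (fun j => (σ.orderIsoOfFin h2).symm ⟨π (Fin.natAdd p j), hmem j⟩)
    (by
      rw [← Finite.injective_iff_bijective]
      intro a b hab
      have := (σ.orderIsoOfFin h2).symm.injective hab
      have h2 := π.injective (congrArg Subtype.val this)
      exact (Fin.natAddEmb p).injective h2)

@[simp] lemma decomp2_spec (π : Equiv.Perm (Fin (p + m)))
    (hmem : ∀ j : Fin m, π (Fin.natAdd p j) ∈ σ) (j : Fin m) :
    (σ.orderEmbOfFin h2) (decomp2 σ h2 π hmem j) = π (Fin.natAdd p j) := by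
  rw [← Finset.coe_orderIsoOfFin_apply]
  simp [decomp2]

lemma recompose_eq (π : Equiv.Perm (Fin (p + m)))
    (hm2 : ∀ j : Fin m, π (Fin.natAdd p j) ∈ σ) (hm1 : ∀ i : Fin p, π (Fin.castAdd m i) ∈ σᶜ) :
    recompose σ h2 hc (decomp1 σ hc π hm1, decomp2 σ h2 π hm2) = π := by
  apply Equiv.ext
  intro x
  obtain ⟨y, rfl⟩ := finSumFinEquiv.surjective x
  rcases y with i | j
  · rw [finSumFinEquiv_apply_left]
    rw [recompose_castAdd]
    exact decomp1_spec σ hc π hm1 i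
  · rw [finSumFinEquiv_apply_right]
    rw [recompose_natAdd]
    exact decomp2_spec σ h2 π hm2 j

lemma recompose_mem_fiber (pr : Equiv.Perm (Fin p) × Equiv.Perm (Fin m)) :
    (univ.image fun j => recompose σ h2 hc pr (Fin.natAdd p j)) = σ := by
  have h1 : (fun j => recompose σ h2 hc pr (Fin.natAdd p j)) =
      (⇑(σ.orderEmbOfFin h2) ∘ ⇑pr.2) := by
    funext j; rw [Function.comp_apply, recompose_natAdd]
  rw [h1, ← Finset.image_image, Finset.image_univ_equiv]
  apply Finset.coe_injective
  rw [Finset.coe_image, Finset.coe_univ, Set.image_univ, Finset.range_orderEmbOfFin]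

theorem fiber_sum (A : Matrix (Fin (p + m)) (Fin (p + m)) R) :
    (∑ π ∈ univ.filter (fun π : Equiv.Perm (Fin (p + m)) =>
        (univ.image fun j => π (Fin.natAdd p j)) = σ),
        ((Equiv.Perm.sign π : ℤ) : R) * ∏ x, A (π x) x)
      = ((Equiv.Perm.sign (shuffle σ h2 hc) : ℤ) : R) *
          ((Matrix.of fun i i' : Fin p => A (σᶜ.orderEmbOfFin hc i) (Fin.castAdd m i')).det *
           (Matrix.of fun j j' : Fin m => A (σ.orderEmbOfFin h2 j) (Fin.natAdd p j')).det) := by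
  classical
  rw [Finset.sum_bij' (i := fun π hπ =>
        ((decomp1 σ hc π (mem_fiber_iff σ π (Finset.mem_filter.mp hπ).2).2,
          decomp2 σ h2 π (mem_fiber_iff σ π (Finset.mem_filter.mp hπ).2).1) :
          Equiv.Perm (Fin p) × Equiv.Perm (Fin m)))
      (j := fun pr _ => recompose σ h2 hc pr)
      (t := (univ : Finset (Equiv.Perm (Fin p) × Equiv.Perm (Fin m))))
      (g := fun pr => ((Equiv.Perm.sign (recompose σ h2 hc pr) : ℤ) : R) *
        ∏ x, A (recompose σ h2 hc pr x) x)
      (hi := fun _ _ => Finset.mem_univ _)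
      (hj := fun pr _ => Finset.mem_filter.mpr ⟨Finset.mem_univ _, recompose_mem_fiber σ h2 hc pr⟩)
      (left_neg := ?_) (right_neg := ?_) (h := ?_)]
  · -- evaluate the sum over pairs
    rw [Fintype.sum_prod_type]
    have hterm : ∀ (π₁ : Equiv.Perm (Fin p)) (π₂ : Equiv.Perm (Fin m)),
        ((Equiv.Perm.sign (recompose σ h2 hc (π₁, π₂)) : ℤ) : R) *
          ∏ x, A (recompose σ h2 hc (π₁, π₂) x) x
        = ((Equiv.Perm.sign (shuffle σ h2 hc) : ℤ) : R) *
          (((Equiv.Perm.sign π₁ : ℤ) : R) *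
            ∏ i, A ((σᶜ.orderEmbOfFin hc) (π₁ i)) (Fin.castAdd m i)) *
          (((Equiv.Perm.sign π₂ : ℤ) : R) *
            ∏ j, A ((σ.orderEmbOfFin h2) (π₂ j)) (Fin.natAdd p j)) := by
      intro π₁ π₂
      have hprod : (∏ x, A (recompose σ h2 hc (π₁, π₂) x) x)
          = (∏ i, A ((σᶜ.orderEmbOfFin hc) (π₁ i)) (Fin.castAdd m i)) *
            (∏ j, A ((σ.orderEmbOfFin h2) (π₂ j)) (Fin.natAdd p j)) := by
        rw [← Equiv.prod_comp finSumFinEquiv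
          (fun x => A (recompose σ h2 hc (π₁, π₂) x) x), Fintype.prod_sum_type]
        congr 1
        · apply Finset.prod_congr rfl
          intro i _
          rw [finSumFinEquiv_apply_left, recompose_castAdd]
        · apply Finset.prod_congr rfl
          intro j _
          rw [finSumFinEquiv_apply_right, recompose_natAdd]
      rw [hprod, sign_recompose]
      push_cast
      ring
    rw [Finset.sum_congr rfl (fun π₁ _ => Finset.sum_congr rfl (fun π₂ _ => hterm π₁ π₂))]
    rw [Matrix.det_apply', Matrix.det_apply', Finset.sum_mul_sum, Finset.mul_sum]
    apply Finset.sum_congr rfl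
    intro π₁ _
    rw [Finset.mul_sum]
    apply Finset.sum_congr rfl
    intro π₂ _
    simp only [Matrix.of_apply]
    ring
  · intro π hπ
    exact recompose_eq σ h2 hc π _ _
  · intro pr hpr
    apply Prod.ext
    · apply Equiv.ext; intro i
      apply (σᶜ.orderEmbOfFin hc).injective
      rw [decomp1_spec, recompose_castAdd]
    · apply Equiv.ext; intro j
      apply (σ.orderEmbOfFin h2).injective
      rw [decomp2_spec, recompose_natAdd]
  · intro π hπ
    beta_reduce
    rw [recompose_eq σ h2 hc π _ _]

theorem laplace (A : Matrix (Fin (p + m)) (Fin (p + m)) R) :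
    A.det = ∑ σ ∈ Finset.powersetCard m (univ : Finset (Fin (p + m))),
      ∑ π ∈ univ.filter (fun π : Equiv.Perm (Fin (p + m)) =>
        (univ.image fun j => π (Fin.natAdd p j)) = σ),
        ((Equiv.Perm.sign π : ℤ) : R) * ∏ x, A (π x) x := by
  classical
  rw [Matrix.det_apply']
  rw [← Finset.sum_fiberwise_of_maps_to
    (g := fun π : Equiv.Perm (Fin (p + m)) => univ.image fun j => π (Fin.natAdd p j))
    (t := Finset.powersetCard m (univ : Finset (Fin (p + m)))) ?_ _]
  intro π _
  rw [Finset.mem_powersetCard]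
  refine ⟨Finset.subset_univ _, ?_⟩
  beta_reduce
  have hinj : Function.Injective (fun j : Fin m => π (Fin.natAdd p j)) := by
    intro a b hab
    exact (Fin.natAddEmb p).injective (π.injective hab)
  rw [Finset.card_image_of_injective _ hinj]
  simp

end Laplace


section Rot

open Fin.NatCast in
lemma rotpow_apply (w q : ℕ) (x : Fin (w + 1)) :
    ((finRotate (w + 1)) ^ q) x = x + (q : Fin (w + 1)) := by
  induction q generalizing x with
  | zero => simp
  | succ q ih =>
    rw [pow_succ, Equiv.Perm.mul_apply, finRotate_succ_apply, ih]
    push_cast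
    rw [add_assoc, add_comm 1]

open Fin.NatCast in
lemma rotpow_val (w q : ℕ) (x : Fin (w + 1)) :
    ((((finRotate (w + 1)) ^ q) x : Fin (w + 1)) : ℕ) = ((x : ℕ) + q) % (w + 1) := by
  rw [rotpow_apply]
  simp only [Fin.add_def, Fin.val_natCast]
  conv_rhs => rw [Nat.add_mod, Nat.mod_eq_of_lt x.isLt]

lemma rotpow_sign (w q : ℕ) :
    Equiv.Perm.sign ((finRotate (w + 1)) ^ q) = ((-1) ^ w) ^ q := by
  rw [map_pow, sign_finRotate, Nat.add_sub_cancel]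

end Rot

section ProdSplit

variable {M : Type*} [CommMonoid M] {p m : ℕ}

lemma prod_Ioi_eq_prod_ite (N : ℕ) (x : Fin N) (g : Fin N → M) :
    ∏ y ∈ Finset.Ioi x, g y = ∏ y, if x < y then g y else 1 := by
  rw [← Finset.prod_filter]
  apply Finset.prod_congr _ (fun _ _ => rfl)
  ext y; simp

lemma prod_Ioi_block (g : Fin (p + m) → Fin (p + m) → M) :
    (∏ x, ∏ y ∈ Finset.Ioi x, g y x)
      = ((∏ i : Fin p, ∏ j ∈ Finset.Ioi i, g (Fin.castAdd m j) (Fin.castAdd m i))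
          * ∏ i : Fin m, ∏ j ∈ Finset.Ioi i, g (Fin.natAdd p j) (Fin.natAdd p i))
        * ∏ i : Fin p, ∏ j : Fin m, g (Fin.natAdd p j) (Fin.castAdd m i) := by
  rw [Fin.prod_univ_add]
  rw [mul_assoc, mul_comm (∏ i : Fin m, _), ← mul_assoc]
  congr 1
  · rw [← Finset.prod_mul_distrib]
    apply Finset.prod_congr rfl
    intro i _
    rw [prod_Ioi_eq_prod_ite, Fin.prod_univ_add]
    congr 1
    · rw [prod_Ioi_eq_prod_ite]
      apply Finset.prod_congr rfl
      intro j _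
      exact if_congr (by simp only [Fin.lt_def, Fin.coe_castAdd, Fin.coe_natAdd] <;> omega) rfl rfl
    · apply Finset.prod_congr rfl
      intro j _
      refine if_pos ?_
      simp only [Fin.lt_def, Fin.coe_castAdd, Fin.coe_natAdd]
      omega
  · apply Finset.prod_congr rfl
    intro i _
    rw [prod_Ioi_eq_prod_ite, Fin.prod_univ_add]
    have h1 : (∏ j : Fin p, if Fin.natAdd p i < Fin.castAdd m j then g (Fin.castAdd m j) (Fin.natAdd p i) else 1) = 1 := by
      apply Finset.prod_eq_one
      intro j _
      rw [if_neg]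
      simp only [Fin.lt_def, Fin.coe_castAdd, Fin.coe_natAdd]
      omega
    rw [h1, one_mul, prod_Ioi_eq_prod_ite]
    apply Finset.prod_congr rfl
    intro j _
    exact if_congr (by simp only [Fin.lt_def, Fin.coe_castAdd, Fin.coe_natAdd] <;> omega) rfl rfl

end ProdSplit

section Star

lemma image_orderEmbOfFin {q : ℕ} {β : Type*} [LinearOrder β] (s : Finset β) (h : s.card = q) :
    Finset.image (s.orderEmbOfFin h) univ = s := by
  apply Finset.coe_injective
  rw [Finset.coe_image, Finset.coe_univ, Set.image_univ, Finset.range_orderEmbOfFin]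

lemma prod_orderEmbOfFin {q : ℕ} {β : Type*} [LinearOrder β] (s : Finset β) (h : s.card = q)
    {M : Type*} [CommMonoid M] (g : β → M) :
    (∏ j : Fin q, g (s.orderEmbOfFin h j)) = ∏ b ∈ s, g b := by
  conv_rhs => rw [← image_orderEmbOfFin s h]
  rw [Finset.prod_image]
  intro a _ b _ hab
  exact (s.orderEmbOfFin h).injective hab

variable {p m : ℕ} (t : Fin (p + m) → ℂ)
variable (σ : Finset (Fin (p + m))) (h2 : σ.card = m) (hc : σᶜ.card = p)

lemma star_identity :
    ((Equiv.Perm.sign (shuffle σ h2 hc) : ℤ) : ℂ) *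
        ((Matrix.vandermonde (t ∘ σᶜ.orderEmbOfFin hc)).det *
          (Matrix.vandermonde (t ∘ σ.orderEmbOfFin h2)).det) *
        (∏ j ∈ σ, ∏ i ∈ σᶜ, (t j - t i)) = (Matrix.vandermonde t).det := by
  have key : (Matrix.vandermonde (t ∘ shuffle σ h2 hc)).det =
      ((Equiv.Perm.sign (shuffle σ h2 hc) : ℤ) : ℂ) * (Matrix.vandermonde t).det := by
    have : Matrix.vandermonde (t ∘ shuffle σ h2 hc) =
        (Matrix.vandermonde t).submatrix (shuffle σ h2 hc) id := by
      ext i j; simp [Matrix.vandermonde_apply, Matrix.submatrix_apply]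
    rw [this, Matrix.det_permute]
  have split : (Matrix.vandermonde (t ∘ shuffle σ h2 hc)).det =
      ((Matrix.vandermonde (t ∘ σᶜ.orderEmbOfFin hc)).det *
        (Matrix.vandermonde (t ∘ σ.orderEmbOfFin h2)).det) *
        (∏ j ∈ σ, ∏ i ∈ σᶜ, (t j - t i)) := by
    rw [Matrix.det_vandermonde (t ∘ shuffle σ h2 hc)]
    rw [prod_Ioi_block (fun y x => (t ∘ shuffle σ h2 hc) y - (t ∘ shuffle σ h2 hc) x)]
    have hA : (∏ i : Fin p, ∏ j ∈ Finset.Ioi i,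
        ((t ∘ shuffle σ h2 hc) (Fin.castAdd m j) - (t ∘ shuffle σ h2 hc) (Fin.castAdd m i)))
        = (Matrix.vandermonde (t ∘ σᶜ.orderEmbOfFin hc)).det := by
      rw [Matrix.det_vandermonde]
      apply Finset.prod_congr rfl; intro i _
      apply Finset.prod_congr rfl; intro j _
      simp only [Function.comp_apply, shuffle_castAdd]
    have hB : (∏ i : Fin m, ∏ j ∈ Finset.Ioi i,
        ((t ∘ shuffle σ h2 hc) (Fin.natAdd p j) - (t ∘ shuffle σ h2 hc) (Fin.natAdd p i)))
        = (Matrix.vandermonde (t ∘ σ.orderEmbOfFin h2)).det := by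
      rw [Matrix.det_vandermonde]
      apply Finset.prod_congr rfl; intro i _
      apply Finset.prod_congr rfl; intro j _
      simp only [Function.comp_apply, shuffle_natAdd]
    have hC : (∏ i : Fin p, ∏ j : Fin m,
        ((t ∘ shuffle σ h2 hc) (Fin.natAdd p j) - (t ∘ shuffle σ h2 hc) (Fin.castAdd m i)))
        = ∏ j ∈ σ, ∏ i ∈ σᶜ, (t j - t i) := by
      rw [Finset.prod_comm]
      rw [← prod_orderEmbOfFin σ h2 (fun b => ∏ i ∈ σᶜ, (t b - t i))]
      apply Finset.prod_congr rfl; intro j _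
      rw [← prod_orderEmbOfFin σᶜ hc (fun b => t ((σ.orderEmbOfFin h2) j) - t b)]
      apply Finset.prod_congr rfl; intro i _
      simp only [Function.comp_apply, shuffle_castAdd, shuffle_natAdd]
    rw [hA, hB, hC]
  rw [mul_assoc]
  rw [← split, key]
  rcases Int.units_eq_one_or (Equiv.Perm.sign (shuffle σ h2 hc)) with h | h <;> rw [h] <;> push_cast <;> ring

end Star


section Blocks

variable {n k : ℕ}

def posE (k n : ℕ) : (Fin k ⊕ Fin n) ≃ Fin (n + k) :=
  (Equiv.sumComm (Fin k) (Fin n)).trans finSumFinEquiv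

def pos {k n : ℕ} (x : Fin k ⊕ Fin n) : ℕ := ((posE k n) x : ℕ)

@[simp] lemma pos_inl (i : Fin k) : pos (Sum.inl i : Fin k ⊕ Fin n) = n + i := by
  simp [pos, posE]

@[simp] lemma pos_inr (a : Fin n) : pos (Sum.inr a : Fin k ⊕ Fin n) = a := by
  simp [pos, posE]

noncomputable def sband (n : ℕ) (s : ℕ → ℂ) (z : ℤ) : ℂ :=
  if 0 ≤ z ∧ z ≤ n then s z.toNat else 0

noncomputable def HM (n k : ℕ) (s : ℕ → ℂ) : Matrix (Fin k ⊕ Fin n) (Fin k ⊕ Fin n) ℂ :=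
  Matrix.of fun x y => Sum.elim
    (fun i : Fin k => sband n s ((pos y : ℤ) - (i : ℕ)))
    (fun a : Fin n => if pos y = (a : ℕ) then (1 : ℂ) else 0) x

noncomputable def NM (n k : ℕ) (t : Fin n → ℂ) (c : ℕ) :
    Matrix (Fin k ⊕ Fin n) (Fin k ⊕ Fin n) ℂ :=
  Matrix.of fun x y => Sum.elim
    (fun j : Fin k => if pos x = c + (j : ℕ) then (1 : ℂ) else 0)
    (fun r : Fin n => t r ^ pos x) y

noncomputable def AM (n k : ℕ) (s : ℕ → ℂ) (c : ℕ) : Matrix (Fin k) (Fin k) ℂ :=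
  Matrix.of fun i j : Fin k =>
    if 0 ≤ (c : ℤ) + (j : ℕ) - (i : ℕ) ∧ (c : ℤ) + (j : ℕ) - (i : ℕ) ≤ n
    then s (((c : ℤ) + (j : ℕ) - (i : ℕ)).toNat) else 0

lemma AM_eq_sband (s : ℕ → ℂ) (c : ℕ) (i j : Fin k) :
    AM n k s c i j = sband n s ((c : ℤ) + (j : ℕ) - (i : ℕ)) := rfl

noncomputable def WM (n : ℕ) (t : Fin n → ℂ) : Matrix (Fin n) (Fin n) ℂ :=
  Matrix.of fun a r => t r ^ (a : ℕ)

noncomputable def MM (n k c : ℕ) (t : Fin n → ℂ) : Matrix (Fin n) (Fin n) ℂ :=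
  Matrix.of fun a r => t r ^ (if (a : ℕ) < c then (a : ℕ) else (a : ℕ) + k)

lemma sum_pos (f : ℕ → ℂ) :
    ∑ x : Fin k ⊕ Fin n, f (pos x) = ∑ q ∈ Finset.range (n + k), f q := by
  rw [← Fin.sum_univ_eq_sum_range]
  exact Equiv.sum_comp (posE k n) (fun q : Fin (n + k) => f (q : ℕ))

lemma sum_pos_ite (q0 : ℕ) (hq : q0 < n + k) (f : ℕ → ℂ) :
    ∑ x : Fin k ⊕ Fin n, (if pos x = q0 then f (pos x) else 0) = f q0 := by
  rw [sum_pos (fun q => if q = q0 then f q else 0)]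
  rw [Finset.sum_ite_eq' (Finset.range (n + k)) q0 f]
  rw [if_pos (Finset.mem_range.mpr hq)]

lemma kernel_sum (s : ℕ → ℂ) (t : Fin n → ℂ)
    (hroot : ∀ r, ∑ j ∈ Finset.range (n + 1), s j * t r ^ j = 0) (i : Fin k) (r : Fin n) :
    ∑ x : Fin k ⊕ Fin n, sband n s ((pos x : ℤ) - (i : ℕ)) * t r ^ pos x = 0 := by
  rw [sum_pos (fun q => sband n s ((q : ℤ) - (i : ℕ)) * t r ^ q)]
  have hsub : Finset.Ico (i : ℕ) ((i : ℕ) + n + 1) ⊆ Finset.range (n + k) := by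
    intro q hq
    rw [Finset.mem_Ico] at hq
    rw [Finset.mem_range]
    have := i.isLt
    omega
  rw [← Finset.sum_subset hsub ?van]
  case van =>
    intro q _ hq2
    rw [Finset.mem_Ico] at hq2
    have hz : sband n s ((q : ℤ) - (i : ℕ)) = 0 := by
      rw [sband, if_neg]
      push_cast
      omega
    rw [hz, zero_mul]
  rw [show (i : ℕ) + n + 1 = (i : ℕ) + (n + 1) by omega, Finset.sum_Ico_eq_sum_range]
  rw [show (i : ℕ) + (n + 1) - (i : ℕ) = n + 1 by omega]
  have : ∀ j ∈ Finset.range (n + 1),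
      sband n s ((((i : ℕ) + j : ℕ) : ℤ) - (i : ℕ)) * t r ^ ((i : ℕ) + j)
        = t r ^ (i : ℕ) * (s j * t r ^ j) := by
    intro j hj
    rw [Finset.mem_range] at hj
    have h1 : (((i : ℕ) + j : ℕ) : ℤ) - (i : ℕ) = (j : ℤ) := by push_cast; ring
    rw [h1, sband, if_pos (by constructor <;> omega), Int.toNat_natCast, pow_add]
    ring
  rw [Finset.sum_congr rfl this, ← Finset.mul_sum, hroot r, mul_zero]

lemma HN_eq (s : ℕ → ℂ) (t : Fin n → ℂ)
    (hroot : ∀ r, ∑ j ∈ Finset.range (n + 1), s j * t r ^ j = 0) (c : ℕ) (hcn : c ≤ n) :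
    HM n k s * NM n k t c =
      Matrix.fromBlocks (AM n k s c) 0
        (Matrix.of fun (a : Fin n) (j : Fin k) => if (a : ℕ) = c + (j : ℕ) then (1 : ℂ) else 0)
        (WM n t) := by
  ext x y
  rcases x with i | a <;> rcases y with j | r <;>
    simp only [Matrix.mul_apply, HM, NM, Matrix.of_apply, Sum.elim_inl, Sum.elim_inr,
      Matrix.fromBlocks_apply₁₁, Matrix.fromBlocks_apply₁₂, Matrix.fromBlocks_apply₂₁,
      Matrix.fromBlocks_apply₂₂]
  · -- (inl i, inl j)
    have hlt : c + (j : ℕ) < n + k := by have := j.isLt; omega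
    have : ∀ z : Fin k ⊕ Fin n,
        sband n s ((pos z : ℤ) - (i : ℕ)) * (if pos z = c + (j : ℕ) then (1 : ℂ) else 0)
          = if pos z = c + (j : ℕ) then sband n s ((pos z : ℤ) - (i : ℕ)) else 0 := by
      intro z
      split_ifs <;> simp
    rw [Finset.sum_congr rfl (fun z _ => this z)]
    rw [sum_pos_ite (c + (j : ℕ)) hlt (fun q => sband n s ((q : ℤ) - (i : ℕ)))]
    rw [AM_eq_sband]
    congr 1 <;> omega
  · -- (inl i, inr r)
    exact kernel_sum s t hroot i r
  · -- (inr a, inl j)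
    have hlt : c + (j : ℕ) < n + k := by have := j.isLt; omega
    have : ∀ z : Fin k ⊕ Fin n,
        (if pos z = (a : ℕ) then (1 : ℂ) else 0) * (if pos z = c + (j : ℕ) then (1 : ℂ) else 0)
          = if pos z = c + (j : ℕ) then (if (a : ℕ) = c + (j : ℕ) then (1 : ℂ) else 0) else 0 := by
      intro z
      rcases eq_or_ne (pos z) (c + (j : ℕ)) with h | h
      · rw [if_pos h, if_pos h, mul_one]
        exact if_congr (by rw [h, eq_comm]) rfl rfl
      · rw [if_neg h, if_neg h, mul_zero]
    rw [Finset.sum_congr rfl (fun z _ => this z)]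
    rw [sum_pos_ite (c + (j : ℕ)) hlt (fun _ => if (a : ℕ) = c + (j : ℕ) then (1 : ℂ) else 0)]
    all_goals rfl
  · -- (inr a, inr r)
    have hlt : (a : ℕ) < n + k := by have := a.isLt; omega
    have : ∀ z : Fin k ⊕ Fin n,
        (if pos z = (a : ℕ) then (1 : ℂ) else 0) * t r ^ pos z
          = if pos z = (a : ℕ) then t r ^ pos z else 0 := by
      intro z
      split_ifs <;> simp
    rw [Finset.sum_congr rfl (fun z _ => this z)]
    rw [sum_pos_ite (a : ℕ) hlt (fun q => t r ^ q)]
    all_goals rfl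

lemma detA1 (s : ℕ → ℂ) : (AM n k s n).det = s n ^ k := by
  have htri : (AM n k s n).BlockTriangular OrderDual.toDual := by
    intro i j hij
    have hij' : (i : ℕ) < (j : ℕ) := hij
    rw [AM_eq_sband, sband, if_neg]
    push_cast
    omega
  rw [Matrix.det_of_lowerTriangular _ htri]
  have : ∀ i : Fin k, AM n k s n i i = s n := by
    intro i
    rw [AM_eq_sband, sband, if_pos (by constructor <;> push_cast <;> omega)]
    congr 1
    push_cast
    omega
  rw [Finset.prod_congr rfl (fun i _ => this i), Finset.prod_const, Finset.card_univ,
    Fintype.card_fin]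

lemma detN1 (t : Fin n → ℂ) : (NM n k t n).det = (WM n t).det := by
  have : NM n k t n = Matrix.fromBlocks 1
      (Matrix.of fun (i : Fin k) (r : Fin n) => t r ^ (n + (i : ℕ))) 0 (WM n t) := by
    ext x y
    rcases x with i | a <;> rcases y with j | r
    · show (if pos (Sum.inl i : Fin k ⊕ Fin n) = n + (j : ℕ) then (1 : ℂ) else 0)
        = (1 : Matrix (Fin k) (Fin k) ℂ) i j
      rw [pos_inl, Matrix.one_apply]
      exact if_congr (by rw [Fin.ext_iff]; omega) rfl rfl
    · show t r ^ pos (Sum.inl i : Fin k ⊕ Fin n) = t r ^ (n + (i : ℕ))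
      rw [pos_inl]
    · show (if pos (Sum.inr a : Fin k ⊕ Fin n) = n + (j : ℕ) then (1 : ℂ) else 0)
        = (0 : Matrix (Fin n) (Fin k) ℂ) a j
      rw [pos_inr, Matrix.zero_apply, if_neg]
      have := a.isLt
      omega
    · show t r ^ pos (Sum.inr a : Fin k ⊕ Fin n) = WM n t a r
      rw [pos_inr]
      rfl
  rw [this, Matrix.det_fromBlocks_zero₂₁, Matrix.det_one, one_mul]

lemma detW (t : Fin n → ℂ) : (WM n t).det = (Matrix.vandermonde t).det := by
  have : WM n t = (Matrix.vandermonde t)ᵀ := by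
    ext a r
    rfl
  rw [this, Matrix.det_transpose]

end Blocks


section DetN0

lemma detN0 (c m k' : ℕ) (t : Fin (c + m) → ℂ) :
    (NM (c + m) (k' + 1) t c).det
      = ((-1 : ℂ) ^ (m * (k' + 1))) * (MM (c + m) (k' + 1) c t).det := by
  classical
  suffices H : ∀ (n k w : ℕ), n = c + m → k = k' + 1 → w = m + k' →
      ∀ t : Fin n → ℂ, (NM n k t c).det = ((-1 : ℂ) ^ (m * k)) * (MM n k c t).det by
    exact H (c + m) (k' + 1) (m + k') rfl rfl rfl t
  intro n k w hn hk hw t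
  have h1 : n + k = c + (w + 1) := by omega
  set e₁ : Fin (n + k) ≃ (Fin c ⊕ Fin (w + 1)) := (finCongr h1).trans finSumFinEquiv.symm with he₁
  have hk1 : k = k' + 1 := hk
  set g : Equiv.Perm (Fin (w + 1)) := (finRotate (w + 1)) ^ k with hg
  set π : Equiv.Perm (Fin (n + k)) :=
    e₁.symm.permCongr (Equiv.sumCongr (Equiv.refl (Fin c)) g) with hπ
  -- characterize e₁
  have he₁low : ∀ q : Fin (n + k), (hq : (q : ℕ) < c) → e₁ q = Sum.inl ⟨(q : ℕ), hq⟩ := by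
    intro q hq
    rw [he₁]
    simp only [Equiv.trans_apply]
    rw [Equiv.symm_apply_eq, finSumFinEquiv_apply_left]
    apply Fin.ext
    simp
  have he₁high : ∀ q : Fin (n + k), (hq : c ≤ (q : ℕ)) → e₁ q = Sum.inr ⟨(q : ℕ) - c, by have := q.isLt; omega⟩ := by
    intro q hq
    rw [he₁]
    simp only [Equiv.trans_apply]
    rw [Equiv.symm_apply_eq, finSumFinEquiv_apply_right]
    apply Fin.ext
    simp [Fin.coe_natAdd]
    omega
  have hsymm_l : ∀ b : Fin c, ((e₁.symm (Sum.inl b) : Fin (n + k)) : ℕ) = (b : ℕ) := by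
    intro b
    rw [he₁]
    simp [finSumFinEquiv_apply_left]
  have hsymm_r : ∀ y : Fin (w + 1), ((e₁.symm (Sum.inr y) : Fin (n + k)) : ℕ) = c + (y : ℕ) := by
    intro y
    rw [he₁]
    simp [finSumFinEquiv_apply_right, Fin.coe_natAdd]
  have hgval : ∀ y : Fin (w + 1), ((g y : Fin (w + 1)) : ℕ) = ((y : ℕ) + k) % (w + 1) := by
    intro y
    rw [hg]
    exact rotpow_val w k y
  -- three value lemmas for π
  have hlow : ∀ q : Fin (n + k), (q : ℕ) < c → (π q : ℕ) = (q : ℕ) := by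
    intro q hq
    rw [hπ]
    rw [Equiv.permCongr_apply, Equiv.symm_symm, he₁low q hq]
    simp only [Equiv.sumCongr_apply, Sum.map_inl, Equiv.refl_apply]
    rw [hsymm_l]
  have hmid : ∀ q : Fin (n + k), c ≤ (q : ℕ) → (q : ℕ) < n → (π q : ℕ) = (q : ℕ) + k := by
    intro q hq1 hq2
    rw [hπ]
    rw [Equiv.permCongr_apply, Equiv.symm_symm, he₁high q hq1]
    simp only [Equiv.sumCongr_apply, Sum.map_inr]
    rw [hsymm_r, hgval]
    simp only
    rw [Nat.mod_eq_of_lt (by omega)]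
    omega
  have hhigh : ∀ q : Fin (n + k), n ≤ (q : ℕ) → (π q : ℕ) = (q : ℕ) - m := by
    intro q hq1
    have hq2 := q.isLt
    rw [hπ]
    rw [Equiv.permCongr_apply, Equiv.symm_symm, he₁high q (by omega)]
    simp only [Equiv.sumCongr_apply, Sum.map_inr]
    rw [hsymm_r, hgval]
    simp only
    have hval : ((q : ℕ) - c + k) = (w + 1) + ((q : ℕ) - n) := by omega
    rw [hval, Nat.add_mod_left, Nat.mod_eq_of_lt (by omega)]
    omega
  set ee : Equiv.Perm (Fin k ⊕ Fin n) := (posE k n).symm.permCongr π with hee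
  have hkey : ∀ x : Fin k ⊕ Fin n, pos (ee x) = ((π ((posE k n) x) : Fin (n + k)) : ℕ) := by
    intro x
    rw [hee, Equiv.permCongr_apply, Equiv.symm_symm]
    show ((posE k n) ((posE k n).symm (π ((posE k n) x))) : ℕ) = _
    rw [Equiv.apply_symm_apply]
  have heel : ∀ j : Fin k, pos (ee (Sum.inl j)) = c + (j : ℕ) := by
    intro j
    rw [hkey, hhigh _ (by rw [show (((posE k n) (Sum.inl j) : Fin (n + k)) : ℕ) = pos (Sum.inl j) from rfl, pos_inl]; omega)]
    rw [show (((posE k n) (Sum.inl j) : Fin (n + k)) : ℕ) = pos (Sum.inl j) from rfl, pos_inl]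
    omega
  have heer : ∀ a : Fin n, pos (ee (Sum.inr a))
      = (if (a : ℕ) < c then (a : ℕ) else (a : ℕ) + k) := by
    intro a
    have hval : (((posE k n) (Sum.inr a) : Fin (n + k)) : ℕ) = (a : ℕ) := by
      rw [show (((posE k n) (Sum.inr a) : Fin (n + k)) : ℕ) = pos (Sum.inr a) from rfl, pos_inr]
    by_cases hac : (a : ℕ) < c
    · rw [if_pos hac, hkey, hlow _ (by rw [hval]; omega), hval]
    · rw [if_neg hac, hkey, hmid _ (by rw [hval]; omega) (by rw [hval]; exact a.isLt), hval]
  -- the reordered matrix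
  have hblock : (NM n k t c).submatrix ee id = Matrix.fromBlocks 1
      (Matrix.of fun (j : Fin k) (r : Fin n) => t r ^ (c + (j : ℕ))) 0 (MM n k c t) := by
    ext x y
    rcases x with j' | a <;> rcases y with j | r
    · show (if pos (ee (Sum.inl j')) = c + (j : ℕ) then (1 : ℂ) else 0)
        = (1 : Matrix (Fin k) (Fin k) ℂ) j' j
      rw [heel, Matrix.one_apply]
      exact if_congr (by rw [Fin.ext_iff]; omega) rfl rfl
    · show t r ^ pos (ee (Sum.inl j')) = t r ^ (c + (j' : ℕ))
      rw [heel]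
    · show (if pos (ee (Sum.inr a)) = c + (j : ℕ) then (1 : ℂ) else 0)
        = (0 : Matrix (Fin n) (Fin k) ℂ) a j
      rw [heer, Matrix.zero_apply, if_neg]
      have := j.isLt
      split_ifs <;> omega
    · show t r ^ pos (ee (Sum.inr a)) = MM n k c t a r
      rw [heer]
      rfl
  have hdp := Matrix.det_permute ee (NM n k t c)
  rw [hblock, Matrix.det_fromBlocks_zero₂₁, Matrix.det_one, one_mul] at hdp
  -- compute the sign
  have hsign : ((Equiv.Perm.sign ee : ℤ) : ℂ) = (-1 : ℂ) ^ (m * k) := by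
    have h1 : Equiv.Perm.sign ee = Equiv.Perm.sign π := Equiv.Perm.sign_permCongr _ _
    have h2 : Equiv.Perm.sign π = Equiv.Perm.sign g := by
      rw [hπ, Equiv.Perm.sign_permCongr, Equiv.Perm.sign_sumCongr]
      simp
    have h3 : Equiv.Perm.sign g = ((-1) ^ w) ^ k := by
      rw [hg]
      exact rotpow_sign w k
    rw [h1, h2, h3]
    push_cast
    rw [← pow_mul]
    rw [show w * k = m * k + k' * (k' + 1) by rw [hw, hk]; ring]
    rw [pow_add]
    have : ((-1 : ℂ)) ^ (k' * (k' + 1)) = 1 := Even.neg_one_pow (Nat.even_mul_succ_self k')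
    rw [this, mul_one]
  have hsq : ((-1 : ℂ) ^ (m * k)) * ((-1 : ℂ) ^ (m * k)) = 1 := by
    rw [← pow_add]
    exact Even.neg_one_pow ⟨m * k, rfl⟩
  have hfin : ((-1 : ℂ) ^ (m * k)) * (NM n k t c).det = (MM n k c t).det := by
    rw [← hsign]
    exact_mod_cast hdp.symm
  calc (NM n k t c).det = ((-1 : ℂ) ^ (m * k)) * (((-1 : ℂ) ^ (m * k)) * (NM n k t c).det) := by
        rw [← mul_assoc, hsq, one_mul]
    _ = ((-1 : ℂ) ^ (m * k)) * (MM n k c t).det := by rw [hfin]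

end DetN0


section DetM

lemma detM (c m k : ℕ) (t : Fin (c + m) → ℂ) (ht : Function.Injective t) :
    (MM (c + m) k c t).det
      = ∑ σ ∈ Finset.powersetCard m (univ : Finset (Fin (c + m))),
          ((∏ r ∈ σ, t r ^ (k + c)) *
            (∏ j ∈ σ, ∏ i ∈ univ \ σ, (t j - t i)⁻¹)) * (Matrix.vandermonde t).det := by
  classical
  rw [← Matrix.det_transpose (MM (c + m) k c t)]
  rw [laplace (p := c) (m := m) ((MM (c + m) k c t)ᵀ)]
  apply Finset.sum_congr rfl
  intro σ hσ
  have h2 : σ.card = m := (Finset.mem_powersetCard.mp hσ).2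
  have hcc : σᶜ.card = c := by
    rw [Finset.card_compl, h2, Fintype.card_fin]
    omega
  rw [fiber_sum σ h2 hcc ((MM (c + m) k c t)ᵀ)]
  have hlow : (Matrix.of fun i i' : Fin c =>
      ((MM (c + m) k c t)ᵀ) (σᶜ.orderEmbOfFin hcc i) (Fin.castAdd m i'))
      = Matrix.vandermonde (t ∘ σᶜ.orderEmbOfFin hcc) := by
    ext i i'
    show MM (c + m) k c t (Fin.castAdd m i') (σᶜ.orderEmbOfFin hcc i) = _
    show t (σᶜ.orderEmbOfFin hcc i) ^
        (if ((Fin.castAdd m i' : Fin (c + m)) : ℕ) < c then ((Fin.castAdd m i' : Fin (c + m)) : ℕ)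
          else ((Fin.castAdd m i' : Fin (c + m)) : ℕ) + k) = _
    rw [if_pos (by simp only [Fin.coe_castAdd]; exact i'.isLt)]
    rfl
  have hhigh : (Matrix.of fun j j' : Fin m =>
      ((MM (c + m) k c t)ᵀ) (σ.orderEmbOfFin h2 j) (Fin.natAdd c j'))
      = Matrix.of fun j j' : Fin m =>
          (t (σ.orderEmbOfFin h2 j) ^ (k + c)) * Matrix.vandermonde (t ∘ σ.orderEmbOfFin h2) j j' := by
    ext j j'
    show t (σ.orderEmbOfFin h2 j) ^
        (if ((Fin.natAdd c j' : Fin (c + m)) : ℕ) < c then ((Fin.natAdd c j' : Fin (c + m)) : ℕ)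
          else ((Fin.natAdd c j' : Fin (c + m)) : ℕ) + k) = _
    rw [if_neg (by simp [Fin.coe_natAdd])]
    show t (σ.orderEmbOfFin h2 j) ^ ((c + (j' : ℕ)) + k)
      = t (σ.orderEmbOfFin h2 j) ^ (k + c) * t (σ.orderEmbOfFin h2 j) ^ (j' : ℕ)
    rw [← pow_add]
    congr 1
    omega
  rw [hlow, hhigh]
  rw [Matrix.det_mul_column (fun j => t (σ.orderEmbOfFin h2 j) ^ (k + c))
    (Matrix.vandermonde (t ∘ σ.orderEmbOfFin h2))]
  have hP : (∏ j : Fin m, t (σ.orderEmbOfFin h2 j) ^ (k + c)) = ∏ r ∈ σ, t r ^ (k + c) :=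
    prod_orderEmbOfFin σ h2 (fun b => t b ^ (k + c))
  have hcross : (∏ j ∈ σ, ∏ i ∈ σᶜ, (t j - t i)) ≠ 0 := by
    rw [Finset.prod_ne_zero_iff]
    intro j hj
    rw [Finset.prod_ne_zero_iff]
    intro i hi
    apply sub_ne_zero_of_ne
    intro hji
    have hj2 := ht hji
    rw [hj2] at hj
    exact (Finset.mem_compl.mp hi) hj
  have hQ : (∏ j ∈ σ, ∏ i ∈ univ \ σ, (t j - t i)⁻¹)
      = (∏ j ∈ σ, ∏ i ∈ σᶜ, (t j - t i))⁻¹ := by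
    rw [← Finset.prod_inv_distrib]
    apply Finset.prod_congr rfl
    intro j _
    rw [← Finset.prod_inv_distrib, Finset.compl_eq_univ_sdiff]
  have hstar := star_identity t σ h2 hcc
  rw [hP, hQ, ← hstar]
  field_simp

end DetM

end WidomAux



/-- Widom's determinant formula.  Let `s_0 = 1, s_1, ..., s_n` be complex numbers with
`s_n ≠ 0`, let `ψ(t) = Σ_{i=0}^n s_i t^i` have `n` distinct roots `t_1, ..., t_n`, and
for `0 ≤ c ≤ n` let `D_c^k` be the leading `k × k` submatrix of the banded Toeplitz
matrix `(s_{j-i})` (with `s_i = 0` for `i < 0` or `i > n`) after deleting its first `c`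
columns, i.e. the matrix with `(i, j)` entry `s_{c + j - i}`.  Then for all `k ≥ 1`,
`det D_c^k = Σ_{σ ⊆ [n], |σ| = n-c} C_σ w_σ^k` with
`w_σ = (-1)^{n-c} s_n Π_{i∈σ} t_i` and
`C_σ = Π_{i∈σ} t_i^c · Π_{j∈σ, i∉σ} (t_j - t_i)⁻¹`. -/
theorem widom_determinant_formula (n c : ℕ) (hc : c ≤ n) (s : ℕ → ℂ) (h0 : s 0 = 1)
    (hn : s n ≠ 0) (t : Fin n → ℂ) (ht : Function.Injective t)
    (hroot : ∀ i, ∑ j ∈ Finset.range (n + 1), s j * t i ^ j = 0)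
    (k : ℕ) (hk : 1 ≤ k) :
    (Matrix.of fun i j : Fin k =>
        if 0 ≤ (c : ℤ) + j - i ∧ (c : ℤ) + j - i ≤ n then s ((c : ℤ) + j - i).toNat
        else 0).det =
      ∑ σ ∈ Finset.powersetCard (n - c) (Finset.univ : Finset (Fin n)),
        ((∏ i ∈ σ, t i ^ c) * ∏ j ∈ σ, ∏ i ∈ Finset.univ \ σ, (t j - t i)⁻¹) *
          ((-1 : ℂ) ^ (n - c) * s n * ∏ i ∈ σ, t i) ^ k := by
  classical
  obtain ⟨m, rfl⟩ : ∃ m, n = c + m := ⟨n - c, by omega⟩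
  obtain ⟨k', rfl⟩ : ∃ k', k = k' + 1 := ⟨k - 1, by omega⟩
  open WidomAux in
  show (WidomAux.AM (c + m) (k' + 1) s c).det = _
  have hVD : (Matrix.vandermonde t).det ≠ 0 := by
    rw [Matrix.det_vandermonde, Finset.prod_ne_zero_iff]
    intro i _
    rw [Finset.prod_ne_zero_iff]
    intro j hj
    apply sub_ne_zero_of_ne
    intro hji
    have hij := ht hji
    rw [hij] at hj
    exact absurd (Finset.mem_Ioi.mp hj) (lt_irrefl _)
  have hW := WidomAux.detW (t := t)
  have hWne : (WidomAux.WM (c + m) t).det ≠ 0 := by rw [hW]; exact hVD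
  have hdet1 := congrArg Matrix.det (WidomAux.HN_eq (k := k' + 1) s t hroot (c + m) le_rfl)
  rw [Matrix.det_mul, Matrix.det_fromBlocks_zero₁₂, WidomAux.detA1, WidomAux.detN1] at hdet1
  have hH : (WidomAux.HM (c + m) (k' + 1) s).det = s (c + m) ^ (k' + 1) :=
    mul_right_cancel₀ hWne hdet1
  have hdet0 := congrArg Matrix.det (WidomAux.HN_eq (k := k' + 1) s t hroot c (by omega))
  rw [Matrix.det_mul, Matrix.det_fromBlocks_zero₁₂, hH, WidomAux.detN0 c m k' t,
    WidomAux.detM c m (k' + 1) t ht, hW, ← Finset.sum_mul] at hdet0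
  have hA : (WidomAux.AM (c + m) (k' + 1) s c).det
      = s (c + m) ^ (k' + 1) * (((-1 : ℂ) ^ (m * (k' + 1))) *
          ∑ σ ∈ Finset.powersetCard m (Finset.univ : Finset (Fin (c + m))),
            ((∏ r ∈ σ, t r ^ ((k' + 1) + c)) *
              (∏ j ∈ σ, ∏ i ∈ Finset.univ \ σ, (t j - t i)⁻¹))) := by
    apply mul_right_cancel₀ hVD
    linear_combination -hdet0
  rw [hA, show c + m - c = m from by omega, Finset.mul_sum, Finset.mul_sum]
  apply Finset.sum_congr rfl
  intro σ hσ
  have e1 : (∏ r ∈ σ, t r ^ ((k' + 1) + c)) = (∏ r ∈ σ, t r) ^ (k' + 1) * ∏ r ∈ σ, t r ^ c := by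
    rw [← Finset.prod_pow, ← Finset.prod_mul_distrib]
    apply Finset.prod_congr rfl
    intro r _
    rw [pow_add]
  rw [e1, mul_pow, mul_pow, ← pow_mul]
  ring
end
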